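/- arXiv:2504.14719 — 6 statements merged into one kernel-verified Lean document; each statement's English description precedes it below -/
import Mathlib

section
/- Any two nontrivial divisible ordered abelian groups are elementarily equivalent in the language of ordered abelian groups {0, +, <}. -/
/-- The functions of the language of ordered abelian groups: a constant `0` and a
binary operation `+`. -/
inductive OAGFunc : ℕ → Type
  | zero : OAGFunc 0
  | add : OAGFunc 2

/-- The relations of the language of ordered abelian groups: a binary relation `<`. -/
inductive OAGRel : ℕ → Type
  | lt : OAGRel 2

/-- The first-order language `{0, +, <}` of ordered abelian groups. -/
def Loag : FirstOrder.Language :=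
  ⟨OAGFunc, OAGRel⟩

/-- Any ordered abelian group is naturally an `Loag`-structure. -/
instance instLoagStructure (G : Type*) [AddCommGroup G] [LinearOrder G] [IsOrderedAddMonoid G] :
    FirstOrder.Language.Structure Loag G where
  funMap {n} f x :=
    match f with
    | OAGFunc.zero => 0
    | OAGFunc.add => x 0 + x 1
  RelMap {n} r x :=
    match r with
    | OAGRel.lt => x 0 < x 1

open FirstOrder FirstOrder.Language Finset

section Aux

variable {G : Type*} [AddCommGroup G] [LinearOrder G] [IsOrderedAddMonoid G]
variable {H : Type*} [AddCommGroup H] [LinearOrder H] [IsOrderedAddMonoid H]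

/-- integer linear combination -/
def lcomb {n : ℕ} (a : Fin n → G) (c : Fin n → ℤ) : G := ∑ i, c i • a i

lemma lcomb_smul {n : ℕ} (a : Fin n → G) (c : Fin n → ℤ) (k : ℤ) :
    lcomb a (fun i => k * c i) = k • lcomb a c := by
  unfold lcomb; rw [Finset.smul_sum]; simp [mul_smul]

lemma lcomb_neg {n : ℕ} (a : Fin n → G) (c : Fin n → ℤ) :
    lcomb a (-c) = - lcomb a c := by
  unfold lcomb; rw [← Finset.sum_neg_distrib]; simp [neg_smul]

lemma lcomb_sub {n : ℕ} (a : Fin n → G) (c d : Fin n → ℤ) :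
    lcomb a (c - d) = lcomb a c - lcomb a d := by
  unfold lcomb; rw [← Finset.sum_sub_distrib]; simp [sub_smul]

lemma lcomb_snoc {n : ℕ} (a : Fin n → G) (g : G) (c : Fin n → ℤ) (d : ℤ) :
    lcomb (Fin.snoc a g) (Fin.snoc c d) = lcomb a c + d • g := by
  unfold lcomb
  rw [Fin.sum_univ_castSucc]
  simp

lemma zsmul_lt_iff {k : ℤ} (hk : 0 < k) (x y : G) : k • x < k • y ↔ x < y :=
  smul_lt_smul_iff_of_pos_left hk

lemma zsmul_eq_iff {k : ℤ} (hk : 0 < k) (x y : G) : k • x = k • y ↔ x = y := by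
  constructor
  · intro h
    rcases lt_trichotomy x y with h' | h' | h'
    · exact absurd h ((zsmul_lt_iff hk x y).2 h').ne
    · exact h'
    · exact absurd h.symm ((zsmul_lt_iff hk y x).2 h').ne
  · rintro rfl; rfl

/-- the bound-`N` linear equivalence of tuples -/
def LEquiv (N : ℕ) {n : ℕ} (a : Fin n → G) (b : Fin n → H) : Prop :=
  ∀ c : Fin n → ℤ, (∀ i, |c i| ≤ N) → (0 < lcomb a c ↔ 0 < lcomb b c)

lemma LEquiv.symm {N : ℕ} {n : ℕ} {a : Fin n → G} {b : Fin n → H}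
    (h : LEquiv N a b) : LEquiv N b a := fun c hc => (h c hc).symm

lemma LEquiv.mono {N M : ℕ} {n : ℕ} {a : Fin n → G} {b : Fin n → H}
    (h : LEquiv M a b) (hNM : N ≤ M) : LEquiv N a b := fun c hc =>
  h c fun i => (hc i).trans (Int.ofNat_le.2 hNM)

lemma LEquiv.lt_iff {N : ℕ} {n : ℕ} {a : Fin n → G} {b : Fin n → H}
    (h : LEquiv N a b) {c : Fin n → ℤ} (hc : ∀ i, |c i| ≤ N) :
    lcomb a c < 0 ↔ lcomb b c < 0 := by
  have := h (-c) (fun i => by simpa using hc i)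
  rw [lcomb_neg, lcomb_neg] at this
  simpa using this

lemma LEquiv.eq_iff {N : ℕ} {n : ℕ} {a : Fin n → G} {b : Fin n → H}
    (h : LEquiv N a b) {c : Fin n → ℤ} (hc : ∀ i, |c i| ≤ N) :
    lcomb a c = 0 ↔ lcomb b c = 0 := by
  have h1 := h c hc
  have h2 := h.lt_iff hc
  constructor <;> intro h0
  · rcases lt_trichotomy (lcomb b c) 0 with h'|h'|h'
    · rw [← h2] at h'; simp [h0] at h'
    · exact h'
    · rw [← h1] at h'; simp [h0] at h'
  · rcases lt_trichotomy (lcomb a c) 0 with h'|h'|h'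
    · rw [h2] at h'; simp [h0] at h'
    · exact h'
    · rw [h1] at h'; simp [h0] at h'

lemma LEquiv.lcomb_lt_iff {N : ℕ} {n : ℕ} {a : Fin n → G} {b : Fin n → H}
    (h : LEquiv N a b) {c₁ c₂ : Fin n → ℤ} (hb : ∀ i, |c₂ i - c₁ i| ≤ (N : ℤ)) :
    lcomb a c₁ < lcomb a c₂ ↔ lcomb b c₁ < lcomb b c₂ := by
  have h2 := h (c₂ - c₁) (fun i => hb i)
  rw [lcomb_sub, lcomb_sub, sub_pos, sub_pos] at h2
  exact h2

lemma LEquiv.lcomb_eq_iff {N : ℕ} {n : ℕ} {a : Fin n → G} {b : Fin n → H}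
    (h : LEquiv N a b) {c₁ c₂ : Fin n → ℤ} (hb : ∀ i, |c₂ i - c₁ i| ≤ (N : ℤ)) :
    lcomb a c₁ = lcomb a c₂ ↔ lcomb b c₁ = lcomb b c₂ := by
  have h2 := h.eq_iff (c := c₂ - c₁) (fun i => hb i)
  rw [lcomb_sub, lcomb_sub, sub_eq_zero, sub_eq_zero] at h2
  exact ⟨fun hx => (h2.1 hx.symm).symm, fun hx => (h2.2 hx.symm).symm⟩

section Density

variable (hdiv : ∀ (n : ℕ) (g : H), 0 < n → ∃ h : H, n • h = g)
include hdiv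

lemma div_dense {x y : H} (hxy : x < y) : ∃ z, x < z ∧ z < y := by
  obtain ⟨z, hz⟩ := hdiv 2 (x + y) (by norm_num)
  have hz' : z + z = x + y := by rw [← two_nsmul]; exact hz
  refine ⟨z, ?_, ?_⟩
  · by_contra hle
    push_neg at hle
    exact absurd (hz' ▸ add_le_add hle hle) (not_le.2 (add_lt_add_right hxy x))
  · by_contra hle
    push_neg at hle
    exact absurd (hz' ▸ add_le_add hle hle) (not_le.2 (add_lt_add_left hxy y))

lemma exists_between_finsets [Nontrivial H] (LB UB : Finset H)
    (hlt : ∀ l ∈ LB, ∀ u ∈ UB, l < u) :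
    ∃ y : H, (∀ l ∈ LB, l < y) ∧ (∀ u ∈ UB, y < u) := by
  obtain ⟨e, he⟩ : ∃ e : H, 0 < e := by
    obtain ⟨x, hx⟩ := exists_ne (0 : H)
    rcases hx.lt_or_gt with h|h
    · exact ⟨-x, by simpa using h⟩
    · exact ⟨x, h⟩
  rcases LB.eq_empty_or_nonempty with rfl | hL
  · rcases UB.eq_empty_or_nonempty with rfl | hU
    · exact ⟨0, by simp, by simp⟩
    · refine ⟨UB.min' hU - e, by simp, fun u hu => ?_⟩
      calc UB.min' hU - e < UB.min' hU := sub_lt_self _ he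
        _ ≤ u := UB.min'_le u hu
  · rcases UB.eq_empty_or_nonempty with rfl | hU
    · refine ⟨LB.max' hL + e, fun l hl => ?_, by simp⟩
      calc l ≤ LB.max' hL := LB.le_max' l hl
        _ < LB.max' hL + e := lt_add_of_pos_right _ he
    · obtain ⟨y, hy1, hy2⟩ := div_dense hdiv
        (hlt _ (LB.max'_mem hL) _ (UB.min'_mem hU))
      exact ⟨y, fun l hl => lt_of_le_of_lt (LB.le_max' l hl) hy1,
        fun u hu => lt_of_lt_of_le hy2 (UB.min'_le u hu)⟩

end Density


lemma nsmul_lt_iff {d : ℕ} (hd : 0 < d) (x y : G) : d • x < d • y ↔ x < y := by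
  rw [← natCast_zsmul, ← natCast_zsmul]
  exact zsmul_lt_iff (by exact_mod_cast hd) x y

lemma nsmul_eq_iff {d : ℕ} (hd : 0 < d) (x y : G) : d • x = d • y ↔ x = y := by
  rw [← natCast_zsmul, ← natCast_zsmul]
  exact zsmul_eq_iff (by exact_mod_cast hd) x y

lemma lcomb_nsmul {n : ℕ} (a : Fin n → G) (c : Fin n → ℤ) (k : ℕ) :
    lcomb a (fun i => (k : ℤ) * c i) = k • lcomb a c := by
  rw [lcomb_smul, natCast_zsmul]

lemma pos_add_iff (x y : G) : 0 < x + y ↔ -x < y := by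
  constructor <;> intro h
  · have := add_lt_add_left h (-x); simpa using this
  · have := add_lt_add_right h x; simpa using this

lemma pos_add_iff' (x y : G) : 0 < x + y ↔ -y < x := by
  rw [add_comm]; exact pos_add_iff y x

/-- matching of the position of `g` (resp. `h`) relative to all bounded combinations -/
def OAGStar (N : ℕ) {n : ℕ} (a : Fin n → G) (g : G) (b : Fin n → H) (h : H) : Prop :=
  ∀ (c : Fin n → ℤ) (d : ℕ), (∀ i, |c i| ≤ N) → 1 ≤ d → d ≤ N →
    ((lcomb a c < d • g ↔ lcomb b c < d • h) ∧ (d • g < lcomb a c ↔ d • h < lcomb b c)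
      ∧ (d • g = lcomb a c ↔ d • h = lcomb b c))

lemma star_lequiv {N : ℕ} {n : ℕ} {a : Fin n → G} {b : Fin n → H} {g : G} {h : H}
    (hab : LEquiv N a b) (hstar : OAGStar N a g b h) :
    LEquiv N (Fin.snoc a g) (Fin.snoc b h) := by
  intro c' hc'
  rw [show c' = Fin.snoc (Fin.init c') (c' (Fin.last n)) from (Fin.snoc_init_self c').symm,
    lcomb_snoc, lcomb_snoc]
  set c := Fin.init c' with hc
  set d := c' (Fin.last n) with hd
  have hcb : ∀ i, |c i| ≤ (N : ℤ) := fun i => hc' _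
  have hdb : |d| ≤ (N : ℤ) := hc' _
  rcases lt_trichotomy d 0 with hd0 | hd0 | hd0
  · have h1 : 1 ≤ (-d).toNat := by omega
    have h2 : (-d).toNat ≤ N := by
      have := abs_le.1 hdb; omega
    have key := (hstar c (-d).toNat hcb h1 h2).2.1
    rw [← natCast_zsmul, ← natCast_zsmul, Int.toNat_of_nonneg (by omega)] at key
    rw [pos_add_iff', pos_add_iff', show -(d • g) = (-d) • g from (neg_smul d g).symm,
      show -(d • h) = (-d) • h from (neg_smul d h).symm]
    exact key
  · rw [hd0]
    simp only [zero_smul, add_zero]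
    exact hab c hcb
  · have h1 : 1 ≤ d.toNat := by omega
    have h2 : d.toNat ≤ N := by have := abs_le.1 hdb; omega
    have key := (hstar (-c) d.toNat (fun i => by simpa using hcb i) h1 h2).1
    rw [← natCast_zsmul, ← natCast_zsmul, Int.toNat_of_nonneg (by omega), lcomb_neg,
      lcomb_neg] at key
    rw [pos_add_iff, pos_add_iff]
    exact key

/-- the bound needed in the extension lemma -/
def exB (N : ℕ) : ℕ := 2 * N ^ 2 * N.factorial

lemma le_exB {N : ℕ} (hN : 1 ≤ N) : N ≤ exB N := by
  have h1 : 1 ≤ N.factorial := N.factorial_pos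
  calc N = 1 * N * 1 := by ring
    _ ≤ 2 * N ^ 2 * N.factorial := by
        apply Nat.mul_le_mul
        · nlinarith
        · exact h1
    _ = exB N := rfl

lemma exists_snoc [Nontrivial H]
    (hHdiv : ∀ (n : ℕ) (g : H), 0 < n → ∃ h : H, n • h = g)
    (N : ℕ) {n : ℕ} (a : Fin n → G) (b : Fin n → H)
    (hab : LEquiv (exB N) a b) (g : G) :
    ∃ h : H, LEquiv N (Fin.snoc a g) (Fin.snoc b h) := by
  classical
  rcases Nat.eq_zero_or_pos N with rfl | hN
  · refine ⟨0, fun c hc => ?_⟩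
    have hc0 : ∀ i, c i = 0 := fun i => by have := hc i; simp at this; omega
    have : c = 0 := funext hc0
    subst this
    simp [lcomb]
  have habN : LEquiv N a b := hab.mono (le_exB hN)
  by_cases hcase : ∃ (c : Fin n → ℤ) (d : ℕ),
      (∀ i, |c i| ≤ N) ∧ 1 ≤ d ∧ d ≤ N ∧ (d • g = lcomb a c)
  -- Case 1 : g is a "rational point" over a
  · obtain ⟨c₀, d₀, hc₀, hd₀1, hd₀N, heq⟩ := hcase
    obtain ⟨h, hh⟩ := hHdiv d₀ (lcomb b c₀) hd₀1
    refine ⟨h, star_lequiv habN ?_⟩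
    intro c d hc hd1 hdN
    have e1G : d₀ • (d • g) = lcomb a (fun i => (d : ℤ) * c₀ i) := by
      rw [smul_comm, heq, lcomb_nsmul]
    have e1H : d₀ • (d • h) = lcomb b (fun i => (d : ℤ) * c₀ i) := by
      rw [smul_comm, hh, lcomb_nsmul]
    have e2G : d₀ • lcomb a c = lcomb a (fun i => (d₀ : ℤ) * c i) := (lcomb_nsmul _ _ _).symm
    have e2H : d₀ • lcomb b c = lcomb b (fun i => (d₀ : ℤ) * c i) := (lcomb_nsmul _ _ _).symm
    have hbound : ∀ i,
        |((fun i => (d : ℤ) * c₀ i) - (fun i => (d₀ : ℤ) * c i)) i| ≤ (exB N : ℤ) := by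
      intro i
      have h1 := hc₀ i
      have h2 := hc i
      have hb1 : |(d : ℤ) * c₀ i| ≤ (N : ℤ) * N := by
        rw [abs_mul]
        apply mul_le_mul _ h1 (abs_nonneg _) (by positivity)
        · rw [Int.abs_natCast]; exact_mod_cast hdN
      have hb2 : |(d₀ : ℤ) * c i| ≤ (N : ℤ) * N := by
        rw [abs_mul]
        apply mul_le_mul _ h2 (abs_nonneg _) (by positivity)
        · rw [Int.abs_natCast]; exact_mod_cast hd₀N
      have hfac : (1 : ℤ) ≤ N.factorial := by exact_mod_cast N.factorial_pos
      have : ((fun i => (d : ℤ) * c₀ i) - fun i => (d₀ : ℤ) * c i) i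
          = (d : ℤ) * c₀ i - (d₀ : ℤ) * c i := rfl
      rw [this]
      have habs := abs_sub ((d : ℤ) * c₀ i) ((d₀ : ℤ) * c i)
      have hB : (exB N : ℤ) = 2 * (N:ℤ) ^ 2 * N.factorial := by
        unfold exB; push_cast; ring
      rw [hB]
      nlinarith [abs_nonneg ((d:ℤ) * c₀ i), abs_nonneg ((d₀:ℤ) * c i)]
    have hd₀' : 0 < d₀ := hd₀1
    have hbound' : ∀ i, |(d₀ : ℤ) * c i - (d : ℤ) * c₀ i| ≤ (exB N : ℤ) := fun i => by
      have := hbound i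
      rw [Pi.sub_apply] at this
      rw [abs_sub_comm]
      exact this
    refine ⟨?_, ?_, ?_⟩
    · rw [← nsmul_lt_iff hd₀' (lcomb a c) (d • g), ← nsmul_lt_iff hd₀' (lcomb b c) (d • h),
        e1G, e1H, e2G, e2H]
      exact hab.lcomb_lt_iff (fun i => by have := hbound i; rwa [Pi.sub_apply] at this)
    · rw [← nsmul_lt_iff hd₀' (d • g) (lcomb a c), ← nsmul_lt_iff hd₀' (d • h) (lcomb b c),
        e1G, e1H, e2G, e2H]
      exact hab.lcomb_lt_iff hbound'
    · rw [← nsmul_eq_iff hd₀' (d • g) (lcomb a c), ← nsmul_eq_iff hd₀' (d • h) (lcomb b c),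
        e1G, e1H, e2G, e2H]
      exact hab.lcomb_eq_iff hbound'
  -- Case 2 : g avoids all rational points over a
  · push_neg at hcase
    set D := N.factorial with hDdef
    have hDpos : 0 < D := N.factorial_pos
    let I := (Fin n → (Finset.Icc (-(N:ℤ)) (N:ℤ))) × (Finset.Icc 1 N)
    let cf : I → Fin n → ℤ := fun p i => (p.1 i : ℤ)
    let dd : I → ℕ := fun p => p.2
    have hdd1 : ∀ p : I, 1 ≤ dd p := fun p => (Finset.mem_Icc.1 p.2.2).1
    have hddN : ∀ p : I, dd p ≤ N := fun p => (Finset.mem_Icc.1 p.2.2).2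
    have hdvd : ∀ p : I, dd p ∣ D := fun p => Nat.dvd_factorial (hdd1 p) (hddN p)
    let ee : I → ℕ := fun p => D / dd p
    have hed : ∀ p : I, ee p * dd p = D := fun p => Nat.div_mul_cancel (hdvd p)
    have heepos : ∀ p : I, 0 < ee p := fun p =>
      Nat.div_pos (Nat.le_of_dvd hDpos (hdvd p)) (hdd1 p)
    have heeD : ∀ p : I, ee p ≤ D := fun p => Nat.div_le_self _ _
    let sc : I → Fin n → ℤ := fun p i => (ee p : ℤ) * cf p i
    have hcfb : ∀ (p : I) (i), |cf p i| ≤ (N : ℤ) := by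
      intro p i
      have := Finset.mem_Icc.1 (p.1 i).2
      rw [abs_le]
      exact this
    have hscb : ∀ (p : I) (i), |sc p i| ≤ (D : ℤ) * N := by
      intro p i
      show |(ee p : ℤ) * cf p i| ≤ _
      rw [abs_mul, Int.abs_natCast]
      apply mul_le_mul _ (hcfb p i) (abs_nonneg _) (by positivity)
      exact_mod_cast heeD p
    let uG : I → G := fun p => lcomb a (sc p)
    let uH : I → H := fun p => lcomb b (sc p)
    -- scaling on the G side
    have hscaleG : ∀ p : I,
        (lcomb a (cf p) < dd p • g ↔ uG p < D • g) ∧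
        (dd p • g < lcomb a (cf p) ↔ D • g < uG p) := by
      intro p
      have e1 : ee p • (dd p • g) = D • g := by rw [← mul_smul, hed]
      have e2 : ee p • lcomb a (cf p) = uG p := (lcomb_nsmul a (cf p) (ee p)).symm
      constructor
      · rw [← nsmul_lt_iff (heepos p) (lcomb a (cf p)) (dd p • g), e1, e2]
      · rw [← nsmul_lt_iff (heepos p) (dd p • g) (lcomb a (cf p)), e1, e2]
    -- the cut
    let Lower : Finset I := Finset.univ.filter (fun p => lcomb a (cf p) < dd p • g)
    let Upper : Finset I := Finset.univ.filter (fun p => dd p • g < lcomb a (cf p))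
    have hLU : ∀ p ∈ Lower, ∀ q ∈ Upper, uH p < uH q := by
      intro p hp q hq
      have h1 : uG p < D • g := (hscaleG p).1.1 (Finset.mem_filter.1 hp).2
      have h2 : D • g < uG q := (hscaleG q).2.1 (Finset.mem_filter.1 hq).2
      have h3 : (0:G) < lcomb a (sc q - sc p) := by
        rw [lcomb_sub]; exact sub_pos.2 (h1.trans h2)
      have hb : ∀ i, |(sc q - sc p) i| ≤ (exB N : ℤ) := by
        intro i
        have h4 := hscb q i
        have h5 := hscb p i
        have habs := abs_sub (sc q i) (sc p i)
        have hB : (exB N : ℤ) = 2 * (N:ℤ) ^ 2 * D := by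
          unfold exB; rw [hDdef]; push_cast; ring
        have hN' : (1:ℤ) ≤ N := by exact_mod_cast hN
        have hD' : (0:ℤ) < D := by exact_mod_cast hDpos
        have : |(sc q - sc p) i| = |sc q i - sc p i| := rfl
        rw [this, hB]
        nlinarith
      have := (hab _ hb).1 h3
      rw [lcomb_sub] at this
      exact sub_pos.1 this
    obtain ⟨y, hyL, hyU⟩ := exists_between_finsets hHdiv (Lower.image uH) (Upper.image uH)
      (by
        intro l hl u hu
        obtain ⟨p, hp, rfl⟩ := Finset.mem_image.1 hl
        obtain ⟨q, hq, rfl⟩ := Finset.mem_image.1 hu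
        exact hLU p hp q hq)
    obtain ⟨h, hh⟩ := hHdiv D y hDpos
    refine ⟨h, star_lequiv habN ?_⟩
    intro c d hc hd1 hdN
    have hmem1 : ∀ i, c i ∈ Finset.Icc (-(N:ℤ)) (N:ℤ) := fun i =>
      Finset.mem_Icc.2 (abs_le.1 (hc i))
    set p : I := (fun i => ⟨c i, hmem1 i⟩, ⟨d, Finset.mem_Icc.2 ⟨hd1, hdN⟩⟩) with hp
    have hcfp : cf p = c := rfl
    have hddp : dd p = d := rfl
    -- H-side scaling
    have e1 : ee p • (d • h) = y := by
      rw [← mul_smul, show ee p * d = D from hddp ▸ hed p, hh]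
    have e2 : ee p • lcomb b c = uH p := by
      rw [show lcomb b c = lcomb b (cf p) from (by rw [hcfp])]
      exact (lcomb_nsmul b (cf p) (ee p)).symm
    have hsH1 : lcomb b c < d • h ↔ uH p < y := by
      rw [← nsmul_lt_iff (heepos p) (lcomb b c) (d • h), e1, e2]
    have hsH2 : d • h < lcomb b c ↔ y < uH p := by
      rw [← nsmul_lt_iff (heepos p) (d • h) (lcomb b c), e1, e2]
    have hne : d • g ≠ lcomb a c := hcase c d hc hd1 hdN
    rcases lt_trichotomy (lcomb a c) (d • g) with hlt | heq | hgt
    · have hpL : p ∈ Lower := Finset.mem_filter.2 ⟨Finset.mem_univ _, by rw [hcfp, hddp]; exact hlt⟩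
      have hy : uH p < y := hyL _ (Finset.mem_image_of_mem _ hpL)
      have hHlt : lcomb b c < d • h := hsH1.2 hy
      exact ⟨iff_of_true hlt hHlt,
        iff_of_false (asymm hlt) (asymm hHlt),
        iff_of_false (ne_of_lt hlt).symm (ne_of_lt hHlt).symm⟩
    · exact absurd heq.symm hne
    · have hpU : p ∈ Upper := Finset.mem_filter.2 ⟨Finset.mem_univ _, by rw [hcfp, hddp]; exact hgt⟩
      have hy : y < uH p := hyU _ (Finset.mem_image_of_mem _ hpU)
      have hHgt : d • h < lcomb b c := hsH2.2 hy
      exact ⟨iff_of_false (asymm hgt) (asymm hHgt),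
        iff_of_true hgt hHgt,
        iff_of_false (ne_of_lt hgt) (ne_of_lt hHgt)⟩

end Aux


section Formulas

variable {G : Type*} [AddCommGroup G] [LinearOrder G] [IsOrderedAddMonoid G]
variable {H : Type*} [AddCommGroup H] [LinearOrder H] [IsOrderedAddMonoid H]

lemma lcomb_add {n : ℕ} (a : Fin n → G) (c d : Fin n → ℤ) :
    lcomb a (c + d) = lcomb a c + lcomb a d := by
  unfold lcomb; rw [← Finset.sum_add_distrib]; simp [add_smul]

/-- the coefficients of a term of `Loag` -/
def tcoeff {n : ℕ} : Loag.Term (Empty ⊕ Fin n) → (Fin n → ℕ)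
  | .var (Sum.inl e) => e.elim
  | .var (Sum.inr i) => Pi.single i 1
  | .func OAGFunc.zero _ => 0
  | .func OAGFunc.add ts => tcoeff (ts 0) + tcoeff (ts 1)

lemma realize_tcoeff {n : ℕ} (v : Empty → G) (a : Fin n → G) (t : Loag.Term (Empty ⊕ Fin n)) :
    t.realize (Sum.elim v a) = lcomb a (fun i => (tcoeff t i : ℤ)) := by
  induction t with
  | var x =>
    cases x with
    | inl e => exact e.elim
    | inr i =>
      show a i = _
      simp only [tcoeff]
      unfold lcomb
      simp [Pi.single_apply, ite_smul]
  | func f ts ih =>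
    cases f with
    | zero =>
      show (0 : G) = _
      simp only [tcoeff]
      unfold lcomb
      simp
    | add =>
      show Term.realize _ (ts 0) + Term.realize _ (ts 1) = _
      rw [ih 0, ih 1]
      rw [show (fun i => ((tcoeff (Term.func OAGFunc.add ts) i : ℤ)))
          = (fun i => (tcoeff (ts 0) i : ℤ)) + (fun i => (tcoeff (ts 1) i : ℤ)) from
          funext fun i => by simp [tcoeff], lcomb_add]

lemma tcoeff_le_sum {n : ℕ} (t : Loag.Term (Empty ⊕ Fin n)) (i : Fin n) :
    tcoeff t i ≤ ∑ j, tcoeff t j :=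
  Finset.single_le_sum (fun _ _ => Nat.zero_le _) (Finset.mem_univ i)

lemma main_induction [Nontrivial G] [Nontrivial H]
    (hGdiv : ∀ (n : ℕ) (g : G), 0 < n → ∃ h : G, n • h = g)
    (hHdiv : ∀ (n : ℕ) (g : H), 0 < n → ∃ h : H, n • h = g)
    {n : ℕ} (φ : Loag.BoundedFormula Empty n) :
    ∃ N : ℕ, ∀ (v : Empty → G) (w : Empty → H) (a : Fin n → G) (b : Fin n → H),
      LEquiv N a b → (φ.Realize v a ↔ φ.Realize w b) := by
  induction φ with
  | falsum => exact ⟨0, fun _ _ _ _ _ => Iff.rfl⟩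
  | equal t₁ t₂ =>
    refine ⟨(∑ j, tcoeff t₁ j) + ∑ j, tcoeff t₂ j, fun v w a b hab => ?_⟩
    show Term.realize _ t₁ = Term.realize _ t₂ ↔ Term.realize _ t₁ = Term.realize _ t₂
    rw [realize_tcoeff v a t₁, realize_tcoeff v a t₂, realize_tcoeff w b t₁,
      realize_tcoeff w b t₂]
    refine hab.lcomb_eq_iff fun i => ?_
    have h1 := tcoeff_le_sum t₁ i
    have h2 := tcoeff_le_sum t₂ i
    have := abs_sub ((tcoeff t₂ i : ℤ)) ((tcoeff t₁ i : ℤ))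
    rw [Int.abs_natCast, Int.abs_natCast] at this
    refine le_trans this ?_
    have : tcoeff t₁ i + tcoeff t₂ i ≤ (∑ j, tcoeff t₁ j) + ∑ j, tcoeff t₂ j := by omega
    exact_mod_cast by omega
  | @rel n l R ts =>
    cases R with
    | lt =>
      refine ⟨(∑ j, tcoeff (ts 0) j) + ∑ j, tcoeff (ts 1) j, fun v w a b hab => ?_⟩
      show Term.realize _ (ts 0) < Term.realize _ (ts 1)
        ↔ Term.realize _ (ts 0) < Term.realize _ (ts 1)
      rw [realize_tcoeff v a (ts 0), realize_tcoeff v a (ts 1), realize_tcoeff w b (ts 0),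
        realize_tcoeff w b (ts 1)]
      refine hab.lcomb_lt_iff fun i => ?_
      have h1 := tcoeff_le_sum (ts 0) i
      have h2 := tcoeff_le_sum (ts 1) i
      have := abs_sub ((tcoeff (ts 1) i : ℤ)) ((tcoeff (ts 0) i : ℤ))
      rw [Int.abs_natCast, Int.abs_natCast] at this
      refine le_trans this ?_
      exact_mod_cast by omega
  | imp φ₁ φ₂ ih₁ ih₂ =>
    obtain ⟨N₁, hN₁⟩ := ih₁
    obtain ⟨N₂, hN₂⟩ := ih₂
    refine ⟨max N₁ N₂, fun v w a b hab => ?_⟩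
    simp only [BoundedFormula.realize_imp]
    rw [hN₁ v w a b (hab.mono (le_max_left _ _)), hN₂ v w a b (hab.mono (le_max_right _ _))]
  | all φ ih =>
    obtain ⟨N, hN⟩ := ih
    refine ⟨exB N, fun v w a b hab => ?_⟩
    simp only [BoundedFormula.realize_all]
    constructor
    · intro hG' h
      obtain ⟨g, hg⟩ := exists_snoc hGdiv N b a hab.symm h
      exact (hN v w _ _ hg.symm).1 (hG' g)
    · intro hH' g
      obtain ⟨h, hg⟩ := exists_snoc hHdiv N a b hab g
      exact (hN v w _ _ hg).2 (hH' h)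

end Formulas

/-- Any two nontrivial divisible ordered abelian groups are elementarily equivalent in
the language `{0, +, <}` of ordered abelian groups. -/
theorem nontrivial_divisible_oag_elementarilyEquivalent
    (G H : Type*) [AddCommGroup G] [LinearOrder G] [IsOrderedAddMonoid G]
    [AddCommGroup H] [LinearOrder H] [IsOrderedAddMonoid H]
    [Nontrivial G] [Nontrivial H]
    (hG : ∀ (n : ℕ) (g : G), 0 < n → ∃ h : G, n • h = g)
    (hH : ∀ (n : ℕ) (g : H), 0 < n → ∃ h : H, n • h = g) :
    FirstOrder.Language.ElementarilyEquivalent Loag G H := by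
  rw [FirstOrder.Language.elementarilyEquivalent_iff]
  intro φ
  obtain ⟨N, hN⟩ := main_induction hG hH φ
  exact hN default default default default (fun c _ => by simp [lcomb])
end

section
/- Terjanian's quartic hypersurface has no nontrivial zero modulo 16: there is no tuple (x,y,z,u,v,w) ∈ (Z/16)^18 with x,y,z,u,v,w ∈ (Z/16)^3, not all coordinates divisible by 2, such that G(x)+G(y)+G(z)+4G(u)+4G(v)+4G(w) ≡ 0 (mod 16), where G(X_1,X_2,X_3) = X_1^4+X_2^4+X_3^4−X_1^2X_2^2−X_1^2X_3^2−X_2^2X_3^2−X_1X_2X_3(X_1+X_2+X_3). Consequently, the corresponding homogeneous quartic in 18 variables has no nontrivial zero over Q_2, so Q_2 is not C_2. -/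
/-- Terjanian's quartic form `G(X₁, X₂, X₃)` over a commutative ring. -/
def terjanianG {R : Type*} [CommRing R] (x : Fin 3 → R) : R :=
  x 0 ^ 4 + x 1 ^ 4 + x 2 ^ 4
    - x 0 ^ 2 * x 1 ^ 2 - x 0 ^ 2 * x 2 ^ 2 - x 1 ^ 2 * x 2 ^ 2
    - x 0 * x 1 * x 2 * (x 0 + x 1 + x 2)

/-- A field `K` is `C₂` if every homogeneous polynomial of degree `d ≥ 1` in `n + 1 > d ^ 2`
variables has a nontrivial zero. -/
def IsC2Field (K : Type*) [Field K] : Prop :=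
  ∀ (n d : ℕ) (f : MvPolynomial (Fin (n + 1)) K),
    f.IsHomogeneous d → 1 ≤ d → d ^ 2 ≤ n →
      ∃ x : Fin (n + 1) → K, x ≠ 0 ∧ MvPolynomial.eval x f = 0

open MvPolynomial

/- ### Auxiliary decidable facts -/

private lemma tg4 : ∀ a : Fin 3 → ZMod 4,
    (terjanianG a = 0 ∧ ∀ i, ∃ c, a i = 2 * c) ∨
    (terjanianG a = 1 ∧ ¬ ∀ i, ∃ c, a i = 2 * c) := by decide

private lemma lift_even : ∀ a : ZMod 16,
    (∃ c : ZMod 4, (ZMod.castHom (show (4:ℕ) ∣ 16 by norm_num) (ZMod 4)) a = 2 * c) →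
    ∃ c : ZMod 16, a = 2 * c := by decide

private lemma mul4 : ∀ s : ZMod 16, 4 * s = 0 →
    (ZMod.castHom (show (4:ℕ) ∣ 16 by norm_num) (ZMod 4)) s = 0 := by decide

private lemma triple : ∀ A B C : ZMod 4, (A = 0 ∨ A = 1) → (B = 0 ∨ B = 1) →
    (C = 0 ∨ C = 1) → A + B + C = 0 → A = 0 ∧ B = 0 ∧ C = 0 := by decide

/- ### Generic algebraic lemmas about `terjanianG` -/

private lemma map_terjanianG {R S : Type*} [CommRing R] [CommRing S] (f : R →+* S)
    (x : Fin 3 → R) : f (terjanianG x) = terjanianG (f ∘ x) := by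
  simp only [terjanianG, Function.comp_apply, map_add, map_sub, map_mul, map_pow]

private lemma terjanianG_double {R : Type*} [CommRing R] (c : Fin 3 → R) :
    terjanianG (fun i => 2 * c i) = 16 * terjanianG c := by
  simp only [terjanianG]
  ring

/-- An all-even vector mod 16 has `G = 0` mod 16. -/
private lemma tg16_even (a : Fin 3 → ZMod 16) (h : ∀ i, ∃ c, a i = 2 * c) :
    terjanianG a = 0 := by
  choose c hc using h
  have ha : a = fun i => 2 * c i := funext hc
  rw [ha, terjanianG_double]
  have : (16 : ZMod 16) = 0 := by decide
  rw [this, zero_mul]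

/- ### Part 1: no primitive zero mod 16 -/

private lemma key : ¬ ∃ x y z u v w : Fin 3 → ZMod 16,
    (¬ (∀ a ∈ ({x, y, z, u, v, w} : Set (Fin 3 → ZMod 16)), ∀ i : Fin 3, ∃ c, a i = 2 * c)) ∧
    terjanianG x + terjanianG y + terjanianG z
      + 4 * (terjanianG u + terjanianG v + terjanianG w) = 0 := by
  rintro ⟨x, y, z, u, v, w, hprim, heq⟩
  set φ : ZMod 16 →+* ZMod 4 := ZMod.castHom (show (4:ℕ) ∣ 16 by norm_num) (ZMod 4) with hφdef
  have h40 : φ (4 : ZMod 16) = 0 := by decide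
  -- main criterion: if G(a mod 4) = 0 then a is all-even
  have main : ∀ a : Fin 3 → ZMod 16, terjanianG (φ ∘ a) = 0 → ∀ i, ∃ c, a i = 2 * c := by
    intro a h i
    rcases tg4 (φ ∘ a) with ⟨_, he⟩ | ⟨h1, _⟩
    · exact lift_even (a i) (he i)
    · rw [h] at h1
      exact absurd h1 (by decide)
  have vals : ∀ a : Fin 3 → ZMod 16,
      terjanianG (φ ∘ a) = 0 ∨ terjanianG (φ ∘ a) = 1 := by
    intro a
    rcases tg4 (φ ∘ a) with ⟨h0, _⟩ | ⟨h1, _⟩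
    · exact Or.inl h0
    · exact Or.inr h1
  -- step 1 : reduce mod 4
  have h4 : terjanianG (φ ∘ x) + terjanianG (φ ∘ y) + terjanianG (φ ∘ z) = 0 := by
    have := congrArg φ heq
    simp only [map_add, map_mul, map_terjanianG, h40, zero_mul, add_zero, map_zero] at this
    exact this
  obtain ⟨hx4, hy4, hz4⟩ := triple _ _ _ (vals x) (vals y) (vals z) h4
  have hxe := main x hx4
  have hye := main y hy4
  have hze := main z hz4
  -- step 2 : G(x), G(y), G(z) vanish mod 16
  rw [tg16_even x hxe, tg16_even y hye, tg16_even z hze] at heq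
  have hS : 4 * (terjanianG u + terjanianG v + terjanianG w) = 0 := by
    rw [← heq]; ring
  have hS4 : φ (terjanianG u + terjanianG v + terjanianG w) = 0 := mul4 _ hS
  have h4' : terjanianG (φ ∘ u) + terjanianG (φ ∘ v) + terjanianG (φ ∘ w) = 0 := by
    simpa only [map_add, map_terjanianG] using hS4
  obtain ⟨hu4, hv4, hw4⟩ := triple _ _ _ (vals u) (vals v) (vals w) h4'
  have hue := main u hu4
  have hve := main v hv4
  have hwe := main w hw4
  exact hprim (by
    intro a ha i
    simp only [Set.mem_insert_iff, Set.mem_singleton_iff] at ha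
    rcases ha with rfl | rfl | rfl | rfl | rfl | rfl
    · exact hxe i
    · exact hye i
    · exact hze i
    · exact hue i
    · exact hve i
    · exact hwe i)

/- ### Part 2: ℚ₂ is not C₂ -/

/-- The quartic form in three ring elements. -/
private def blkG {R : Type*} [CommRing R] (a b c : R) : R :=
  a ^ 4 + b ^ 4 + c ^ 4 - a ^ 2 * b ^ 2 - a ^ 2 * c ^ 2 - b ^ 2 * c ^ 2
    - a * b * c * (a + b + c)

private lemma terjanianG_vec {R : Type*} [CommRing R] (a b c : R) :
    terjanianG ![a, b, c] = blkG a b c := by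
  simp [terjanianG, blkG]

/-- Terjanian's 18-variable form as a function. -/
private def bigF {R : Type*} [CommRing R] (x : Fin 18 → R) : R :=
  blkG (x 0) (x 1) (x 2) + blkG (x 3) (x 4) (x 5) + blkG (x 6) (x 7) (x 8)
    + 4 * (blkG (x 9) (x 10) (x 11) + blkG (x 12) (x 13) (x 14)
      + blkG (x 15) (x 16) (x 17))

private lemma map_bigF {R S : Type*} [CommRing R] [CommRing S] (f : R →+* S)
    (x : Fin 18 → R) : f (bigF x) = bigF (fun i => f (x i)) := by
  simp only [bigF, blkG, map_add, map_sub, map_mul, map_pow, map_ofNat]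

private lemma bigF_smul {R : Type*} [CommRing R] (t : R) (x : Fin 18 → R) :
    bigF (fun i => x i * t) = bigF x * t ^ 4 := by
  simp only [bigF, blkG]
  ring

/-- The 18-variable quartic as a polynomial block. -/
private noncomputable def gp (a b c : Fin 18) : MvPolynomial (Fin 18) ℚ_[2] :=
  X a ^ 4 + X b ^ 4 + X c ^ 4 - X a ^ 2 * X b ^ 2 - X a ^ 2 * X c ^ 2 - X b ^ 2 * X c ^ 2
    - X a * X b * X c * (X a + X b + X c)

private noncomputable def Fpoly : MvPolynomial (Fin 18) ℚ_[2] :=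
  gp 0 1 2 + gp 3 4 5 + gp 6 7 8 + C 4 * (gp 9 10 11 + gp 12 13 14 + gp 15 16 17)

private lemma gp_hom (a b c : Fin 18) : (gp a b c).IsHomogeneous 4 := by
  have hX : ∀ i : Fin 18, (X i : MvPolynomial (Fin 18) ℚ_[2]).IsHomogeneous 1 :=
    fun i => isHomogeneous_X _ _
  have h4 : ∀ i : Fin 18, ((X i : MvPolynomial (Fin 18) ℚ_[2]) ^ 4).IsHomogeneous 4 :=
    fun i => by simpa using (hX i).pow 4
  have h2 : ∀ i j : Fin 18,
      ((X i : MvPolynomial (Fin 18) ℚ_[2]) ^ 2 * X j ^ 2).IsHomogeneous 4 :=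
    fun i j => by simpa using ((hX i).pow 2).mul ((hX j).pow 2)
  have h3 : ((X a : MvPolynomial (Fin 18) ℚ_[2]) * X b * X c
      * (X a + X b + X c)).IsHomogeneous 4 := by
    simpa using (((hX a).mul (hX b)).mul (hX c)).mul (((hX a).add (hX b)).add (hX c))
  exact ((((((h4 a).add (h4 b)).add (h4 c)).sub (h2 a b)).sub (h2 a c)).sub (h2 b c)).sub h3

private lemma Fpoly_hom : Fpoly.IsHomogeneous 4 :=
  ((((gp_hom 0 1 2).add (gp_hom 3 4 5)).add (gp_hom 6 7 8)).add
    (((((gp_hom 9 10 11).add (gp_hom 12 13 14)).add (gp_hom 15 16 17))).C_mul 4))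

private lemma eval_Fpoly (x : Fin 18 → ℚ_[2]) : eval x Fpoly = bigF x := by
  simp only [Fpoly, gp, bigF, blkG, map_add, map_sub, map_mul, map_pow, eval_X, eval_C]

private lemma two_mul_ne_one : ∀ t : ZMod 16, 2 * t ≠ 1 := by decide

/-- Terjanian's 18-variable quartic `G(x) + G(y) + G(z) + 4G(u) + 4G(v) + 4G(w)` has no
zero modulo `16` with not all coordinates divisible by `2`; consequently `ℚ₂` is not `C₂`. -/
theorem terjanian_no_primitive_zero_mod_sixteen :
    (¬ ∃ x y z u v w : Fin 3 → ZMod 16,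
      (¬ (∀ a ∈ ({x, y, z, u, v, w} : Set (Fin 3 → ZMod 16)), ∀ i : Fin 3, ∃ c, a i = 2 * c)) ∧
      terjanianG x + terjanianG y + terjanianG z
        + 4 * (terjanianG u + terjanianG v + terjanianG w) = 0) ∧
    ¬ IsC2Field ℚ_[2] := by
  refine ⟨key, ?_⟩
  intro hC2
  obtain ⟨x, hx0, hxF⟩ := hC2 17 4 Fpoly Fpoly_hom (by norm_num) (by norm_num)
  rw [eval_Fpoly] at hxF
  -- choose a coordinate of maximal norm
  obtain ⟨i₀, -, hmax⟩ := Finset.exists_max_image Finset.univ (fun i => ‖x i‖)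
    ⟨0, Finset.mem_univ 0⟩
  obtain ⟨j, hj⟩ := Function.ne_iff.mp hx0
  have hcpos : 0 < ‖x i₀‖ :=
    lt_of_lt_of_le (norm_pos_iff.mpr hj) (hmax j (Finset.mem_univ j))
  have hc : x i₀ ≠ 0 := norm_pos_iff.mp hcpos
  -- normalize
  set y : Fin 18 → ℚ_[2] := fun i => x i / x i₀ with hydef
  have hy1 : ∀ i, ‖y i‖ ≤ 1 := by
    intro i
    rw [hydef]
    simp only [norm_div]
    rw [div_le_one hcpos]
    exact hmax i (Finset.mem_univ i)
  have hyi₀ : y i₀ = 1 := div_self hc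
  have hby : bigF y = 0 := by
    have : y = fun i => x i * (x i₀)⁻¹ := by
      funext i; exact div_eq_mul_inv (x i) (x i₀)
    rw [this, bigF_smul, hxF, zero_mul]
  -- lift to ℤ₂
  set z : Fin 18 → ℤ_[2] := fun i => ⟨y i, hy1 i⟩ with hzdef
  have hzy : ∀ i, ((z i : ℚ_[2])) = y i := fun i => rfl
  have hbz : bigF z = 0 := by
    apply Subtype.coe_injective
    show ((bigF z : ℤ_[2]) : ℚ_[2]) = ((0 : ℤ_[2]) : ℚ_[2])
    have h : ((bigF z : ℤ_[2]) : ℚ_[2]) = bigF (fun i => ((z i : ℚ_[2]))) :=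
      map_bigF (PadicInt.Coe.ringHom (p := 2)) z
    rw [h]
    have h2 : (fun i => ((z i : ℚ_[2]))) = y := funext fun i => rfl
    rw [h2, hby, PadicInt.coe_zero]
  have hzunit : IsUnit (z i₀) := by
    rw [PadicInt.isUnit_iff, PadicInt.norm_def, hzy, hyi₀, norm_one]
  -- reduce mod 16
  set ψ : ℤ_[2] →+* ZMod 16 :=
    (ZMod.castHom (show (16:ℕ) ∣ 2 ^ 4 by norm_num) (ZMod 16)).comp
      (PadicInt.toZModPow 4) with hψdef
  set W : Fin 18 → ZMod 16 := fun i => ψ (z i) with hWdef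
  have hbW : bigF W = 0 := by
    have := map_bigF ψ z
    rw [hbz, map_zero] at this
    exact this.symm
  have hWunit : IsUnit (W i₀) := hzunit.map ψ
  have hWodd : ¬ ∃ c : ZMod 16, W i₀ = 2 * c := by
    rintro ⟨c, hcc⟩
    obtain ⟨b, hb⟩ := isUnit_iff_exists_inv.mp hWunit
    rw [hcc, mul_assoc] at hb
    exact two_mul_ne_one (c * b) hb
  -- contradict part 1
  apply key
  refine ⟨![W 0, W 1, W 2], ![W 3, W 4, W 5], ![W 6, W 7, W 8],
    ![W 9, W 10, W 11], ![W 12, W 13, W 14], ![W 15, W 16, W 17], ?_, ?_⟩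
  · intro hall
    apply hWodd
    have hall' : ∀ i : Fin 18, ∃ c, W i = 2 * c := by
      intro i
      fin_cases i
      · simpa using hall ![W 0, W 1, W 2] (by simp) 0
      · simpa using hall ![W 0, W 1, W 2] (by simp) 1
      · simpa using hall ![W 0, W 1, W 2] (by simp) 2
      · simpa using hall ![W 3, W 4, W 5] (by simp) 0
      · simpa using hall ![W 3, W 4, W 5] (by simp) 1
      · simpa using hall ![W 3, W 4, W 5] (by simp) 2
      · simpa using hall ![W 6, W 7, W 8] (by simp) 0
      · simpa using hall ![W 6, W 7, W 8] (by simp) 1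
      · simpa using hall ![W 6, W 7, W 8] (by simp) 2
      · simpa using hall ![W 9, W 10, W 11] (by simp) 0
      · simpa using hall ![W 9, W 10, W 11] (by simp) 1
      · simpa using hall ![W 9, W 10, W 11] (by simp) 2
      · simpa using hall ![W 12, W 13, W 14] (by simp) 0
      · simpa using hall ![W 12, W 13, W 14] (by simp) 1
      · simpa using hall ![W 12, W 13, W 14] (by simp) 2
      · simpa using hall ![W 15, W 16, W 17] (by simp) 0
      · simpa using hall ![W 15, W 16, W 17] (by simp) 1
      · simpa using hall ![W 15, W 16, W 17] (by simp) 2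
    exact hall' i₀
  · rw [terjanianG_vec, terjanianG_vec, terjanianG_vec, terjanianG_vec,
      terjanianG_vec, terjanianG_vec]
    exact hbW
end

section
/- Let (K_0, v_0) be a valued field with residue field k_0, let f ∈ k_0[X] be a monic irreducible separable polynomial, and let F ∈ O_{K_0}[X] be a monic lift of f. Then F is irreducible over K_0, and for any root a of F in an algebraic closure, the valuation v_0 extends uniquely to K_0(a); the resulting extension has the same value group as K_0 and residue field k_0[X]/(f). -/
open IsLocalRing Polynomial

/-- The value group of a valuation `w` on a field `E`, as a subgroup of `Γˣ`. -/
def valueGroupOf {Γ : Type*} [LinearOrderedCommGroupWithZero Γ] {E : Type*} [Field E]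
    (w : Valuation E Γ) : Subgroup Γˣ :=
  (Units.map (w.toMonoidWithZeroHom.toMonoidHom)).range

open scoped IntermediateField

section Gauss

variable {Γ : Type*} [LinearOrderedCommGroupWithZero Γ] {K₀ : Type*} [Field K₀]
  (v₀ : Valuation K₀ Γ)

/-- In a linearly ordered commutative group with zero, `0` is a bottom element. -/
instance (priority := 100) instOrderBotOfLOCGWZ : OrderBot Γ where
  bot := 0
  bot_le _ := zero_le'

/-- The Gauss sup-norm of a polynomial. -/
noncomputable def gaussSup (p : K₀[X]) : Γ :=
  p.support.sup fun i => v₀ (p.coeff i)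

theorem le_gaussSup (p : K₀[X]) (i : ℕ) : v₀ (p.coeff i) ≤ gaussSup v₀ p := by
  by_cases h : p.coeff i = 0
  · rw [h, map_zero]
    exact zero_le'
  · unfold gaussSup
    exact Finset.le_sup (α := Γ) (f := fun j => v₀ (p.coeff j)) (Polynomial.mem_support_iff.2 h)

theorem gaussSup_le_iff {p : K₀[X]} {t : Γ} :
    gaussSup v₀ p ≤ t ↔ ∀ i, v₀ (p.coeff i) ≤ t :=
  ⟨fun h i => (le_gaussSup v₀ p i).trans h, fun h => Finset.sup_le fun i _ => h i⟩


theorem gbot_eq_zero : (⊥ : Γ) = 0 := le_antisymm bot_le zero_le'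

@[simp] theorem gaussSup_zero : gaussSup v₀ (0 : K₀[X]) = 0 := by
  simp [gaussSup, gbot_eq_zero]

theorem gaussSup_C (c : K₀) : gaussSup v₀ (Polynomial.C c) = v₀ c := by
  apply le_antisymm
  · rw [gaussSup_le_iff]
    intro i
    rcases eq_or_ne i 0 with rfl | h
    · simp
    · simp [Polynomial.coeff_C, h, zero_le']
  · simpa using le_gaussSup v₀ (Polynomial.C c) 0

theorem gaussSup_one : gaussSup v₀ (1 : K₀[X]) = 1 := by
  simpa using gaussSup_C v₀ 1

theorem gaussSup_C_mul_le (c : K₀) (p : K₀[X]) :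
    gaussSup v₀ (Polynomial.C c * p) ≤ v₀ c * gaussSup v₀ p := by
  rw [gaussSup_le_iff]
  intro i
  rw [Polynomial.coeff_C_mul, map_mul]
  exact mul_le_mul_right (le_gaussSup v₀ p i) _

theorem gaussSup_C_mul (c : K₀) (p : K₀[X]) :
    gaussSup v₀ (Polynomial.C c * p) = v₀ c * gaussSup v₀ p := by
  rcases eq_or_ne c 0 with rfl | hc
  · simp
  refine le_antisymm (gaussSup_C_mul_le v₀ c p) ?_
  have h2 := gaussSup_C_mul_le v₀ c⁻¹ (Polynomial.C c * p)
  rw [← mul_assoc, ← Polynomial.C_mul, inv_mul_cancel₀ hc, Polynomial.C_1, one_mul] at h2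
  calc v₀ c * gaussSup v₀ p ≤ v₀ c * (v₀ c⁻¹ * gaussSup v₀ (Polynomial.C c * p)) :=
        mul_le_mul_right h2 _
    _ = gaussSup v₀ (Polynomial.C c * p) := by
        rw [← mul_assoc, ← map_mul, mul_inv_cancel₀ hc, map_one, one_mul]

theorem gaussSup_add_le (p q : K₀[X]) :
    gaussSup v₀ (p + q) ≤ max (gaussSup v₀ p) (gaussSup v₀ q) := by
  rw [gaussSup_le_iff]
  intro i
  rw [Polynomial.coeff_add]
  exact (v₀.map_add _ _).trans (max_le_max (le_gaussSup _ _ _) (le_gaussSup _ _ _))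

theorem isUnit_iff_val_eq_one (x : v₀.valuationSubring) : IsUnit x ↔ v₀ ↑x = 1 := by
  constructor
  · intro hx
    obtain ⟨y, hy⟩ := isUnit_iff_exists_inv.1 hx
    have hy' : (↑x : K₀) * ↑y = 1 := by
      have := congrArg (fun z : v₀.valuationSubring => (↑z : K₀)) hy
      push_cast at this
      exact this
    have h1 : v₀ ↑x * v₀ ↑y = 1 := by rw [← map_mul, hy', map_one]
    refine le_antisymm x.2 ?_
    calc (1:Γ) = v₀ ↑x * v₀ ↑y := h1.symm
      _ ≤ v₀ ↑x * 1 := mul_le_mul_right y.2 _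
      _ = v₀ ↑x := mul_one _
  · intro hx1
    have hx0 : (↑x : K₀) ≠ 0 := by
      intro h
      rw [h, map_zero] at hx1
      exact zero_ne_one hx1
    have hz : v₀ (↑x : K₀)⁻¹ ≤ 1 := by rw [map_inv₀, hx1, inv_one]
    refine isUnit_iff_exists_inv.2 ⟨⟨(↑x : K₀)⁻¹, hz⟩, Subtype.ext ?_⟩
    push_cast
    exact mul_inv_cancel₀ hx0

theorem residue_ne_zero_iff (x : v₀.valuationSubring) :
    residue v₀.valuationSubring x ≠ 0 ↔ v₀ ↑x = 1 := by
  rw [← isUnit_iff_val_eq_one, Ne, IsLocalRing.residue_eq_zero_iff]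
  simp [IsLocalRing.mem_maximalIdeal, mem_nonunits_iff]

theorem exists_map_eq {p : K₀[X]} (h : ∀ i, v₀ (p.coeff i) ≤ 1) :
    ∃ ρ : Polynomial v₀.valuationSubring, ρ.map (algebraMap _ K₀) = p := by
  refine ⟨∑ i ∈ p.support, (Polynomial.monomial i) (⟨p.coeff i, h i⟩ : v₀.valuationSubring), ?_⟩
  rw [Polynomial.map_sum]
  conv_rhs => rw [p.as_sum_support]
  refine Finset.sum_congr rfl fun i _ => ?_
  rw [Polynomial.map_monomial]
  rfl

end Gauss
section Gauss2

variable {Γ : Type*} [LinearOrderedCommGroupWithZero Γ] {K₀ : Type*} [Field K₀]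
  (v₀ : Valuation K₀ Γ)

theorem gaussSup_map_le_one (r : Polynomial v₀.valuationSubring) :
    gaussSup v₀ (r.map (algebraMap _ K₀)) ≤ 1 := by
  rw [gaussSup_le_iff]
  intro i
  rw [Polynomial.coeff_map, ValuationSubring.algebraMap_apply]
  exact (r.coeff i).2

theorem gaussSup_map_eq_one {r : Polynomial v₀.valuationSubring}
    (h : r.map (residue v₀.valuationSubring) ≠ 0) :
    gaussSup v₀ (r.map (algebraMap _ K₀)) = 1 := by
  refine le_antisymm (gaussSup_map_le_one v₀ r) ?_
  obtain ⟨i, hi⟩ : ∃ i, (r.map (residue v₀.valuationSubring)).coeff i ≠ 0 := by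
    by_contra h'
    push_neg at h'
    exact h (Polynomial.ext fun i => by simpa using h' i)
  rw [Polynomial.coeff_map] at hi
  have h1 : v₀ ↑(r.coeff i) = 1 := (residue_ne_zero_iff v₀ _).1 hi
  calc (1:Γ) = v₀ ((r.map (algebraMap _ K₀)).coeff i) := by
        rw [Polynomial.coeff_map, ValuationSubring.algebraMap_apply, h1]
    _ ≤ _ := le_gaussSup _ _ _

theorem exists_primitive (p : Polynomial K₀) (hp : p ≠ 0) :
    ∃ (c : K₀) (r : Polynomial v₀.valuationSubring), c ≠ 0 ∧
      r.map (residue v₀.valuationSubring) ≠ 0 ∧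
      p = Polynomial.C c * r.map (algebraMap _ K₀) ∧
      (r.map (algebraMap _ K₀)).degree = p.degree ∧ gaussSup v₀ p = v₀ c := by
  obtain ⟨i₀, hi₀, hsup⟩ := Finset.exists_mem_eq_sup p.support
    (Polynomial.support_nonempty.2 hp) fun i => v₀ (p.coeff i)
  set c := p.coeff i₀ with hc
  have hc0 : c ≠ 0 := Polynomial.mem_support_iff.1 hi₀
  have hvc : v₀ c ≠ 0 := v₀.ne_zero_iff.2 hc0
  have hsup' : gaussSup v₀ p = v₀ c := hsup
  have hcoeff : ∀ i, v₀ ((Polynomial.C c⁻¹ * p).coeff i) ≤ 1 := by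
    intro i
    rw [Polynomial.coeff_C_mul, map_mul, map_inv₀]
    have h1 : v₀ (p.coeff i) ≤ v₀ c := hsup' ▸ le_gaussSup v₀ p i
    calc (v₀ c)⁻¹ * v₀ (p.coeff i) ≤ (v₀ c)⁻¹ * v₀ c := mul_le_mul_right h1 _
      _ = 1 := inv_mul_cancel₀ hvc
  obtain ⟨r, hr⟩ := exists_map_eq v₀ hcoeff
  refine ⟨c, r, hc0, ?_, ?_, ?_, hsup'⟩
  · have hcoe : (↑(r.coeff i₀) : K₀) = c⁻¹ * c := by
      have := congrArg (fun q => Polynomial.coeff q i₀) hr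
      simp only [Polynomial.coeff_map, ValuationSubring.algebraMap_apply,
        Polynomial.coeff_C_mul] at this
      exact this
    rw [inv_mul_cancel₀ hc0] at hcoe
    have h1 : v₀ ↑(r.coeff i₀) = 1 := by rw [hcoe, map_one]
    intro H
    have h2 := congrArg (fun q => Polynomial.coeff q i₀) H
    simp only [Polynomial.coeff_map, Polynomial.coeff_zero] at h2
    exact ((residue_ne_zero_iff v₀ _).2 h1) h2
  · rw [hr, ← mul_assoc, ← Polynomial.C_mul, mul_inv_cancel₀ hc0, Polynomial.C_1, one_mul]
  · rw [hr]
    exact Polynomial.degree_C_mul (inv_ne_zero hc0)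

end Gauss2
section GaussVal

variable {Γ : Type*} [LinearOrderedCommGroupWithZero Γ] {K₀ : Type*} [Field K₀]
  (v₀ : Valuation K₀ Γ)
  (F : Polynomial v₀.valuationSubring) (hF : F.Monic)
  (hirr : Irreducible (F.map (residue v₀.valuationSubring)))

theorem algebraMap_valuationSubring_injective :
    Function.Injective (algebraMap v₀.valuationSubring K₀) := fun x y h =>
  Subtype.ext (by rwa [ValuationSubring.algebraMap_apply, ValuationSubring.algebraMap_apply] at h)

include hF

include hirr in
theorem gaussSup_mul_mod (p q : Polynomial K₀)
    (hp : p.degree < (F.map (algebraMap _ K₀)).degree)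
    (hq : q.degree < (F.map (algebraMap _ K₀)).degree) :
    gaussSup v₀ ((p * q) %ₘ (F.map (algebraMap _ K₀))) = gaussSup v₀ p * gaussSup v₀ q := by
  have hinj := algebraMap_valuationSubring_injective v₀
  rcases eq_or_ne p 0 with rfl | hp0
  · simp
  rcases eq_or_ne q 0 with rfl | hq0
  · simp
  obtain ⟨c, r, hc0, hrprim, hpc, hrdeg, hpsup⟩ := exists_primitive v₀ p hp0
  obtain ⟨d, s, hd0, hsprim, hqd, hsdeg, hqsup⟩ := exists_primitive v₀ q hq0
  have hm : (F.map (algebraMap v₀.valuationSubring K₀)).Monic := hF.map _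
  have hpq : p * q = Polynomial.C (c * d) *
      ((r * s).map (algebraMap v₀.valuationSubring K₀)) := by
    rw [hpc, hqd, Polynomial.map_mul, Polynomial.C_mul]
    ring
  have hmod : (p * q) %ₘ (F.map (algebraMap _ K₀)) =
      Polynomial.C (c * d) * (((r * s) %ₘ F).map (algebraMap v₀.valuationSubring K₀)) := by
    rw [hpq, ← Polynomial.smul_eq_C_mul, Polynomial.smul_modByMonic,
      Polynomial.map_modByMonic _ hF, Polynomial.smul_eq_C_mul]
  have hprimmod : ((r * s) %ₘ F).map (residue v₀.valuationSubring) ≠ 0 := by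
    rw [Polynomial.map_modByMonic _ hF, Polynomial.map_mul]
    intro H
    rw [Polynomial.modByMonic_eq_zero_iff_dvd (hF.map _)] at H
    have hfdeg : (F.map (residue v₀.valuationSubring)).degree = F.degree := hF.degree_map _
    have hmdeg : (F.map (algebraMap v₀.valuationSubring K₀)).degree = F.degree :=
      Polynomial.degree_map_eq_of_injective hinj F
    have hprime : Prime (F.map (residue v₀.valuationSubring)) :=
      (UniqueFactorizationMonoid.irreducible_iff_prime).1 hirr
    rcases hprime.2.2 _ _ H with h | h
    · refine hrprim (Polynomial.eq_zero_of_dvd_of_degree_lt h ?_)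
      calc (r.map (residue v₀.valuationSubring)).degree ≤ r.degree := Polynomial.degree_map_le
        _ = (r.map (algebraMap v₀.valuationSubring K₀)).degree :=
            (Polynomial.degree_map_eq_of_injective hinj r).symm
        _ < F.degree := by rw [hrdeg]; exact hmdeg ▸ hp
        _ = _ := hfdeg.symm
    · refine hsprim (Polynomial.eq_zero_of_dvd_of_degree_lt h ?_)
      calc (s.map (residue v₀.valuationSubring)).degree ≤ s.degree := Polynomial.degree_map_le
        _ = (s.map (algebraMap v₀.valuationSubring K₀)).degree :=
            (Polynomial.degree_map_eq_of_injective hinj s).symm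
        _ < F.degree := by rw [hsdeg]; exact hmdeg ▸ hq
        _ = _ := hfdeg.symm
  rw [hmod, gaussSup_C_mul, gaussSup_map_eq_one v₀ hprimmod, mul_one, map_mul, hpsup, hqsup]

theorem degree_modByMonicHom_lt (x : AdjoinRoot (F.map (algebraMap v₀.valuationSubring K₀)))
    (hdeg : 0 < (F.map (algebraMap v₀.valuationSubring K₀)).degree) :
    ((AdjoinRoot.modByMonicHom (hF.map (algebraMap v₀.valuationSubring K₀))) x).degree <
      (F.map (algebraMap v₀.valuationSubring K₀)).degree := by
  obtain ⟨p, rfl⟩ := AdjoinRoot.mk_surjective x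
  rw [AdjoinRoot.modByMonicHom_mk]
  exact Polynomial.degree_modByMonic_lt p (hF.map _)

/-- The Gauss valuation on `AdjoinRoot` of the lift of an irreducible residue polynomial. -/
noncomputable def gaussVal (hdeg : 0 < (F.map (algebraMap v₀.valuationSubring K₀)).degree) :
    Valuation (AdjoinRoot (F.map (algebraMap v₀.valuationSubring K₀))) Γ where
  toFun x := gaussSup v₀ ((AdjoinRoot.modByMonicHom (hF.map _)) x)
  map_zero' := by
    show gaussSup v₀ ((AdjoinRoot.modByMonicHom (hF.map _)) 0) = 0
    rw [map_zero, gaussSup_zero]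
  map_one' := by
    show gaussSup v₀ ((AdjoinRoot.modByMonicHom (hF.map _)) 1) = 1
    have h1 : (1 : AdjoinRoot (F.map (algebraMap v₀.valuationSubring K₀))) =
        AdjoinRoot.mk _ 1 := (map_one _).symm
    rw [h1, AdjoinRoot.modByMonicHom_mk,
      (Polynomial.modByMonic_eq_self_iff (hF.map _)).2 (Polynomial.degree_one_le.trans_lt hdeg),
      gaussSup_one]
  map_mul' x y := by
    show gaussSup v₀ ((AdjoinRoot.modByMonicHom (hF.map _)) (x * y)) =
      gaussSup v₀ ((AdjoinRoot.modByMonicHom (hF.map _)) x) *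
      gaussSup v₀ ((AdjoinRoot.modByMonicHom (hF.map _)) y)
    have hx := AdjoinRoot.mk_leftInverse (hF.map (algebraMap v₀.valuationSubring K₀)) x
    have hy := AdjoinRoot.mk_leftInverse (hF.map (algebraMap v₀.valuationSubring K₀)) y
    conv_lhs => rw [← hx, ← hy, ← map_mul, AdjoinRoot.modByMonicHom_mk]
    exact gaussSup_mul_mod v₀ F hF hirr _ _ (degree_modByMonicHom_lt v₀ F hF x hdeg)
      (degree_modByMonicHom_lt v₀ F hF y hdeg)
  map_add_le_max' x y := by
    show gaussSup v₀ ((AdjoinRoot.modByMonicHom (hF.map _)) (x + y)) ≤ _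
    rw [map_add]
    exact gaussSup_add_le v₀ _ _

theorem gaussVal_algebraMap (hdeg : 0 < (F.map (algebraMap v₀.valuationSubring K₀)).degree)
    (c : K₀) : gaussVal v₀ F hF hirr hdeg (algebraMap K₀ _ c) = v₀ c := by
  have h1 : algebraMap K₀ (AdjoinRoot (F.map (algebraMap v₀.valuationSubring K₀))) c =
      AdjoinRoot.mk _ (Polynomial.C c) := rfl
  show gaussSup v₀ _ = v₀ c
  rw [h1, AdjoinRoot.modByMonicHom_mk,
    (Polynomial.modByMonic_eq_self_iff (hF.map _)).2 (Polynomial.degree_C_le.trans_lt hdeg),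
    gaussSup_C]

end GaussVal
section Ext

variable {Γ : Type*} [LinearOrderedCommGroupWithZero Γ] {K₀ : Type*} [Field K₀]
  (v₀ : Valuation K₀ Γ)
  (f : Polynomial (ResidueField v₀.valuationSubring))
  (hf_monic : f.Monic) (hf_irr : Irreducible f)
  (F : Polynomial v₀.valuationSubring) (hF_monic : F.Monic)
  (hF_lift : F.map (residue v₀.valuationSubring) = f)
  {L : Type*} [Field L] [Algebra K₀ L]
  (w' : Valuation L Γ) (hw' : w'.comap (algebraMap K₀ L) = v₀)
  (α : L) (hroot : Polynomial.aeval α (F.map (algebraMap v₀.valuationSubring K₀)) = 0)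

theorem eval₂_ne_zero_of_degree_lt {κ : Type*} [Field κ]
    (χ : ResidueField v₀.valuationSubring →+* κ)
    (x : κ) (hx : Polynomial.eval₂ χ x f = 0) (r : Polynomial (ResidueField v₀.valuationSubring))
    (h0 : r ≠ 0) (hdeg : r.degree < f.degree) (hfm : f.Monic) (hfi : Irreducible f) :
    Polynomial.eval₂ χ x r ≠ 0 := by
  letI := χ.toAlgebra
  have h1 : Polynomial.aeval x f = 0 := by
    rwa [Polynomial.aeval_def, RingHom.algebraMap_toAlgebra]
  have hmin : f = minpoly _ x := minpoly.eq_of_irreducible_of_monic hfi h1 hfm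
  intro H
  have h2 : Polynomial.aeval x r = 0 := by
    rwa [Polynomial.aeval_def, RingHom.algebraMap_toAlgebra]
  have h3 := minpoly.degree_le_of_ne_zero _ x h0 h2
  rw [← hmin] at h3
  exact absurd (lt_of_le_of_lt h3 hdeg) (lt_irrefl _)

include hF_monic hw' hroot in
theorem ext_setup :
    ∃ (β : w'.valuationSubring)
      (χ : ResidueField v₀.valuationSubring →+* ResidueField w'.valuationSubring),
      (↑β : L) = α ∧
      (∀ r : Polynomial v₀.valuationSubring, ∃ y' : w'.valuationSubring,
        (↑y' : L) = Polynomial.aeval α (r.map (algebraMap v₀.valuationSubring K₀)) ∧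
        residue _ y' = Polynomial.eval₂ χ (residue _ β)
          (r.map (residue v₀.valuationSubring))) ∧
      Polynomial.eval₂ χ (residue _ β) (F.map (residue v₀.valuationSubring)) = 0 ∧
      (∀ t : w'.valuationSubring, IsUnit t → w' ↑t = 1) := by
  have hw'c : ∀ c : K₀, w' (algebraMap K₀ L c) = v₀ c := fun c => by rw [← hw']; rfl
  have hmem : ∀ c : v₀.valuationSubring, algebraMap K₀ L ↑c ∈ w'.valuationSubring := fun c => by
    rw [Valuation.mem_valuationSubring_iff, hw'c]
    exact c.2
  set ψ : v₀.valuationSubring →+* w'.valuationSubring :=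
    RingHom.codRestrict ((algebraMap K₀ L).comp (algebraMap _ K₀)) w'.valuationSubring
      (fun c => by rw [RingHom.comp_apply, ValuationSubring.algebraMap_apply]; exact hmem c)
    with hψ
  have hψcoe : ∀ c, (↑(ψ c) : L) = algebraMap K₀ L ↑c := fun c => by
    rw [hψ]
    rfl
  have hIntegers : w'.Integers w'.valuationSubring :=
    ⟨fun x y h => Subtype.ext (by
        rwa [ValuationSubring.algebraMap_apply, ValuationSubring.algebraMap_apply] at h),
     fun x => by rw [ValuationSubring.algebraMap_apply]; exact x.2,
     fun r hr => ⟨⟨r, hr⟩, rfl⟩⟩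
  have hcomp : (algebraMap w'.valuationSubring L).comp ψ =
      (algebraMap K₀ L).comp (algebraMap v₀.valuationSubring K₀) :=
    RingHom.ext fun c => by
      rw [RingHom.comp_apply, ValuationSubring.algebraMap_apply, hψcoe]
      rfl
  have hα1 : α ∈ w'.valuationSubring := by
    have hint : IsIntegral w'.valuationSubring α := by
      refine ⟨F.map ψ, hF_monic.map ψ, ?_⟩
      rw [Polynomial.eval₂_map, hcomp, ← Polynomial.eval₂_map, ← Polynomial.aeval_def]
      exact hroot
    exact hIntegers.mem_of_integral hint
  refine ⟨⟨α, hα1⟩, ?_⟩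
  set β : w'.valuationSubring := ⟨α, hα1⟩ with hβdef
  have hβmap : algebraMap w'.valuationSubring L β = α := by
    rw [ValuationSubring.algebraMap_apply]
  have hβF : Polynomial.eval₂ ψ β F = 0 := by
    apply hIntegers.hom_inj
    rw [map_zero, Polynomial.hom_eval₂, hcomp, hβmap, ← Polynomial.eval₂_map,
      ← Polynomial.aeval_def]
    exact hroot
  have hker : ∀ c ∈ maximalIdeal v₀.valuationSubring,
      ((residue w'.valuationSubring).comp ψ) c = 0 := by
    intro c hc
    have hcu : ¬IsUnit c := by rwa [IsLocalRing.mem_maximalIdeal, mem_nonunits_iff] at hc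
    have hlt : v₀ ↑c < 1 :=
      lt_of_le_of_ne c.2 (fun h => hcu ((isUnit_iff_val_eq_one v₀ c).2 h))
    rw [RingHom.comp_apply, IsLocalRing.residue_eq_zero_iff, IsLocalRing.mem_maximalIdeal,
      mem_nonunits_iff]
    intro hu
    have h1 := hIntegers.one_of_isUnit hu
    rw [ValuationSubring.algebraMap_apply, hψcoe, hw'c] at h1
    rw [h1] at hlt
    exact absurd hlt (lt_irrefl _)
  set χ : ResidueField v₀.valuationSubring →+* ResidueField w'.valuationSubring :=
    Ideal.Quotient.lift (maximalIdeal v₀.valuationSubring)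
      ((residue w'.valuationSubring).comp ψ) hker with hχdef
  have hχ : χ.comp (residue v₀.valuationSubring) = (residue w'.valuationSubring).comp ψ :=
    RingHom.ext fun c => by
      rw [hχdef, RingHom.comp_apply]
      exact Ideal.Quotient.lift_mk (maximalIdeal v₀.valuationSubring)
        ((residue w'.valuationSubring).comp ψ) hker
  refine ⟨χ, rfl, ?_, ?_, fun t ht => by
    have h1 := hIntegers.one_of_isUnit ht
    rwa [ValuationSubring.algebraMap_apply] at h1⟩
  · intro r
    refine ⟨Polynomial.eval₂ ψ β r, ?_, ?_⟩
    · show algebraMap w'.valuationSubring L _ = _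
      rw [Polynomial.hom_eval₂, hcomp, hβmap, ← Polynomial.eval₂_map, ← Polynomial.aeval_def]
    · rw [Polynomial.hom_eval₂, Polynomial.eval₂_map, hχ]
  · rw [Polynomial.eval₂_map, hχ, ← Polynomial.hom_eval₂, hβF, map_zero]

end Ext
section Ext2

variable {Γ : Type*} [LinearOrderedCommGroupWithZero Γ] {K₀ : Type*} [Field K₀]
  (v₀ : Valuation K₀ Γ)
  (f : Polynomial (ResidueField v₀.valuationSubring))
  (hf_monic : f.Monic) (hf_irr : Irreducible f)
  (F : Polynomial v₀.valuationSubring) (hF_monic : F.Monic)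
  (hF_lift : F.map (residue v₀.valuationSubring) = f)
  {L : Type*} [Field L] [Algebra K₀ L]
  (w' : Valuation L Γ) (hw' : w'.comap (algebraMap K₀ L) = v₀)
  (α : L) (hroot : Polynomial.aeval α (F.map (algebraMap v₀.valuationSubring K₀)) = 0)

include hf_monic hf_irr hF_monic hF_lift hw' hroot in
theorem val_aeval_primitive_eq_one (r : Polynomial v₀.valuationSubring)
    (hrprim : r.map (residue v₀.valuationSubring) ≠ 0)
    (hrdeg : (r.map (residue v₀.valuationSubring)).degree < f.degree) :
    w' (Polynomial.aeval α (r.map (algebraMap v₀.valuationSubring K₀))) = 1 := by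
  obtain ⟨β, χ, hβ, hy, hχf, hone⟩ := ext_setup v₀ F hF_monic w' hw' α hroot
  obtain ⟨y', hy1, hy2⟩ := hy r
  rw [hF_lift] at hχf
  have hres : residue _ y' ≠ 0 := by
    rw [hy2]
    exact eval₂_ne_zero_of_degree_lt v₀ f χ _ hχf _ hrprim hrdeg hf_monic hf_irr
  have hunit : IsUnit y' := by
    rw [Ne, IsLocalRing.residue_eq_zero_iff, IsLocalRing.mem_maximalIdeal,
      mem_nonunits_iff, not_not] at hres
    exact hres
  rw [← hy1]
  exact hone y' hunit

include hf_irr hF_monic hF_lift hw' hroot in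
theorem residue_iso_of_rep (hsurj : ∀ t : L, w' t ≤ 1 →
      ∃ ρ : Polynomial v₀.valuationSubring,
        Polynomial.aeval α (ρ.map (algebraMap v₀.valuationSubring K₀)) = t) :
    Nonempty (ResidueField w'.valuationSubring ≃+* AdjoinRoot f) := by
  obtain ⟨β, χ, hβ, hy, hχf, hone⟩ := ext_setup v₀ F hF_monic w' hw' α hroot
  rw [hF_lift] at hχf
  haveI : Fact (Irreducible f) := ⟨hf_irr⟩
  set Φ : AdjoinRoot f →+* ResidueField w'.valuationSubring :=
    AdjoinRoot.lift χ (residue _ β) hχf with hΦ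
  have hinjΦ : Function.Injective Φ := Φ.injective
  have hsurjΦ : Function.Surjective Φ := by
    intro z
    obtain ⟨t, rfl⟩ := IsLocalRing.residue_surjective z
    obtain ⟨ρ, hρ⟩ := hsurj ↑t t.2
    obtain ⟨y', hy1, hy2⟩ := hy ρ
    have hyt : y' = t := Subtype.ext (by rw [hy1, hρ])
    refine ⟨AdjoinRoot.mk f (ρ.map (residue _)), ?_⟩
    rw [hΦ, AdjoinRoot.lift_mk, ← hy2, hyt]
  exact ⟨(RingEquiv.ofBijective Φ ⟨hinjΦ, hsurjΦ⟩).symm⟩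

end Ext2
/-- Let `(K₀, v₀)` be a valued field with residue field `k₀`, let `f ∈ k₀[X]` be monic,
irreducible and separable, and let `F ∈ O_{K₀}[X]` be a monic lift of `f`. Then `F` is
irreducible over `K₀` and, for any root `a` of `F` in an algebraic closure, the valuation
`v₀` extends uniquely to `K₀(a)`; the extension has the same value group as `v₀` and
residue field `k₀[X]/(f)`. -/
theorem extension_of_unramified_residue_polynomial
    {Γ : Type*} [LinearOrderedCommGroupWithZero Γ] (K₀ : Type*) [Field K₀]
    (v₀ : Valuation K₀ Γ)
    (f : Polynomial (ResidueField v₀.valuationSubring))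
    (hf_monic : f.Monic) (hf_irr : Irreducible f) (hf_sep : f.Separable)
    (F : Polynomial v₀.valuationSubring) (hF_monic : F.Monic)
    (hF_lift : F.map (residue v₀.valuationSubring) = f)
    (a : AlgebraicClosure K₀)
    (ha : Polynomial.aeval a (F.map (algebraMap v₀.valuationSubring K₀)) = 0) :
    Irreducible (F.map (algebraMap v₀.valuationSubring K₀)) ∧
    ∃ w : Valuation (IntermediateField.adjoin K₀ {a} : IntermediateField K₀ (AlgebraicClosure K₀)) Γ,
      w.comap (algebraMap K₀ _) = v₀ ∧
      (∀ w' : Valuation (IntermediateField.adjoin K₀ {a} :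
          IntermediateField K₀ (AlgebraicClosure K₀)) Γ,
        w'.comap (algebraMap K₀ _) = v₀ → w' = w) ∧
      valueGroupOf w = valueGroupOf v₀ ∧
      Nonempty (ResidueField w.valuationSubring ≃+* AdjoinRoot f) := by
  classical
  have hinj := algebraMap_valuationSubring_injective v₀
  set m : Polynomial K₀ := F.map (algebraMap v₀.valuationSubring K₀) with hm_def
  have hm : m.Monic := hF_monic.map _
  have hres_irr : Irreducible (F.map (residue v₀.valuationSubring)) := by
    rw [hF_lift]; exact hf_irr
  have hF_irr : Irreducible F :=
    Polynomial.Monic.irreducible_of_irreducible_map (residue v₀.valuationSubring) F hF_monic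
      hres_irr
  haveI hIC : IsIntegrallyClosed v₀.valuationSubring :=
    Valuation.Integers.isIntegrallyClosed (v := v₀)
      ⟨algebraMap_valuationSubring_injective v₀,
       fun x => by rw [ValuationSubring.algebraMap_apply]; exact x.2,
       fun r hr => ⟨⟨r, hr⟩, rfl⟩⟩
  have hm_irr : Irreducible m :=
    (Polynomial.Monic.irreducible_iff_irreducible_map_fraction_map hF_monic).1 hF_irr
  refine ⟨hm_irr, ?_⟩
  have hdeg : 0 < m.degree := Polynomial.degree_pos_of_irreducible hm_irr
  set α := IntermediateField.AdjoinSimple.gen K₀ a with hα_def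
  have hαa : algebraMap K₀⟮a⟯ (AlgebraicClosure K₀) α = a :=
    IntermediateField.AdjoinSimple.algebraMap_gen K₀ a
  have hint : IsIntegral K₀ a := ⟨m, hm, by rwa [← Polynomial.aeval_def]⟩
  have hclinj : Function.Injective (algebraMap K₀⟮a⟯ (AlgebraicClosure K₀)) :=
    RingHom.injective _
  have hαm : Polynomial.aeval α m = 0 := by
    apply hclinj
    rw [map_zero, ← Polynomial.aeval_algebraMap_apply, hαa]
    exact ha
  haveI : Fact (Irreducible m) := ⟨hm_irr⟩
  set φ : AdjoinRoot m →ₐ[K₀] K₀⟮a⟯ := AdjoinRoot.liftAlgHom m (Algebra.ofId K₀ K₀⟮a⟯) α hαm with hφ_def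
  have hφmk : ∀ p : Polynomial K₀, φ (AdjoinRoot.mk m p) = Polynomial.aeval α p := fun p =>
    AdjoinRoot.liftAlgHom_mk m (Algebra.ofId K₀ K₀⟮a⟯) α hαm p
  have hφinj : Function.Injective φ := φ.toRingHom.injective
  have hφsurj : Function.Surjective φ := by
    intro x
    have hx : (↑x : AlgebraicClosure K₀) ∈ Algebra.adjoin K₀ ({a} : Set (AlgebraicClosure K₀)) := by
      rw [← IntermediateField.adjoin_simple_toSubalgebra_of_isAlgebraic hint.isAlgebraic]
      exact x.2
    rw [Algebra.adjoin_singleton_eq_range_aeval] at hx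
    obtain ⟨p, hp⟩ := hx
    refine ⟨AdjoinRoot.mk m p, ?_⟩
    rw [hφmk]
    apply hclinj
    rw [← Polynomial.aeval_algebraMap_apply, hαa]
    exact hp
  set e : AdjoinRoot m ≃ₐ[K₀] K₀⟮a⟯ := AlgEquiv.ofBijective φ ⟨hφinj, hφsurj⟩ with he_def
  set ν := gaussVal v₀ F hF_monic hres_irr hdeg with hν_def
  set w : Valuation K₀⟮a⟯ Γ := ν.comap (e.symm.toAlgHom.toRingHom) with hw_def
  have hw_apply : ∀ x : K₀⟮a⟯, w x = ν (e.symm x) := fun x => rfl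
  have hν_apply : ∀ z, ν z = gaussSup v₀ ((AdjoinRoot.modByMonicHom hm) z) := fun z => rfl
  have hrep : ∀ x : K₀⟮a⟯,
      Polynomial.aeval α ((AdjoinRoot.modByMonicHom hm) (e.symm x)) = x := by
    intro x
    have h1 : AdjoinRoot.mk m ((AdjoinRoot.modByMonicHom hm) (e.symm x)) = e.symm x :=
      AdjoinRoot.mk_leftInverse hm _
    calc Polynomial.aeval α ((AdjoinRoot.modByMonicHom hm) (e.symm x))
        = φ (AdjoinRoot.mk m ((AdjoinRoot.modByMonicHom hm) (e.symm x))) := (hφmk _).symm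
      _ = φ (e.symm x) := by rw [h1]
      _ = e (e.symm x) := rfl
      _ = x := e.apply_symm_apply x
  have hcomap : w.comap (algebraMap K₀ K₀⟮a⟯) = v₀ := by
    apply Valuation.ext
    intro c
    rw [Valuation.comap_apply, hw_apply,
      show e.symm (algebraMap K₀ K₀⟮a⟯ c) = algebraMap K₀ (AdjoinRoot m) c from e.symm.commutes c]
    exact gaussVal_algebraMap v₀ F hF_monic hres_irr hdeg c
  have hval : ∀ x : K₀⟮a⟯, x ≠ 0 → ∃ c : K₀, c ≠ 0 ∧ w x = v₀ c ∧
      ∀ w'' : Valuation K₀⟮a⟯ Γ, w''.comap (algebraMap K₀ K₀⟮a⟯) = v₀ → w'' x = v₀ c := by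
    intro x hx
    have hxrep : Polynomial.aeval α ((AdjoinRoot.modByMonicHom hm) (e.symm x)) = x := hrep x
    have hrep0 : (AdjoinRoot.modByMonicHom hm) (e.symm x) ≠ 0 := by
      intro h
      rw [h, map_zero] at hxrep
      exact hx hxrep.symm
    obtain ⟨c, r, hc0, hrprim, hpC, hrdegeq, hsup⟩ :=
      exists_primitive v₀ ((AdjoinRoot.modByMonicHom hm) (e.symm x)) hrep0
    refine ⟨c, hc0, ?_, ?_⟩
    · rw [hw_apply, hν_apply, hsup]
    · intro w'' hw''
      have hw''c : ∀ cc : K₀, w'' (algebraMap K₀ K₀⟮a⟯ cc) = v₀ cc := fun cc => by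
        rw [← hw'']; rfl
      have hxsplit : x = algebraMap K₀ K₀⟮a⟯ c *
          Polynomial.aeval α (r.map (algebraMap v₀.valuationSubring K₀)) := by
        rw [← hxrep, hpC, map_mul, Polynomial.aeval_C]
      have hdegr : (r.map (residue v₀.valuationSubring)).degree < f.degree := by
        calc (r.map (residue v₀.valuationSubring)).degree ≤ r.degree :=
              Polynomial.degree_map_le
          _ = (r.map (algebraMap v₀.valuationSubring K₀)).degree :=
              (Polynomial.degree_map_eq_of_injective hinj r).symm
          _ = ((AdjoinRoot.modByMonicHom hm) (e.symm x)).degree := hrdegeq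
          _ < m.degree := degree_modByMonicHom_lt v₀ F hF_monic _ hdeg
          _ = F.degree := Polynomial.degree_map_eq_of_injective hinj F
          _ = f.degree := by rw [← hF_lift, hF_monic.degree_map]
      have h1 := val_aeval_primitive_eq_one v₀ f hf_monic hf_irr F hF_monic hF_lift w'' hw''
        α hαm r hrprim hdegr
      rw [hxsplit, map_mul, hw''c, h1, mul_one]
  refine ⟨w, hcomap, ?_, ?_, ?_⟩
  · intro w'' hw''
    apply Valuation.ext
    intro x
    rcases eq_or_ne x 0 with rfl | hx
    · rw [map_zero, map_zero]
    · obtain ⟨c, hc0, hwx, huniq⟩ := hval x hx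
      rw [huniq w'' hw'', hwx]
  · ext γ
    constructor
    · rintro ⟨u, hu⟩
      have hu0 : (↑u : K₀⟮a⟯) ≠ 0 := u.ne_zero
      obtain ⟨c, hc0, hwx, -⟩ := hval ↑u hu0
      refine ⟨Units.mk0 c hc0, ?_⟩
      apply Units.ext
      show v₀ c = ↑γ
      have h2 : (↑γ : Γ) = w ↑u := by rw [← hu]; rfl
      rw [h2, hwx]
    · rintro ⟨u, hu⟩
      have hne : algebraMap K₀ K₀⟮a⟯ ↑u ≠ 0 := by
        rw [_root_.map_ne_zero]
        exact u.ne_zero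
      refine ⟨Units.mk0 (algebraMap K₀ K₀⟮a⟯ ↑u) hne, ?_⟩
      apply Units.ext
      show w (algebraMap K₀ K₀⟮a⟯ ↑u) = ↑γ
      have h1 : w (algebraMap K₀ K₀⟮a⟯ ↑u) = v₀ ↑u := by rw [← hcomap]; rfl
      rw [h1, ← hu]
      rfl
  · refine residue_iso_of_rep v₀ f hf_irr F hF_monic hF_lift w hcomap α hαm ?_
    intro t ht
    have h1 : gaussSup v₀ ((AdjoinRoot.modByMonicHom hm) (e.symm t)) ≤ 1 := by
      rw [hw_apply, hν_apply] at ht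
      exact ht
    obtain ⟨ρ, hρ⟩ := exists_map_eq v₀
      (fun i => (le_gaussSup v₀ ((AdjoinRoot.modByMonicHom hm) (e.symm t)) i).trans h1)
    exact ⟨ρ, by rw [hρ]; exact hrep t⟩
end

section
/- Let (K_0,v_0) be a valued field with value group Γ_0, let p be a prime, and let γ ∈ Γ ⊇ Γ_0 with γ ∉ Γ_0 but pγ ∈ Γ_0. Choose b_0 ∈ K_0 with v_0(b_0) = pγ and let b be a root of X^p − b_0. Then X^p − b_0 is irreducible over K_0, v_0 extends uniquely to K_0(b), the value group of the extension is Γ_0 + Zγ, and the residue field is unchanged. -/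
open IsLocalRing Polynomial
section Aux
variable {Γ : Type*} [LinearOrderedCommGroupWithZero Γ] {K₀ : Type*} [Field K₀]
  (v₀ : Valuation K₀ Γ)

theorem mem_valueGroupOf_iff {d : Γˣ} :
    d ∈ valueGroupOf v₀ ↔ ∃ a : K₀, a ≠ 0 ∧ v₀ a = (d : Γ) := by
  constructor
  · rintro ⟨u, rfl⟩
    exact ⟨u, u.ne_zero, rfl⟩
  · rintro ⟨a, ha, hva⟩
    refine ⟨Units.mk0 a ha, Units.ext ?_⟩
    simpa using hva

theorem units_pow_inj {p : ℕ} (hp : p ≠ 0) {x y : Γˣ} (h : x ^ p = y ^ p) : x = y :=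
  (pow_left_strictMono hp).injective h

theorem val_pow_inj {E : Type*} [Field E] (u : Valuation E Γ) {p : ℕ} (hp : p ≠ 0) {x : E}
    (hx : x ≠ 0) {c : Γˣ} (h : u x ^ p = (c : Γ) ^ p) : u x = (c : Γ) := by
  have hvx : u x ≠ 0 := by simpa using hx
  have h2 : (Units.mk0 (u x) hvx) ^ p = c ^ p := by
    ext; simpa using h
  have h3 := units_pow_inj hp h2
  rw [← h3]; rfl

theorem pow_mem_imp_dvd {p : ℕ} (hp : p.Prime) {γ : Γˣ} (hγ : γ ∉ valueGroupOf v₀)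
    (hγp : γ ^ p ∈ valueGroupOf v₀) {i : ℕ} (hi : γ ^ i ∈ valueGroupOf v₀) : p ∣ i := by
  by_contra hndvd
  have hcop : IsCoprime (p : ℤ) (i : ℤ) :=
    Int.isCoprime_iff_gcd_eq_one.mpr (by
      rw [Int.gcd_natCast_natCast]
      exact (Nat.Prime.coprime_iff_not_dvd hp).mpr hndvd)
  obtain ⟨u, v, huv⟩ := hcop
  apply hγ
  have : γ = (γ ^ (p : ℤ)) ^ u * (γ ^ (i : ℤ)) ^ v := by
    rw [← zpow_mul, ← zpow_mul, ← zpow_add, mul_comm (p:ℤ) u, mul_comm (i:ℤ) v, huv, zpow_one]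
  rw [this]
  exact mul_mem (Subgroup.zpow_mem _ (by rw [zpow_natCast]; exact hγp) u)
    (Subgroup.zpow_mem _ (by rw [zpow_natCast]; exact hi) v)

variable {p : ℕ} {γ : Γˣ}

/-- Key: weighted values in distinct residues mod `p` are distinct. -/
theorem distinct_vals (hp : p.Prime) (hγ : γ ∉ valueGroupOf v₀)
    (hγp : γ ^ p ∈ valueGroupOf v₀) {i j : ℕ} (hi : i < p) (hj : j < p)
    {a c : K₀} (ha : a ≠ 0) (hc : c ≠ 0)
    (h : v₀ a * (γ : Γ) ^ i = v₀ c * (γ : Γ) ^ j) : i = j := by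
  have key : ∀ {i j : ℕ}, i < p → j ≤ i → ∀ {a c : K₀}, a ≠ 0 → c ≠ 0 →
      v₀ a * (γ : Γ) ^ i = v₀ c * (γ : Γ) ^ j → i = j := by
    intro i j hi hji a c ha hc h
    have hva : v₀ a ≠ 0 := by simpa using ha
    have hvc : v₀ c ≠ 0 := by simpa using hc
    set ua : Γˣ := Units.mk0 (v₀ a) hva with hua
    set uc : Γˣ := Units.mk0 (v₀ c) hvc with huc
    have hu : ua * γ ^ i = uc * γ ^ j := Units.ext (by push_cast [hua, huc]; exact h)
    have hsplit : γ ^ i = γ ^ (i - j) * γ ^ j := by rw [← pow_add, Nat.sub_add_cancel hji]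
    have hpow : γ ^ (i - j) = ua⁻¹ * uc := by
      rw [hsplit] at hu
      have : ua * γ ^ (i - j) = uc := by
        rw [← mul_assoc] at hu
        exact mul_right_cancel hu
      rw [← this]; group
    have hmem : γ ^ (i - j) ∈ valueGroupOf v₀ := by
      rw [hpow]
      exact mul_mem (inv_mem ((mem_valueGroupOf_iff v₀).mpr ⟨a, ha, rfl⟩))
        ((mem_valueGroupOf_iff v₀).mpr ⟨c, hc, rfl⟩)
    have hdvd := pow_mem_imp_dvd v₀ hp hγ hγp hmem
    have h0 : i - j = 0 := Nat.eq_zero_of_dvd_of_lt hdvd (by omega)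
    omega
  rcases le_total j i with hji | hij
  · exact key hi hji ha hc h
  · exact (key hj hij hc ha h.symm).symm
end Aux
section UnitHelpers
variable {Γ : Type*} [LinearOrderedCommGroupWithZero Γ]

theorem unit_mul_le_iff (u : Γˣ) {a b : Γ} : a * u ≤ b ↔ a ≤ b * ↑u⁻¹ := by
  constructor
  · intro h
    have := mul_le_mul_left h (↑u⁻¹ : Γ)
    simpa [mul_assoc] using this
  · intro h
    have := mul_le_mul_left h (u : Γ)
    simpa [mul_assoc] using this

theorem unit_mul_lt_iff (u : Γˣ) {a b : Γ} : a * u < b ↔ a < b * ↑u⁻¹ := by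
  rw [lt_iff_le_not_ge, lt_iff_le_not_ge, unit_mul_le_iff u]
  constructor
  · rintro ⟨h1, h2⟩
    refine ⟨h1, fun hc => h2 ?_⟩
    have := mul_le_mul_left hc (u : Γ)
    simpa [mul_assoc] using this
  · rintro ⟨h1, h2⟩
    refine ⟨h1, fun hc => h2 ?_⟩
    have := mul_le_mul_left hc (↑u⁻¹ : Γ)
    simpa [mul_assoc] using this

theorem pow_mul_le_iff (γ : Γˣ) (n : ℕ) {a b : Γ} :
    a * (γ : Γ) ^ n ≤ b ↔ a ≤ b * ((γ : Γ) ^ n)⁻¹ := by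
  simpa using unit_mul_le_iff (γ ^ n) (a := a) (b := b)

theorem pow_mul_lt_iff (γ : Γˣ) (n : ℕ) {a b : Γ} :
    a * (γ : Γ) ^ n < b ↔ a < b * ((γ : Γ) ^ n)⁻¹ := by
  simpa using unit_mul_lt_iff (γ ^ n) (a := a) (b := b)

theorem pow_mul_lt_cancel (γ : Γˣ) (n : ℕ) {a b : Γ} :
    a * (γ : Γ) ^ n < b * (γ : Γ) ^ n ↔ a < b := by
  rw [pow_mul_lt_iff, mul_assoc, mul_inv_cancel₀ (pow_ne_zero n γ.ne_zero), mul_one]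
end UnitHelpers

theorem modByMonic_X_pow_sub_C_coeff {K : Type*} [Field K] (b₀ : K) {pn : ℕ} (hpn : 0 < pn)
    (T : K[X]) (hT : T.natDegree < 2 * pn) {k : ℕ} (hk : k < pn) :
    (T %ₘ (X ^ pn - C b₀)).coeff k = T.coeff k + b₀ * T.coeff (k + pn) := by
  set f : K[X] := X ^ pn - C b₀ with hf
  have hmonic : f.Monic := monic_X_pow_sub_C b₀ hpn.ne'
  set S : K[X] := ∑ i ∈ Finset.range pn, monomial i (T.coeff (i + pn)) with hS
  set R' : K[X] := ∑ i ∈ Finset.range pn, monomial i (T.coeff i + b₀ * T.coeff (i + pn)) with hR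
  have hcoeffS : ∀ m, S.coeff m = if m < pn then T.coeff (m + pn) else 0 := by
    intro m
    rw [hS, finset_sum_coeff]
    simp only [coeff_monomial]
    rw [Finset.sum_ite_eq' (Finset.range pn) m]
    simp [Finset.mem_range]
  have hcoeffR : ∀ m, R'.coeff m = if m < pn then T.coeff m + b₀ * T.coeff (m + pn) else 0 := by
    intro m
    rw [hR, finset_sum_coeff]
    simp only [coeff_monomial]
    rw [Finset.sum_ite_eq' (Finset.range pn) m]
    simp [Finset.mem_range]
  have hdegR : R'.degree < f.degree := by
    rw [hf, degree_X_pow_sub_C hpn]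
    rw [degree_lt_iff_coeff_zero]
    intro m hm
    rw [hcoeffR]
    simp only [ite_eq_right_iff]
    intro hml
    exact absurd (by exact_mod_cast hm) (not_le.mpr hml)
  have hsum : R' + f * S = T := by
    ext m
    have hfS : (f * S).coeff m = (if pn ≤ m then S.coeff (m - pn) else 0) - b₀ * S.coeff m := by
      rw [hf, sub_mul, mul_comm (X ^ pn) S, coeff_sub, coeff_mul_X_pow', coeff_C_mul]
    rw [coeff_add, hfS, hcoeffR, hcoeffS, hcoeffS]
    rcases lt_or_ge m pn with h1 | h1
    · simp [h1, not_le.mpr h1]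
    · rcases lt_or_ge m (2 * pn) with h2 | h2
      · have hmp : m - pn < pn := by omega
        have : m - pn + pn = m := by omega
        simp [h1, not_lt.mpr h1, hmp, this]
      · have hmp : ¬ (m - pn < pn) := by omega
        have hTm : T.coeff m = 0 := coeff_eq_zero_of_natDegree_lt (by omega)
        simp [h1, not_lt.mpr h1, hmp, hTm]
  have := (div_modByMonic_unique S R' hmonic ⟨hsum, hdegR⟩).2
  rw [this, hcoeffR, if_pos hk]

section Gauss
variable {Γ : Type*} [LinearOrderedCommGroupWithZero Γ] {K₀ : Type*} [Field K₀]

instance (priority := 100) orderBotOfLOCGWZ : OrderBot Γ where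
  bot := 0
  bot_le _ := zero_le'

/-- The Gauss/monomial sup associated to `v₀`, `γ` and truncation level `p`. -/
noncomputable def gaussV (v₀ : Valuation K₀ Γ) (γ : Γˣ) (p : ℕ) (P : K₀[X]) : Γ :=
  (Finset.range p).sup fun i => v₀ (P.coeff i) * (γ : Γ) ^ i

variable (v₀ : Valuation K₀ Γ) (γ : Γˣ) {p : ℕ}

theorem gaussV_term_le {P : K₀[X]} {i : ℕ} (hi : i < p) :
    v₀ (P.coeff i) * (γ : Γ) ^ i ≤ gaussV v₀ γ p P :=
  Finset.le_sup (f := fun i => v₀ (P.coeff i) * (γ : Γ) ^ i) (Finset.mem_range.mpr hi)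

theorem gaussV_coeff_term_le {P : K₀[X]} (hdeg : P.natDegree < p) (i : ℕ) :
    v₀ (P.coeff i) * (γ : Γ) ^ i ≤ gaussV v₀ γ p P := by
  rcases lt_or_ge i p with hi | hi
  · exact gaussV_term_le v₀ γ hi
  · rw [coeff_eq_zero_of_natDegree_lt (lt_of_lt_of_le hdeg hi)]
    simp

theorem gaussV_le_iff {P : K₀[X]} {g : Γ} :
    gaussV v₀ γ p P ≤ g ↔ ∀ i < p, v₀ (P.coeff i) * (γ : Γ) ^ i ≤ g := by
  rw [gaussV, Finset.sup_le_iff]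
  simp [Finset.mem_range]

@[simp] theorem gaussV_zero : gaussV v₀ γ p (0 : K₀[X]) = 0 := by
  have h : ((Finset.range p).sup fun _ => (⊥ : Γ)) = ⊥ := Finset.sup_bot _
  have hb : (⊥ : Γ) = 0 := le_antisymm bot_le zero_le'
  rw [hb] at h
  simpa [gaussV] using h

theorem gaussV_ne_zero {P : K₀[X]} (hP : P ≠ 0) (hdeg : P.natDegree < p) :
    gaussV v₀ γ p P ≠ 0 := by
  have h1 : v₀ (P.coeff P.natDegree) * (γ : Γ) ^ P.natDegree ≠ 0 := by
    apply mul_ne_zero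
    · simpa using mt leadingCoeff_eq_zero.mp hP
    · exact pow_ne_zero _ γ.ne_zero
  intro h0
  exact h1 (le_antisymm (h0 ▸ gaussV_term_le v₀ γ hdeg) zero_le')

/-- Existence of a strictly dominant index. -/
theorem gaussV_exists_dominant (hp : p.Prime) (hγ : γ ∉ valueGroupOf v₀)
    (hγp : γ ^ p ∈ valueGroupOf v₀) {P : K₀[X]} (hP : P ≠ 0) (hdeg : P.natDegree < p) :
    ∃ i₀, i₀ < p ∧ P.coeff i₀ ≠ 0 ∧ v₀ (P.coeff i₀) * (γ : Γ) ^ i₀ = gaussV v₀ γ p P ∧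
      ∀ i, i ≠ i₀ → v₀ (P.coeff i) * (γ : Γ) ^ i < gaussV v₀ γ p P := by
  obtain ⟨i₀, hi₀mem, hi₀eq⟩ := Finset.exists_mem_eq_sup (Finset.range p)
    (Finset.nonempty_range_iff.mpr hp.ne_zero) (fun i => v₀ (P.coeff i) * (γ : Γ) ^ i)
  rw [Finset.mem_range] at hi₀mem
  have hi₀eq : gaussV v₀ γ p P = v₀ (P.coeff i₀) * (γ : Γ) ^ i₀ := hi₀eq
  have hGne := gaussV_ne_zero v₀ γ hP hdeg
  have hc₀ : P.coeff i₀ ≠ 0 := by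
    intro h
    apply hGne
    rw [hi₀eq, h]
    simp
  refine ⟨i₀, hi₀mem, hc₀, hi₀eq.symm, fun i hi => ?_⟩
  rcases lt_or_ge i p with hip | hip
  · rcases lt_or_eq_of_le (gaussV_term_le v₀ γ (P := P) hip) with h | h
    · exact h
    · exfalso
      have hci : P.coeff i ≠ 0 := by
        intro hc
        apply hGne
        rw [← h, hc]
        simp
      exact hi (distinct_vals v₀ hp hγ hγp hip hi₀mem hci hc₀ (h.trans hi₀eq))
  · rw [coeff_eq_zero_of_natDegree_lt (lt_of_lt_of_le hdeg hip)]
    simpa [zero_lt_iff] using hGne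

end Gauss

section GaussMul
variable {Γ : Type*} [LinearOrderedCommGroupWithZero Γ] {K₀ : Type*} [Field K₀]
variable (v₀ : Valuation K₀ Γ) {p : ℕ} (γ : Γˣ)

theorem pair_term_eq (P Q : K₀[X]) {i j n : ℕ} (hij : i + j = n) :
    v₀ (P.coeff i * Q.coeff j) * (γ : Γ) ^ n
      = (v₀ (P.coeff i) * (γ : Γ) ^ i) * (v₀ (Q.coeff j) * (γ : Γ) ^ j) := by
  rw [map_mul, ← hij, pow_add]
  exact mul_mul_mul_comm _ _ _ _

theorem gaussV_mul_mod (hp : p.Prime) (hγ : γ ∉ valueGroupOf v₀)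
    (hγp : γ ^ p ∈ valueGroupOf v₀) {b₀ : K₀} (hb₀ : v₀ b₀ = (γ : Γ) ^ p)
    {P Q : K₀[X]} (hP : P ≠ 0) (hQ : Q ≠ 0) (hdP : P.natDegree < p) (hdQ : Q.natDegree < p) :
    gaussV v₀ γ p ((P * Q) %ₘ (X ^ p - C b₀)) = gaussV v₀ γ p P * gaussV v₀ γ p Q := by
  obtain ⟨i₀, hi₀p, hci₀, hi₀eq, hi₀str⟩ := gaussV_exists_dominant v₀ γ hp hγ hγp hP hdP
  obtain ⟨j₀, hj₀p, hcj₀, hj₀eq, hj₀str⟩ := gaussV_exists_dominant v₀ γ hp hγ hγp hQ hdQ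
  set GP := gaussV v₀ γ p P
  set GQ := gaussV v₀ γ p Q
  have hGP0 : GP ≠ 0 := gaussV_ne_zero v₀ γ hP hdP
  have hGQ0 : GQ ≠ 0 := gaussV_ne_zero v₀ γ hQ hdQ
  have hGG0 : GP * GQ ≠ 0 := mul_ne_zero hGP0 hGQ0
  -- strict bound for non-dominant pairs
  have hpairlt : ∀ i j : ℕ, (i ≠ i₀ ∨ j ≠ j₀) →
      (v₀ (P.coeff i) * (γ : Γ) ^ i) * (v₀ (Q.coeff j) * (γ : Γ) ^ j) < GP * GQ := by
    intro i j hij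
    rcases hij with hii | hjj
    · calc (v₀ (P.coeff i) * (γ : Γ) ^ i) * (v₀ (Q.coeff j) * (γ : Γ) ^ j)
          = (v₀ (Q.coeff j) * (γ : Γ) ^ j) * (v₀ (P.coeff i) * (γ : Γ) ^ i) := mul_comm _ _
        _ < GQ * GP :=
            lt_of_le_of_lt (mul_le_mul_left (gaussV_coeff_term_le v₀ γ hdQ j) _)
              (mul_lt_mul_of_pos_left (hi₀str i hii) (zero_lt_iff.mpr hGQ0))
        _ = GP * GQ := mul_comm _ _
    · exact lt_of_le_of_lt (mul_le_mul_left (gaussV_coeff_term_le v₀ γ hdP i) _)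
        (mul_lt_mul_of_pos_left (hj₀str j hjj) (zero_lt_iff.mpr hGP0))
  -- weighted bound on coefficients of P * Q
  have hle : ∀ n : ℕ, v₀ ((P * Q).coeff n) * (γ : Γ) ^ n ≤ GP * GQ := by
    intro n
    rw [coeff_mul, pow_mul_le_iff]
    apply v₀.map_sum_le
    rintro ⟨i, j⟩ hij
    rw [Finset.HasAntidiagonal.mem_antidiagonal] at hij
    rw [← pow_mul_le_iff, pair_term_eq v₀ γ P Q hij]
    exact mul_le_mul' (gaussV_coeff_term_le v₀ γ hdP i) (gaussV_coeff_term_le v₀ γ hdQ j)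
  -- strict bound away from the dominant total degree
  have hlt : ∀ n : ℕ, n ≠ i₀ + j₀ → v₀ ((P * Q).coeff n) * (γ : Γ) ^ n < GP * GQ := by
    intro n hn
    rw [coeff_mul, pow_mul_lt_iff]
    apply v₀.map_sum_lt (by simp [hGG0, pow_ne_zero n γ.ne_zero])
    rintro ⟨i, j⟩ hij
    rw [Finset.HasAntidiagonal.mem_antidiagonal] at hij
    rw [← pow_mul_lt_iff, pair_term_eq v₀ γ P Q hij]
    apply hpairlt
    by_contra hcon
    push_neg at hcon
    exact hn (by omega)
  have hdom : v₀ (P.coeff i₀ * Q.coeff j₀) * (γ : Γ) ^ (i₀ + j₀) = GP * GQ := by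
    rw [pair_term_eq v₀ γ P Q rfl, hi₀eq, hj₀eq]
  -- exact value at the dominant total degree
  have heqd : v₀ ((P * Q).coeff (i₀ + j₀)) * (γ : Γ) ^ (i₀ + j₀) = GP * GQ := by
    have hv : v₀ ((P * Q).coeff (i₀ + j₀)) = v₀ (P.coeff i₀ * Q.coeff j₀) := by
      rw [coeff_mul]
      have hmem : (i₀, j₀) ∈ Finset.HasAntidiagonal.antidiagonal (i₀ + j₀) := by simp
      rw [← Finset.add_sum_erase _ _ hmem]
      apply v₀.map_add_eq_of_lt_left
      apply v₀.map_sum_lt (by simp [hci₀, hcj₀])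
      rintro ⟨i, j⟩ hij
      rw [Finset.mem_erase, Finset.HasAntidiagonal.mem_antidiagonal] at hij
      obtain ⟨hne, hijn⟩ := hij
      dsimp only at hijn ⊢
      have hpairne : i ≠ i₀ ∨ j ≠ j₀ := by
        by_contra hcon
        push_neg at hcon
        exact hne (by simp [hcon.1, hcon.2])
      have h4 : v₀ (P.coeff i * Q.coeff j) * (γ : Γ) ^ (i₀ + j₀)
          < v₀ (P.coeff i₀ * Q.coeff j₀) * (γ : Γ) ^ (i₀ + j₀) := by
        rw [hdom, pair_term_eq v₀ γ P Q hijn]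
        exact hpairlt i j hpairne
      exact (pow_mul_lt_cancel γ (i₀ + j₀)).mp h4
    rw [hv, hdom]
  -- now pass to the remainder
  have hdPQ : (P * Q).natDegree < 2 * p := by
    rw [natDegree_mul hP hQ]; omega
  have hcoeffR : ∀ k, k < p → ((P * Q) %ₘ (X ^ p - C b₀)).coeff k
      = (P * Q).coeff k + b₀ * (P * Q).coeff (k + p) :=
    fun k hk => modByMonic_X_pow_sub_C_coeff b₀ hp.pos (P * Q) hdPQ hk
  have hby : ∀ k : ℕ, v₀ (b₀ * (P * Q).coeff (k + p)) * (γ : Γ) ^ k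
      = v₀ ((P * Q).coeff (k + p)) * (γ : Γ) ^ (k + p) := by
    intro k
    rw [map_mul, hb₀, pow_add]
    simp [mul_comm, mul_left_comm, mul_assoc]
  apply le_antisymm
  · rw [gaussV_le_iff]
    intro k hk
    rw [hcoeffR k hk]
    calc v₀ ((P * Q).coeff k + b₀ * (P * Q).coeff (k + p)) * (γ : Γ) ^ k
        ≤ max (v₀ ((P * Q).coeff k)) (v₀ (b₀ * (P * Q).coeff (k + p))) * (γ : Γ) ^ k :=
          mul_le_mul_left (v₀.map_add _ _) _
      _ = max (v₀ ((P * Q).coeff k) * (γ : Γ) ^ k)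
            (v₀ (b₀ * (P * Q).coeff (k + p)) * (γ : Γ) ^ k) := (max_mul_mul_right _ _ _).symm
      _ ≤ GP * GQ := by
          apply max_le (hle k)
          rw [hby k]
          exact hle (k + p)
  · rcases lt_or_ge (i₀ + j₀) p with hcase | hcase
    · -- dominant coefficient is in the low part
      have hRk : v₀ (((P * Q) %ₘ (X ^ p - C b₀)).coeff (i₀ + j₀)) * (γ : Γ) ^ (i₀ + j₀)
          = GP * GQ := by
        rw [hcoeffR _ hcase]
        have h2 : v₀ (b₀ * (P * Q).coeff (i₀ + j₀ + p)) * (γ : Γ) ^ (i₀ + j₀)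
            < v₀ ((P * Q).coeff (i₀ + j₀)) * (γ : Γ) ^ (i₀ + j₀) := by
          rw [hby, heqd]
          exact hlt (i₀ + j₀ + p) (by omega)
        have h3 : v₀ (b₀ * (P * Q).coeff (i₀ + j₀ + p)) < v₀ ((P * Q).coeff (i₀ + j₀)) :=
          (pow_mul_lt_cancel γ (i₀ + j₀)).mp h2
        rw [v₀.map_add_eq_of_lt_left h3, heqd]
      calc GP * GQ = _ := hRk.symm
        _ ≤ _ := gaussV_term_le v₀ γ hcase
    · -- dominant coefficient is in the high part
      set k₀ := i₀ + j₀ - p with hk₀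
      have hk₀p : k₀ < p := by omega
      have hk₀pp : k₀ + p = i₀ + j₀ := by omega
      have hRk : v₀ (((P * Q) %ₘ (X ^ p - C b₀)).coeff k₀) * (γ : Γ) ^ k₀ = GP * GQ := by
        rw [hcoeffR _ hk₀p]
        have h2 : v₀ ((P * Q).coeff k₀) * (γ : Γ) ^ k₀
            < v₀ (b₀ * (P * Q).coeff (k₀ + p)) * (γ : Γ) ^ k₀ := by
          rw [hby, hk₀pp, heqd]
          exact hlt k₀ (by omega)
        have h3 : v₀ ((P * Q).coeff k₀) < v₀ (b₀ * (P * Q).coeff (k₀ + p)) :=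
          (pow_mul_lt_cancel γ k₀).mp h2
        rw [v₀.map_add_eq_of_lt_right h3, hby, hk₀pp, heqd]
      calc GP * GQ = _ := hRk.symm
        _ ≤ _ := gaussV_term_le v₀ γ hk₀p

end GaussMul

section GaussMore
variable {Γ : Type*} [LinearOrderedCommGroupWithZero Γ] {K₀ : Type*} [Field K₀]
variable (v₀ : Valuation K₀ Γ) (γ : Γˣ) {p : ℕ}

theorem gaussV_C (hp : 0 < p) (a : K₀) : gaussV v₀ γ p (C a) = v₀ a := by
  apply le_antisymm
  · rw [gaussV_le_iff]
    intro i _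
    rcases Nat.eq_zero_or_pos i with rfl | hi
    · simp
    · rw [coeff_C, if_neg hi.ne']
      simp
  · have := gaussV_term_le v₀ γ (P := C a) hp
    simpa using this

theorem gaussV_X (hp : 1 < p) : gaussV v₀ γ p (X : K₀[X]) = γ := by
  apply le_antisymm
  · rw [gaussV_le_iff]
    intro i _
    rcases eq_or_ne i 1 with rfl | hi
    · simp
    · rw [coeff_X, if_neg (fun h => hi h.symm)]
      simp
  · have := gaussV_term_le v₀ γ (P := (X : K₀[X])) hp
    simpa using this

theorem gaussV_add_le (P Q : K₀[X]) :
    gaussV v₀ γ p (P + Q) ≤ max (gaussV v₀ γ p P) (gaussV v₀ γ p Q) := by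
  rw [gaussV_le_iff]
  intro i hi
  rw [coeff_add]
  calc v₀ (P.coeff i + Q.coeff i) * (γ : Γ) ^ i
      ≤ max (v₀ (P.coeff i)) (v₀ (Q.coeff i)) * (γ : Γ) ^ i :=
        mul_le_mul_left (v₀.map_add _ _) _
    _ = max (v₀ (P.coeff i) * (γ : Γ) ^ i) (v₀ (Q.coeff i) * (γ : Γ) ^ i) :=
        (max_mul_mul_right _ _ _).symm
    _ ≤ max (gaussV v₀ γ p P) (gaussV v₀ γ p Q) :=
        max_le_max (gaussV_term_le v₀ γ hi) (gaussV_term_le v₀ γ hi)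
end GaussMore

section AdjoinRootVal
variable {Γ : Type*} [LinearOrderedCommGroupWithZero Γ] {K₀ : Type*} [Field K₀]
variable (v₀ : Valuation K₀ Γ) (γ : Γˣ) {p : ℕ}

theorem natDegree_modByMonicHom_lt {b₀ : K₀} {F : K₀[X]} (hFm : F.Monic)
    (hFdef : F = X ^ p - C b₀) (hp : 0 < p) (z : AdjoinRoot F) :
    (AdjoinRoot.modByMonicHom hFm z).natDegree < p := by
  obtain ⟨P, rfl⟩ := AdjoinRoot.mk_surjective z
  rw [AdjoinRoot.modByMonicHom_mk]
  rcases eq_or_ne (P %ₘ F) 0 with h0 | h0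
  · rw [h0]
    simpa using hp
  · rw [natDegree_lt_iff_degree_lt h0]
    have hdegF : F.degree = (p : WithBot ℕ) := by rw [hFdef]; exact degree_X_pow_sub_C hp _
    have := degree_modByMonic_lt P hFm
    rwa [hdegF] at this

theorem exists_adjoinRoot_valuation (hp : p.Prime) (hγ : γ ∉ valueGroupOf v₀)
    (hγp : γ ^ p ∈ valueGroupOf v₀) {b₀ : K₀} (hb₀ : v₀ b₀ = (γ : Γ) ^ p)
    {F : K₀[X]} (hFm : F.Monic) (hFdef : F = X ^ p - C b₀) :
    ∃ w : Valuation (AdjoinRoot F) Γ,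
      ∀ x, w x = gaussV v₀ γ p (AdjoinRoot.modByMonicHom hFm x) := by
  have hdegF : F.degree = (p : WithBot ℕ) := by rw [hFdef]; exact degree_X_pow_sub_C hp.pos _
  refine ⟨{ toFun := fun x => gaussV v₀ γ p (AdjoinRoot.modByMonicHom hFm x)
            map_zero' := ?_
            map_one' := ?_
            map_mul' := ?_
            map_add_le_max' := ?_ }, fun _ => rfl⟩
  · show gaussV v₀ γ p (AdjoinRoot.modByMonicHom hFm 0) = 0
    rw [map_zero]
    simp
  · show gaussV v₀ γ p (AdjoinRoot.modByMonicHom hFm 1) = 1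
    have h1 : AdjoinRoot.modByMonicHom hFm (1 : AdjoinRoot F) = (1 : K₀[X]) := by
      have : (1 : AdjoinRoot F) = AdjoinRoot.mk F 1 := by simp
      rw [this, AdjoinRoot.modByMonicHom_mk]
      rw [modByMonic_eq_self_iff hFm, hdegF, degree_one]
      exact_mod_cast WithBot.coe_lt_coe.mpr hp.pos
    rw [h1, ← C_1, gaussV_C v₀ γ hp.pos]
    simp
  · intro x y
    show gaussV v₀ γ p (AdjoinRoot.modByMonicHom hFm (x * y))
      = gaussV v₀ γ p (AdjoinRoot.modByMonicHom hFm x) * gaussV v₀ γ p (AdjoinRoot.modByMonicHom hFm y)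
    set Px := AdjoinRoot.modByMonicHom hFm x with hPx
    set Py := AdjoinRoot.modByMonicHom hFm y with hPy
    have hx : AdjoinRoot.mk F Px = x := AdjoinRoot.mk_leftInverse hFm x
    have hy : AdjoinRoot.mk F Py = y := AdjoinRoot.mk_leftInverse hFm y
    rcases eq_or_ne Px 0 with h0 | h0
    · have hx0 : x = 0 := by rw [← hx, h0, map_zero]
      rw [hx0, zero_mul, map_zero, h0]
      simp
    rcases eq_or_ne Py 0 with h0' | h0'
    · have hy0 : y = 0 := by rw [← hy, h0', map_zero]
      rw [hy0, mul_zero, map_zero, h0']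
      simp
    have hxy : x * y = AdjoinRoot.mk F (Px * Py) := by rw [map_mul, hx, hy]
    rw [hxy, AdjoinRoot.modByMonicHom_mk, hFdef]
    exact gaussV_mul_mod v₀ γ hp hγ hγp hb₀ h0 h0'
      (natDegree_modByMonicHom_lt hFm hFdef hp.pos x)
      (natDegree_modByMonicHom_lt hFm hFdef hp.pos y)
  · intro x y
    show gaussV v₀ γ p (AdjoinRoot.modByMonicHom hFm (x + y)) ≤ _
    rw [map_add]
    exact gaussV_add_le v₀ γ _ _
end AdjoinRootVal

section ValSubring
variable {Γ : Type*} [LinearOrderedCommGroupWithZero Γ] {E : Type*} [Field E]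

theorem val_isUnit_iff (u : Valuation E Γ) (a : u.valuationSubring) :
    IsUnit a ↔ u ↑a = 1 := by
  constructor
  · rintro ⟨uu, rfl⟩
    set x : u.valuationSubring := uu.val with hx
    set y : u.valuationSubring := uu.inv with hy
    have hxy : x * y = 1 := uu.val_inv
    have h1 : u ↑x * u ↑y = 1 := by
      rw [← map_mul]
      have : ((x : E) * (y : E)) = ((x * y : u.valuationSubring) : E) := by push_cast; rfl
      rw [this, hxy]
      simp
    apply le_antisymm x.2
    calc (1 : Γ) = u ↑x * u ↑y := h1.symm
      _ ≤ u ↑x * 1 := mul_le_mul_right y.2 _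
      _ = u ↑x := mul_one _
  · intro h
    have ha0 : (↑a : E) ≠ 0 := by
      intro hc
      rw [hc, map_zero] at h
      exact zero_ne_one h
    have hinv : (↑a : E)⁻¹ ∈ u.valuationSubring := by
      rw [Valuation.mem_valuationSubring_iff, map_inv₀, h, inv_one]
    refine IsUnit.of_mul_eq_one (a := a) ⟨(↑a)⁻¹, hinv⟩ (Subtype.ext ?_)
    push_cast
    field_simp

theorem val_mem_maximalIdeal_iff (u : Valuation E Γ) (a : u.valuationSubring) :
    a ∈ IsLocalRing.maximalIdeal u.valuationSubring ↔ u ↑a < 1 := by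
  rw [IsLocalRing.mem_maximalIdeal, mem_nonunits_iff, val_isUnit_iff]
  exact ⟨fun h => lt_of_le_of_ne a.2 h, fun h => ne_of_lt h⟩
end ValSubring

set_option maxHeartbeats 1600000

/-- Let `(K₀, v₀)` be a valued field with value group `Γ₀`, let `p` be a prime and let
`γ ∉ Γ₀` with `γ^p ∈ Γ₀` (multiplicative notation). Choose `b₀ ∈ K₀` with `v₀ b₀ = γ^p`
and let `b` be a root of `X^p − b₀`. Then `X^p − b₀` is irreducible over `K₀`, the
valuation `v₀` extends uniquely to `K₀(b)`, the extension satisfies `w b = γ`, its value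
group is generated by `Γ₀` and `γ`, and its residue field is unchanged. -/
theorem extension_by_pth_root_of_value
    {Γ : Type*} [LinearOrderedCommGroupWithZero Γ] (K₀ : Type*) [Field K₀]
    (v₀ : Valuation K₀ Γ) (p : ℕ) (hp : p.Prime) (γ : Γˣ)
    (hγ : γ ∉ valueGroupOf v₀) (hγp : γ ^ p ∈ valueGroupOf v₀)
    (b₀ : K₀) (hb₀ : v₀ b₀ = (γ : Γ) ^ p)
    (b : AlgebraicClosure K₀) (hb : b ^ p = algebraMap K₀ (AlgebraicClosure K₀) b₀) :
    Irreducible (X ^ p - C b₀ : Polynomial K₀) ∧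
    ∃ w : Valuation (IntermediateField.adjoin K₀ {b} :
        IntermediateField K₀ (AlgebraicClosure K₀)) Γ,
      w.comap (algebraMap K₀ _) = v₀ ∧
      (∀ w' : Valuation (IntermediateField.adjoin K₀ {b} :
          IntermediateField K₀ (AlgebraicClosure K₀)) Γ,
        w'.comap (algebraMap K₀ _) = v₀ → w' = w) ∧
      w ⟨b, IntermediateField.mem_adjoin_simple_self K₀ b⟩ = (γ : Γ) ∧
      valueGroupOf w = valueGroupOf v₀ ⊔ Subgroup.zpowers γ ∧
      Nonempty (ResidueField w.valuationSubring ≃+* ResidueField v₀.valuationSubring) := by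
  have hγ0 : (γ : Γ) ≠ 0 := γ.ne_zero
  have hb₀0 : b₀ ≠ 0 := by
    intro h
    rw [h, map_zero] at hb₀
    exact pow_ne_zero p hγ0 hb₀.symm
  -- Irreducibility
  have hirr : Irreducible (X ^ p - C b₀ : Polynomial K₀) := by
    apply X_pow_sub_C_irreducible_of_prime hp
    intro x hxp
    have hx0 : x ≠ 0 := by
      rintro rfl
      rw [zero_pow hp.ne_zero] at hxp
      exact hb₀0 hxp.symm
    have hvp : v₀ x ^ p = (γ : Γ) ^ p := by
      rw [← map_pow, hxp, hb₀]
    exact hγ ((mem_valueGroupOf_iff v₀).mpr ⟨x, hx0, val_pow_inj v₀ hp.ne_zero hx0 hvp⟩)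
  refine ⟨hirr, ?_⟩
  -- minimal polynomial
  have haev : (Polynomial.aeval b) (X ^ p - C b₀) = 0 := by
    rw [map_sub, map_pow, aeval_X, aeval_C, hb, sub_self]
  have hmonic : (X ^ p - C b₀ : K₀[X]).Monic := monic_X_pow_sub_C b₀ hp.ne_zero
  have hint : IsIntegral K₀ b := ⟨X ^ p - C b₀, hmonic, by rw [← aeval_def]; exact haev⟩
  have hFdef : minpoly K₀ b = X ^ p - C b₀ :=
    (minpoly.eq_of_irreducible_of_monic hirr haev hmonic).symm
  set F : K₀[X] := minpoly K₀ b with hFset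
  have hFm : F.Monic := by rw [hFdef]; exact hmonic
  have hdegF : F.degree = (p : WithBot ℕ) := by rw [hFdef]; exact degree_X_pow_sub_C hp.pos _
  obtain ⟨w₀, hw₀⟩ := exists_adjoinRoot_valuation v₀ γ hp hγ hγp hb₀ hFm hFdef
  have hrepdeg := natDegree_modByMonicHom_lt hFm hFdef hp.pos
  set L := (IntermediateField.adjoin K₀ {b} : IntermediateField K₀ (AlgebraicClosure K₀)) with hL
  set eqv := IntermediateField.adjoinRootEquivAdjoin K₀ hint with heqv
  set ρ : ↥L →+* AdjoinRoot F := eqv.symm.toAlgHom.toRingHom with hρ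
  set w : Valuation ↥L Γ := w₀.comap ρ with hw
  have hwx : ∀ x : ↥L, w x = gaussV v₀ γ p (AdjoinRoot.modByMonicHom hFm (eqv.symm x)) :=
    fun x => hw₀ _
  -- value of constants
  have hofval : ∀ a : K₀, w₀ (algebraMap K₀ (AdjoinRoot F) a) = v₀ a := by
    intro a
    rw [hw₀]
    have h1 : algebraMap K₀ (AdjoinRoot F) a = AdjoinRoot.mk F (C a) := by
      rw [AdjoinRoot.algebraMap_eq]; rfl
    rw [h1, AdjoinRoot.modByMonicHom_mk]
    have h2 : (C a : K₀[X]) %ₘ F = C a := by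
      rw [modByMonic_eq_self_iff hFm, hdegF]
      exact lt_of_le_of_lt degree_C_le (by exact_mod_cast WithBot.coe_lt_coe.mpr hp.pos)
    rw [h2, gaussV_C v₀ γ hp.pos]
  have hwa : ∀ a : K₀, w (algebraMap K₀ ↥L a) = v₀ a := by
    intro a
    show w₀ (eqv.symm (algebraMap K₀ ↥L a)) = v₀ a
    rw [AlgEquiv.commutes eqv.symm a, hofval]
  have hbmem := IntermediateField.mem_adjoin_simple_self K₀ b
  have hbne : b ≠ 0 := by
    intro h
    apply hb₀0
    apply (algebraMap K₀ (AlgebraicClosure K₀)).injective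
    rw [← hb, h, zero_pow hp.ne_zero, map_zero]
  have hgen0 : (⟨b, hbmem⟩ : ↥L) ≠ 0 := by
    intro h
    apply hbne
    exact congrArg Subtype.val h
  -- w of the generator
  have hwb : w ⟨b, hbmem⟩ = (γ : Γ) := by
    have hgen : (⟨b, hbmem⟩ : ↥L) = IntermediateField.AdjoinSimple.gen K₀ b := rfl
    show w₀ (eqv.symm ⟨b, hbmem⟩) = (γ : Γ)
    rw [hgen, heqv, IntermediateField.adjoinRootEquivAdjoin_symm_apply_gen, hw₀]
    have h1 : AdjoinRoot.root F = AdjoinRoot.mk F X := (AdjoinRoot.mk_X).symm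
    rw [h1, AdjoinRoot.modByMonicHom_mk]
    have h2 : (X : K₀[X]) %ₘ F = X := by
      rw [modByMonic_eq_self_iff hFm, hdegF, degree_X]
      exact_mod_cast WithBot.coe_lt_coe.mpr hp.one_lt
    rw [h2, gaussV_X v₀ γ hp.one_lt]
  -- extension property
  have hcomap : w.comap (algebraMap K₀ ↥L) = v₀ := by
    apply Valuation.ext
    intro a
    exact hwa a
  -- expression of elements
  have hxP : ∀ x : ↥L, x = (Polynomial.aeval (⟨b, hbmem⟩ : ↥L))
      (AdjoinRoot.modByMonicHom hFm (eqv.symm x)) := by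
    intro x
    set P := AdjoinRoot.modByMonicHom hFm (eqv.symm x) with hP
    have h1 : AdjoinRoot.mk F P = eqv.symm x := AdjoinRoot.mk_leftInverse hFm _
    have h2 : eqv (AdjoinRoot.mk F P) = x := by rw [h1]; exact eqv.apply_symm_apply x
    have h3 : eqv (AdjoinRoot.mk F P) = (Polynomial.aeval (eqv (AdjoinRoot.root F))) P := by
      rw [← AdjoinRoot.aeval_eq]
      exact (Polynomial.aeval_algHom_apply eqv.toAlgHom (AdjoinRoot.root F) P).symm
    rw [← h2, h3, heqv, IntermediateField.adjoinRootEquivAdjoin_apply_root]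
    rfl
  -- uniqueness of extensions
  have huniq : ∀ w' : Valuation ↥L Γ, w'.comap (algebraMap K₀ ↥L) = v₀ → w' = w := by
    intro w' hw'
    have hw'a : ∀ a : K₀, w' (algebraMap K₀ ↥L a) = v₀ a := by
      intro a
      rw [← hw']
      rfl
    have hgenpow : (⟨b, hbmem⟩ : ↥L) ^ p = algebraMap K₀ ↥L b₀ := by
      apply Subtype.ext
      push_cast
      rw [hb]
    have hw'gen : w' ⟨b, hbmem⟩ = (γ : Γ) := by
      apply val_pow_inj w' hp.ne_zero hgen0
      rw [← map_pow, hgenpow, hw'a, hb₀]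
    apply Valuation.ext
    intro x
    set P := AdjoinRoot.modByMonicHom hFm (eqv.symm x) with hPd
    rcases eq_or_ne P 0 with h0 | h0
    · have hx0 : x = 0 := by
        rw [hxP x, ← hPd, h0, map_zero]
      rw [hx0, map_zero, map_zero]
    · obtain ⟨i₀, hi₀p, hci₀, hi₀eq, hi₀str⟩ :=
        gaussV_exists_dominant v₀ γ hp hγ hγp h0 (hrepdeg _)
      have hterm : ∀ i, w' (algebraMap K₀ ↥L (P.coeff i) * (⟨b, hbmem⟩ : ↥L) ^ i)
          = v₀ (P.coeff i) * (γ : Γ) ^ i := by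
        intro i
        rw [map_mul, map_pow, hw'a, hw'gen]
      have hsum : x = ∑ i ∈ Finset.range p,
          algebraMap K₀ ↥L (P.coeff i) * (⟨b, hbmem⟩ : ↥L) ^ i := by
        conv_lhs => rw [hxP x]
        rw [aeval_eq_sum_range' (hrepdeg (eqv.symm x))]
        exact Finset.sum_congr rfl fun i _ => by rw [Algebra.smul_def]
      have hw'x : w' x = v₀ (P.coeff i₀) * (γ : Γ) ^ i₀ := by
        rw [hsum, ← Finset.add_sum_erase _ _ (Finset.mem_range.mpr hi₀p)]
        rw [← hterm i₀]
        apply w'.map_add_eq_of_lt_left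
        apply w'.map_sum_lt
        · rw [hterm i₀, hi₀eq]
          exact gaussV_ne_zero v₀ γ h0 (hrepdeg _)
        · intro i hi
          rw [Finset.mem_erase] at hi
          rw [hterm i, hterm i₀, hi₀eq]
          exact hi₀str i hi.1
      rw [hw'x, hwx x, ← hPd, ← hi₀eq]
  -- value group
  have hvg : valueGroupOf w = valueGroupOf v₀ ⊔ Subgroup.zpowers γ := by
    apply le_antisymm
    · rintro d ⟨u, rfl⟩
      set x : ↥L := (u : ↥L) with hxd
      have hx0 : x ≠ 0 := u.ne_zero
      set P := AdjoinRoot.modByMonicHom hFm (eqv.symm x) with hPd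
      have h0 : P ≠ 0 := by
        intro h
        apply hx0
        rw [hxP x, ← hPd, h, map_zero]
      obtain ⟨i₀, hi₀p, hci₀, hi₀eq, hi₀str⟩ :=
        gaussV_exists_dominant v₀ γ hp hγ hγp h0 (hrepdeg _)
      have hval : w x = v₀ (P.coeff i₀) * (γ : Γ) ^ i₀ := by
        rw [hwx x, ← hPd, hi₀eq]
      have hvc : v₀ (P.coeff i₀) ≠ 0 := by simpa using hci₀
      have hdeq : Units.map w.toMonoidWithZeroHom.toMonoidHom u
          = Units.mk0 (v₀ (P.coeff i₀)) hvc * γ ^ i₀ := by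
        apply Units.ext
        push_cast
        exact hval
      rw [hdeq]
      exact mul_mem
        (Subgroup.mem_sup_left ((mem_valueGroupOf_iff v₀).mpr ⟨P.coeff i₀, hci₀, rfl⟩))
        (Subgroup.mem_sup_right (pow_mem (Subgroup.mem_zpowers γ) i₀))
    · rw [sup_le_iff]
      constructor
      · rintro d ⟨u, rfl⟩
        refine ⟨Units.map (algebraMap K₀ ↥L).toMonoidHom u, Units.ext ?_⟩
        push_cast
        exact hwa u
      · rw [Subgroup.zpowers_le]
        refine ⟨Units.mk0 (⟨b, hbmem⟩ : ↥L) hgen0, Units.ext ?_⟩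
        push_cast
        exact hwb
  -- residue fields
  have hres : Nonempty (ResidueField w.valuationSubring ≃+* ResidueField v₀.valuationSubring) := by
    set O₀ := v₀.valuationSubring with hO₀
    set Ow := w.valuationSubring with hOw
    have hmapmem : ∀ a : O₀, algebraMap K₀ ↥L ↑a ∈ Ow := by
      intro a
      rw [hOw, Valuation.mem_valuationSubring_iff, hwa]
      exact a.2
    set ι : O₀ →+* Ow :=
      { toFun := fun a => (⟨algebraMap K₀ ↥L ↑a, hmapmem a⟩ : Ow)
        map_one' := by
          apply Subtype.ext
          simp
        map_mul' := fun a c => by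
          apply Subtype.ext
          push_cast
          simp
        map_zero' := by
          apply Subtype.ext
          simp
        map_add' := fun a c => by
          apply Subtype.ext
          push_cast
          simp } with hι
    have hιval : ∀ a : O₀, (↑(ι a) : ↥L) = algebraMap K₀ ↥L ↑a := fun a => rfl
    haveI : IsLocalHom ι := by
      constructor
      intro a ha
      rw [val_isUnit_iff] at ha ⊢
      rw [hιval, hwa] at ha
      exact ha
    set φ : ResidueField O₀ →+* ResidueField Ow := ResidueField.map ι with hφ
    have hinj : Function.Injective φ := φ.injective
    have hsurj : Function.Surjective φ := by
      intro z
      obtain ⟨y, rfl⟩ := IsLocalRing.residue_surjective z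
      set x : ↥L := ↑y with hxd
      set P := AdjoinRoot.modByMonicHom hFm (eqv.symm x) with hPd
      have hPle : gaussV v₀ γ p P ≤ 1 := by
        rw [hPd, ← hwx x]
        exact y.2
      have ha1 : v₀ (P.coeff 0) ≤ 1 := by
        have h1 := gaussV_term_le v₀ γ (P := P) hp.pos
        rw [pow_zero, mul_one] at h1
        exact le_trans h1 hPle
      set a : O₀ := ⟨P.coeff 0, ha1⟩ with had
      have hsubrep : AdjoinRoot.modByMonicHom hFm (eqv.symm (x - algebraMap K₀ ↥L (P.coeff 0)))
          = P - C (P.coeff 0) := by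
        have h1 : eqv.symm (x - algebraMap K₀ ↥L (P.coeff 0))
            = AdjoinRoot.mk F (P - C (P.coeff 0)) := by
          have hA : eqv.symm x = AdjoinRoot.mk F P := (AdjoinRoot.mk_leftInverse hFm _).symm
          have hB : eqv.symm (algebraMap K₀ ↥L (P.coeff 0))
              = AdjoinRoot.mk F (C (P.coeff 0)) := by
            rw [AlgEquiv.commutes eqv.symm, AdjoinRoot.algebraMap_eq]
            rfl
          rw [map_sub, hA, hB, ← map_sub]
        rw [h1, AdjoinRoot.modByMonicHom_mk]
        rw [modByMonic_eq_self_iff hFm, hdegF]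
        apply lt_of_le_of_lt (degree_sub_le _ _)
        apply max_lt
        · exact lt_of_le_of_lt degree_le_natDegree
            (by exact_mod_cast WithBot.coe_lt_coe.mpr (hrepdeg (eqv.symm x)))
        · exact lt_of_le_of_lt degree_C_le (by exact_mod_cast WithBot.coe_lt_coe.mpr hp.pos)
      have hltone : w (x - algebraMap K₀ ↥L (P.coeff 0)) < 1 := by
        rw [hwx, hsubrep]
        have hb1 : (⊥ : Γ) < 1 := by
          rw [show (⊥ : Γ) = 0 from le_antisymm bot_le zero_le']
          exact zero_lt_one
        rw [gaussV, Finset.sup_lt_iff hb1]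
        intro i hi
        rw [Finset.mem_range] at hi
        rcases Nat.eq_zero_or_pos i with rfl | hipos
        · simp
        · rw [coeff_sub, coeff_C, if_neg hipos.ne', sub_zero]
          rcases eq_or_ne (P.coeff i) 0 with hc | hc
          · rw [hc, map_zero, zero_mul]
            exact zero_lt_one
          · have hle1 : v₀ (P.coeff i) * (γ : Γ) ^ i ≤ 1 :=
              le_trans (gaussV_term_le v₀ γ hi) hPle
            apply lt_of_le_of_ne hle1
            intro heq1
            have hvc : v₀ (P.coeff i) ≠ 0 := by simpa using hc
            have hmemi : γ ^ i ∈ valueGroupOf v₀ := by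
              have huu : Units.mk0 (v₀ (P.coeff i)) hvc * γ ^ i = 1 := by
                apply Units.ext
                push_cast
                exact heq1
              have : γ ^ i = (Units.mk0 (v₀ (P.coeff i)) hvc)⁻¹ := by
                rw [eq_inv_iff_mul_eq_one, mul_comm]
                exact huu
              rw [this]
              exact inv_mem ((mem_valueGroupOf_iff v₀).mpr ⟨P.coeff i, hc, rfl⟩)
            have hdvd := pow_mem_imp_dvd v₀ hp hγ hγp hmemi
            exact absurd (Nat.eq_zero_of_dvd_of_lt hdvd hi) hipos.ne'
      have hmemMI : y - ι a ∈ IsLocalRing.maximalIdeal Ow := by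
        rw [val_mem_maximalIdeal_iff]
        have : (↑(y - ι a) : ↥L) = x - algebraMap K₀ ↥L (P.coeff 0) := by
          push_cast
          rw [hιval]
        rw [this]
        exact hltone
      refine ⟨IsLocalRing.residue O₀ a, ?_⟩
      rw [hφ, ResidueField.map_residue]
      have h9 : IsLocalRing.residue Ow y - IsLocalRing.residue Ow (ι a) = 0 := by
        rw [← RingHom.map_sub]
        exact Ideal.Quotient.eq_zero_iff_mem.mpr hmemMI
      exact (sub_eq_zero.mp h9).symm
    exact ⟨(RingEquiv.ofBijective φ ⟨hinj, hsurj⟩).symm⟩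
  exact ⟨w, hcomap, huniq, hwb, hvg, hres⟩
end

section
/- Let K be a perfectoid field of residue characteristic p with valuation v. The tilt K^♭ = lim_{x ↦ x^p} K, i.e. the set of sequences (x_n)_{n∈ω} ∈ K^ω with x_{n+1}^p = x_n, with coordinatewise multiplication and with addition (x_n)+(y_n) = (z_n) where z_n = lim_{m→∞}(x_{n+m}+y_{n+m})^{p^m}, is a perfect field of characteristic p. -/
set_option synthInstance.maxHeartbeats 1000000

open Filter

/-- The underlying set of the tilt of `K`: sequences `(x_n)` in `K` with `x_{n+1}^p = x_n`. -/
def TiltCarrier (K : Type*) [Field K] (p : ℕ) : Type _ :=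
  {f : ℕ → K // ∀ n, f (n + 1) ^ p = f n}

/-- The assertion that a field structure on the tilt of `K` has coordinatewise
multiplication, addition given by `((x_n) + (y_n))_n = lim_m (x_{n+m} + y_{n+m})^{p^m}`,
characteristic `p`, and bijective Frobenius (perfectness). -/
def TiltFieldSpec (K : Type*) [Field K] [Valued K NNReal] (p : ℕ)
    (F : Field (TiltCarrier K p)) : Prop :=
  letI := F
  (∀ a b : TiltCarrier K p, (a * b).val = fun n => a.val n * b.val n) ∧
  (∀ a b : TiltCarrier K p, ∀ n : ℕ,
    Tendsto (fun m : ℕ => (a.val (n + m) + b.val (n + m)) ^ p ^ m) atTop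
      (nhds ((a + b).val n))) ∧
  CharP (TiltCarrier K p) p ∧
  Function.Bijective (fun x : TiltCarrier K p => x ^ p)

open scoped NNReal

namespace TiltAux

variable {K : Type*} [Field K] [Valued K NNReal] {p : ℕ}

lemma v_nat_le (k : ℕ) : Valued.v ((k : K)) ≤ 1 := by
  induction k with
  | zero => simp
  | succ n ih =>
    push_cast
    refine le_trans (Valued.v.map_add _ _) (max_le ih (by simp))

-- L1
lemma val_pow_sub_pow_le (hp : p.Prime) {x y : K} (hx : Valued.v x ≤ 1) (hy : Valued.v y ≤ 1)
    (hd : Valued.v (x - y) ≤ Valued.v ((p : ℕ) : K)) :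
    Valued.v (x ^ p - y ^ p) ≤ Valued.v ((p : ℕ) : K) * Valued.v (x - y) := by
  have hvd : Valued.v (x - y) ≤ 1 := hd.trans (v_nat_le p)
  have key : x ^ p - y ^ p
      = (x - y) ^ p + ((p : ℕ) : K) *
          ∑ k ∈ Finset.Ioo 0 p, y ^ k * (x - y) ^ (p - k) * ↑(p.choose k / p) := by
    have h := add_pow_prime_eq' hp y (x - y)
    rw [add_sub_cancel] at h
    rw [h]; ring
  rw [key]
  refine le_trans (Valued.v.map_add _ _) (max_le ?_ ?_)
  · rw [Valuation.map_pow]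
    have hps : p - 1 + 1 = p := by have := hp.two_le; omega
    have h1 : Valued.v (x - y) ^ p = Valued.v (x - y) ^ (p - 1) * Valued.v (x - y) := by
      rw [← pow_succ, hps]
    rw [h1]
    refine mul_le_mul_left ?_ _
    calc Valued.v (x - y) ^ (p - 1) ≤ Valued.v ((p : ℕ) : K) ^ (p - 1) := by gcongr
      _ ≤ Valued.v ((p : ℕ) : K) ^ 1 :=
          pow_le_pow_of_le_one zero_le (v_nat_le p) (by have := hp.two_le; omega)
      _ = Valued.v ((p : ℕ) : K) := pow_one _
  · rw [Valuation.map_mul]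
    refine mul_le_mul_right ?_ _
    refine Valuation.map_sum_le _ fun i hi => ?_
    rw [Finset.mem_Ioo] at hi
    rw [Valuation.map_mul, Valuation.map_mul, Valuation.map_pow, Valuation.map_pow]
    calc Valued.v y ^ i * Valued.v (x - y) ^ (p - i) * Valued.v ((Nat.cast : ℕ → K) (p.choose i / p))
        ≤ 1 * Valued.v (x - y) ^ (p - i) * 1 := by
          gcongr
          · exact pow_le_one' hy i
          · exact v_nat_le _
      _ = Valued.v (x - y) ^ (p - i) := by ring
      _ ≤ Valued.v (x - y) ^ 1 := pow_le_pow_of_le_one zero_le hvd (by omega)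
      _ = Valued.v (x - y) := pow_one _

-- L2
lemma val_pow_pow_sub_le (hp : p.Prime) {x y : K} (hx : Valued.v x ≤ 1) (hy : Valued.v y ≤ 1)
    (hd : Valued.v (x - y) ≤ Valued.v ((p : ℕ) : K)) (m : ℕ) :
    Valued.v (x ^ p ^ m - y ^ p ^ m) ≤ Valued.v ((p : ℕ) : K) ^ m * Valued.v (x - y) := by
  induction m with
  | zero => simp
  | succ m ih =>
    have hxm : Valued.v (x ^ p ^ m) ≤ 1 := by rw [Valuation.map_pow]; exact pow_le_one' hx _
    have hym : Valued.v (y ^ p ^ m) ≤ 1 := by rw [Valuation.map_pow]; exact pow_le_one' hy _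
    have hdm : Valued.v (x ^ p ^ m - y ^ p ^ m) ≤ Valued.v ((p : ℕ) : K) :=
      le_trans ih (by
        calc Valued.v ((p:ℕ):K) ^ m * Valued.v (x - y) ≤ 1 * Valued.v ((p:ℕ):K) := by
              gcongr
              · exact pow_le_one' (v_nat_le p) m
          _ = _ := one_mul _)
    have h := val_pow_sub_pow_le hp hxm hym hdm
    rw [← pow_mul, ← pow_mul, ← pow_succ] at h
    calc Valued.v (x ^ p ^ (m+1) - y ^ p ^ (m+1))
        ≤ Valued.v ((p:ℕ):K) * Valued.v (x ^ p ^ m - y ^ p ^ m) := h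
      _ ≤ Valued.v ((p:ℕ):K) * (Valued.v ((p:ℕ):K) ^ m * Valued.v (x - y)) := by gcongr
      _ = Valued.v ((p:ℕ):K) ^ (m+1) * Valued.v (x - y) := by ring

-- freshman
lemma freshman (hp : p.Prime) {x y : K} (hx : Valued.v x ≤ 1) (hy : Valued.v y ≤ 1) :
    Valued.v ((x + y) ^ p - (x ^ p + y ^ p)) ≤ Valued.v ((p : ℕ) : K) := by
  have h := add_pow_prime_eq' hp x y
  have key : (x + y) ^ p - (x ^ p + y ^ p)
      = ((p : ℕ) : K) * ∑ k ∈ Finset.Ioo 0 p, x ^ k * y ^ (p - k) * ↑(p.choose k / p) := by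
    rw [h]; ring
  rw [key, Valuation.map_mul]
  calc Valued.v ((p:ℕ):K) * Valued.v (∑ k ∈ Finset.Ioo 0 p, x ^ k * y ^ (p - k) * ((p.choose k / p : ℕ) : K))
      ≤ Valued.v ((p:ℕ):K) * 1 := by
        refine mul_le_mul_right (Valuation.map_sum_le _ fun i hi => ?_) _
        rw [Valuation.map_mul, Valuation.map_mul, Valuation.map_pow, Valuation.map_pow]
        calc Valued.v x ^ i * Valued.v y ^ (p - i) * Valued.v ((Nat.cast : ℕ → K) (p.choose i / p))
            ≤ 1 * 1 * 1 := by
              gcongr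
              · exact pow_le_one' hx _
              · exact pow_le_one' hy _
              · exact v_nat_le _
          _ = 1 := by ring
    _ = Valued.v ((p:ℕ):K) := mul_one _


lemma cauchySeq_of_val {c : ℕ → K} {r : ℝ≥0} (hr : r < 1)
    (h : ∀ m, Valued.v (c (m + 1) - c m) ≤ r ^ (m + 1)) : CauchySeq c := by
  have hstep : ∀ m k, Valued.v (c (m + k) - c m) ≤ r ^ (m + 1) := by
    intro m k
    induction k with
    | zero => simp
    | succ k ih =>
      have heq : c (m + (k + 1)) - c m = (c (m + k + 1) - c (m + k)) + (c (m + k) - c m) := by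
        have : m + (k + 1) = m + k + 1 := rfl
        rw [this]; ring
      rw [heq]
      refine le_trans (Valued.v.map_add _ _) (max_le ?_ ih)
      refine le_trans (h (m + k)) ?_
      exact pow_le_pow_of_le_one zero_le hr.le (by omega)
  rw [(Valued.hasBasis_uniformity K NNReal).cauchySeq_iff]
  rintro γ -
  have hγ : (0 : ℝ≥0) < MonoidWithZeroHom.ValueGroup₀.embedding γ.1 := pos_iff_ne_zero.mpr (fun h => γ.ne_zero
    (MonoidWithZeroHom.ValueGroup₀.embedding_injective (h.trans (map_zero _).symm)))
  obtain ⟨N, hN⟩ := ((NNReal.tendsto_pow_atTop_nhds_zero_of_lt_one hr).eventually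
    (gt_mem_nhds hγ)).exists_forall_of_atTop
  refine ⟨N, fun m hm n hn => ?_⟩
  show Valued.v.restrict (c n - c m) < γ.1
  rw [Valuation.restrict_lt_iff_lt_embedding]
  rcases le_total m n with hmn | hmn
  · obtain ⟨k, rfl⟩ := Nat.exists_eq_add_of_le hmn
    exact lt_of_le_of_lt (le_trans (hstep m k)
      (pow_le_pow_of_le_one zero_le hr.le (by omega))) (hN (N + 1) (by omega))
  · obtain ⟨k, rfl⟩ := Nat.exists_eq_add_of_le hmn
    rw [Valuation.map_sub_swap]
    exact lt_of_le_of_lt (le_trans (hstep n k)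
      (pow_le_pow_of_le_one zero_le hr.le (by omega))) (hN (N + 1) (by omega))

lemma isClosed_ball (c : K) (γ : ℝ≥0) : IsClosed {z : K | Valued.v (z - c) ≤ γ} := by
  have : {z : K | Valued.v (z - c) ≤ γ} = {z : K | γ < Valued.v (z - c)}ᶜ := by
    ext z; simp [not_lt]
  rw [this]
  refine IsOpen.isClosed_compl ?_
  rw [isOpen_iff_mem_nhds]
  intro z hz
  rw [Valued.mem_nhds]
  have h0 : Valued.v (z - c) ≠ 0 := fun h => by
    rw [Set.mem_setOf_eq, h] at hz; exact (not_lt_of_ge zero_le) hz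
  refine ⟨Units.mk0 (Valued.v.restrict (z - c)) (fun h => h0 (by
    have := Valuation.embedding_restrict (v := Valued.v) (z - c)
    rw [h, map_zero] at this; exact this.symm)), fun w hw => ?_⟩
  replace hw : Valued.v (w - z) < Valued.v (z - c) := by
    simpa [Valuation.restrict_lt_iff_lt_embedding] using hw
  have : Valued.v (w - c) = Valued.v (z - c) := by
    have heq : w - c = (w - z) + (z - c) := by ring
    rw [heq]
    exact Valuation.map_add_eq_of_lt_right _ hw
  simpa [Set.mem_setOf_eq, this] using hz

lemma val_limit_le {z : ℕ → K} {L : K} (hz : Tendsto z atTop (nhds L)) (c : K) (γ : ℝ≥0)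
    (h : ∀ m, Valued.v (z m - c) ≤ γ) : Valued.v (L - c) ≤ γ :=
  (isClosed_ball c γ).mem_of_tendsto hz (Eventually.of_forall h)

lemma tendsto_zero_of_val {z : ℕ → K} {u : ℕ → ℝ≥0} (h : ∀ m, Valued.v (z m) ≤ u m)
    (hu : Tendsto u atTop (nhds 0)) : Tendsto z atTop (nhds (0 : K)) := by
  rw [(Valued.hasBasis_nhds_zero K NNReal).tendsto_right_iff]
  rintro γ -
  have hγ : (0 : ℝ≥0) < MonoidWithZeroHom.ValueGroup₀.embedding γ.1 := pos_iff_ne_zero.mpr (fun h => γ.ne_zero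
    (MonoidWithZeroHom.ValueGroup₀.embedding_injective (h.trans (map_zero _).symm)))
  filter_upwards [hu.eventually (gt_mem_nhds hγ)] with m hm
  show Valued.v.restrict (z m) < γ.1
  rw [Valuation.restrict_lt_iff_lt_embedding]
  exact lt_of_le_of_lt (h m) hm

lemma cauchy_pow_seq (hp : p.Prime) (hvp : Valued.v ((p : ℕ) : K) < 1) (c : ℕ → K)
    (hc1 : ∀ m, Valued.v (c m) ≤ 1)
    (hcc : ∀ m, Valued.v (c (m + 1) ^ p - c m) ≤ Valued.v ((p : ℕ) : K)) :
    CauchySeq (fun m => c m ^ p ^ m) := by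
  refine cauchySeq_of_val hvp fun m => ?_
  have hX : Valued.v (c (m + 1) ^ p) ≤ 1 := by
    rw [Valuation.map_pow]; exact pow_le_one' (hc1 _) _
  have key := val_pow_pow_sub_le hp hX (hc1 m) (hcc m) m
  rw [← pow_mul, ← pow_succ'] at key
  refine le_trans key ?_
  calc Valued.v ((p:ℕ):K) ^ m * Valued.v (c (m+1) ^ p - c m)
      ≤ Valued.v ((p:ℕ):K) ^ m * Valued.v ((p:ℕ):K) := mul_le_mul_right (hcc m) _
    _ = Valued.v ((p:ℕ):K) ^ (m + 1) := by rw [pow_succ]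

lemma val_pow_seq_sub_zero (hp : p.Prime) (c : ℕ → K)
    (hc1 : ∀ m, Valued.v (c m) ≤ 1)
    (hcc : ∀ m, Valued.v (c (m + 1) ^ p - c m) ≤ Valued.v ((p : ℕ) : K)) (m : ℕ) :
    Valued.v (c m ^ p ^ m - c 0) ≤ Valued.v ((p : ℕ) : K) := by
  induction m with
  | zero => simp
  | succ m ih =>
    have heq : c (m+1) ^ p ^ (m+1) - c 0
        = (c (m+1) ^ p ^ (m+1) - c m ^ p ^ m) + (c m ^ p ^ m - c 0) := by ring
    rw [heq]
    refine le_trans (Valued.v.map_add _ _) (max_le ?_ ih)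
    have hX : Valued.v (c (m + 1) ^ p) ≤ 1 := by
      rw [Valuation.map_pow]; exact pow_le_one' (hc1 _) _
    have key := val_pow_pow_sub_le hp hX (hc1 m) (hcc m) m
    rw [← pow_mul, ← pow_succ'] at key
    refine le_trans key ?_
    calc Valued.v ((p:ℕ):K) ^ m * Valued.v (c (m+1) ^ p - c m)
        ≤ 1 * Valued.v ((p:ℕ):K) := by
          gcongr
          · exact pow_le_one' (v_nat_le p) m
          · exact hcc m
      _ = _ := one_mul _

lemma shift_pow (a : TiltCarrier K p) (n m : ℕ) : a.val (n + m) ^ p ^ m = a.val n := by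
  induction m with
  | zero => simp
  | succ m ih =>
    rw [pow_succ', pow_mul]
    have : a.val (n + (m + 1)) ^ p = a.val (n + m) := a.2 (n + m)
    rw [this, ih]

lemma val_le_one_of_zero (hp : p.Prime) (a : TiltCarrier K p) (h : Valued.v (a.val 0) ≤ 1) (n : ℕ) :
    Valued.v (a.val n) ≤ 1 := by
  by_contra hlt
  rw [not_le] at hlt
  have h1 : a.val n ^ p ^ n = a.val 0 := by
    have := shift_pow a 0 n; rwa [Nat.zero_add] at this
  have : (1:ℝ≥0) < Valued.v (a.val 0) := by
    rw [← h1, Valuation.map_pow]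
    exact one_lt_pow₀ hlt (pow_ne_zero n hp.ne_zero)
  exact absurd h (not_le.mpr this)

lemma mem_of_tendsto_shift (z : ℕ → ℕ → K) (L : ℕ → K)
    (hz : ∀ n, Tendsto (fun m => z n m) atTop (nhds (L n)))
    (hcompat : ∀ n m, z (n + 1) m ^ p = z n (m + 1)) (n : ℕ) : L (n + 1) ^ p = L n := by
  have h1 : Tendsto (fun m => z (n + 1) m ^ p) atTop (nhds (L (n + 1) ^ p)) := (hz (n + 1)).pow p
  have h2 : Tendsto (fun m => z n (m + 1)) atTop (nhds (L n)) := by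
    have := (hz n).comp (tendsto_add_atTop_nat 1)
    exact this
  have h3 : (fun m => z (n + 1) m ^ p) = fun m => z n (m + 1) := funext fun m => hcompat n m
  rw [h3] at h1
  exact tendsto_nhds_unique h1 h2

end TiltAux

set_option maxHeartbeats 4000000 in
/-- Let `K` be a perfectoid field of residue characteristic `p`: a complete valued field
with value group a dense subgroup of `ℝ` (multiplicatively, of `ℝ≥0`), with `p` topologically
nilpotent and Frobenius surjective on `O_K/(p)`. Then the tilt
`K^♭ = lim_{x ↦ x^p} K` is a perfect field of characteristic `p`, with coordinatewise
multiplication and the limit formula for addition. -/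
theorem tilt_is_perfect_field_of_char_p
    (p : ℕ) (hp : p.Prime) (K : Type*) [Field K] [Valued K NNReal] [CompleteSpace K]
    (hdense : Dense (Set.range fun x : Kˣ => Valued.v (x : K)))
    (hchar : CharP (IsLocalRing.ResidueField (Valued.v.valuationSubring : ValuationSubring K)) p)
    (hfrob : ∀ x : (Valued.v.valuationSubring : ValuationSubring K) ⧸
        (Ideal.span {((p : ℕ) : (Valued.v.valuationSubring : ValuationSubring K))}),
      ∃ y, y ^ p = x) :
    ∃ F : Field (TiltCarrier K p), TiltFieldSpec K p F := by
  classical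
  -- Step 1 : v p < 1
  have hvple : Valued.v ((p : ℕ) : K) ≤ 1 := TiltAux.v_nat_le p
  have hvp : Valued.v ((p : ℕ) : K) < 1 := by
    rcases lt_or_eq_of_le hvple with h | h
    · exact h
    · exfalso
      have hres : ((p : ℕ) : IsLocalRing.ResidueField
          (Valued.v.valuationSubring : ValuationSubring K)) = 0 := CharP.cast_eq_zero _ p
      have hres2 : IsLocalRing.residue (Valued.v.valuationSubring : ValuationSubring K)
          ((p : ℕ) : (Valued.v.valuationSubring : ValuationSubring K)) = 0 := by
        rw [map_natCast]; exact hres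
      rw [IsLocalRing.residue_eq_zero_iff] at hres2
      have hne : ((p : ℕ) : K) ≠ 0 := by
        intro h0; rw [h0] at h; simp at h
      have hmem : ((p : ℕ) : K)⁻¹ ∈ (Valued.v.valuationSubring : ValuationSubring K) := by
        show Valued.v (((p : ℕ) : K)⁻¹) ≤ 1
        rw [map_inv₀, h, inv_one]
      have hunit : IsUnit ((p : ℕ) : (Valued.v.valuationSubring : ValuationSubring K)) := by
        refine IsUnit.of_mul_eq_one ⟨((p : ℕ) : K)⁻¹, hmem⟩ ?_
        apply Subtype.ext
        push_cast
        exact mul_inv_cancel₀ hne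
      exact ((IsLocalRing.mem_maximalIdeal _).mp hres2) hunit
  -- Step 2 : pick a unit value strictly between v p and 1
  obtain ⟨α, hα1, hα2⟩ := exists_between hvp
  obtain ⟨w, hws, hw1, hw2⟩ : ∃ w, (w ∈ Set.range fun x : Kˣ => Valued.v (x : K)) ∧
      Valued.v ((p : ℕ) : K) < w ∧ w < 1 := by
    obtain ⟨w, hws, hw⟩ := hdense.exists_mem_open isOpen_Ioo
      (⟨α, hα1, hα2⟩ : (Set.Ioo (Valued.v ((p : ℕ) : K)) 1).Nonempty)
    exact ⟨w, hws, hw.1, hw.2⟩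
  obtain ⟨u, hu⟩ := hws
  have hu' : Valued.v ((u : Kˣ) : K) = w := hu
  have hx1 : Valued.v ((u : Kˣ) : K) > Valued.v ((p : ℕ) : K) := by rw [hu']; exact hw1
  have hx2 : Valued.v ((u : Kˣ) : K) < 1 := by rw [hu']; exact hw2
  -- Step 3 : tower of p-th roots mod p
  let x₀ : (Valued.v.valuationSubring : ValuationSubring K) := ⟨(u : K), le_of_lt hx2⟩
  let g : ℕ → ((Valued.v.valuationSubring : ValuationSubring K) ⧸
      (Ideal.span {((p : ℕ) : (Valued.v.valuationSubring : ValuationSubring K))})) :=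
    fun n => Nat.rec (Ideal.Quotient.mk _ x₀) (fun _ ih => Classical.choose (hfrob ih)) n
  have hgs : ∀ n, g (n + 1) ^ p = g n := fun n => Classical.choose_spec (hfrob (g n))
  let yO : ℕ → (Valued.v.valuationSubring : ValuationSubring K) := fun n =>
    Nat.rec x₀ (fun m _ => Classical.choose (Ideal.Quotient.mk_surjective (g (m + 1)))) n
  have hyO : ∀ n, Ideal.Quotient.mk _ (yO n) = g n := by
    intro n
    cases n with
    | zero => rfl
    | succ m => exact Classical.choose_spec (Ideal.Quotient.mk_surjective (g (m + 1)))
  let y : ℕ → K := fun n => Subtype.val (yO n)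
  have hyint : ∀ n, Valued.v (y n) ≤ 1 := fun n => (yO n).2
  have hycompat : ∀ n, Valued.v (y (n + 1) ^ p - y n) ≤ Valued.v ((p : ℕ) : K) := by
    intro n
    have hmem : yO (n + 1) ^ p - yO n ∈
        Ideal.span {((p : ℕ) : (Valued.v.valuationSubring : ValuationSubring K))} := by
      rw [← Ideal.Quotient.eq_zero_iff_mem, map_sub, map_pow, hyO (n+1), hyO n, hgs, sub_self]
    rw [Ideal.mem_span_singleton] at hmem
    obtain ⟨c, hc⟩ := hmem
    have hcK : y (n + 1) ^ p - y n = ((p : ℕ) : K) * (c : K) := by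
      have h2 := congrArg Subtype.val hc
      push_cast at h2
      exact h2
    rw [hcK, Valuation.map_mul]
    calc Valued.v ((p : ℕ) : K) * Valued.v ((c : K)) ≤ Valued.v ((p : ℕ) : K) * 1 :=
          mul_le_mul_right c.2 _
      _ = _ := mul_one _
  -- Step 4 : the element t of the tilt with 0 < v t0 < 1
  have hcau : ∀ n, CauchySeq (fun m => y (n + m) ^ p ^ m) := by
    intro n
    exact TiltAux.cauchy_pow_seq hp hvp (fun m => y (n + m)) (fun m => hyint _)
      (fun m => hycompat (n + m))
  let t' : ℕ → K := fun n => limUnder atTop (fun m => y (n + m) ^ p ^ m)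
  have ht'tend : ∀ n, Tendsto (fun m => y (n + m) ^ p ^ m) atTop (nhds (t' n)) := by
    intro n
    obtain ⟨L, hL⟩ := cauchySeq_tendsto_of_complete (hcau n)
    have hEq : t' n = L := hL.limUnder_eq
    rwa [hEq]
  have ht'mem : ∀ n, t' (n + 1) ^ p = t' n := by
    refine TiltAux.mem_of_tendsto_shift (fun n m => y (n + m) ^ p ^ m) t' ht'tend ?_
    intro n m
    have hidx : n + 1 + m = n + (m + 1) := by omega
    rw [← pow_mul, ← pow_succ, hidx]
  have ht'0 : Valued.v (t' 0) = Valued.v ((u : Kˣ) : K) := by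
    have happ : Valued.v (t' 0 - y 0) ≤ Valued.v ((p : ℕ) : K) := by
      refine TiltAux.val_limit_le (ht'tend 0) _ _ (fun m => ?_)
      exact TiltAux.val_pow_seq_sub_zero hp (fun m => y (0 + m)) (fun m => hyint _)
        (fun m => hycompat (0 + m)) m
    have hy0 : y 0 = ((u : Kˣ) : K) := rfl
    rw [hy0] at happ
    have hEq : t' 0 = (t' 0 - ((u : Kˣ) : K)) + ((u : Kˣ) : K) := by ring
    rw [hEq]
    exact Valuation.map_add_eq_of_lt_right _ (lt_of_le_of_lt happ hx1)
  have ht'0pos : 0 < Valued.v (t' 0) := by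
    rw [ht'0]; exact lt_of_le_of_lt zero_le hx1
  have ht'0lt : Valued.v (t' 0) < 1 := by rw [ht'0]; exact hx2
  let t : TiltCarrier K p := ⟨t', ht'mem⟩
  have ht'ne : ∀ n, t' n ≠ 0 := by
    intro n h0
    have h1 : t' n ^ p ^ n = t' 0 := by
      have h2 := TiltAux.shift_pow t 0 n
      simpa using h2
    rw [h0, zero_pow (pow_ne_zero n hp.ne_zero)] at h1
    rw [← h1] at ht'0pos
    simp at ht'0pos
  have ht'int : ∀ n, Valued.v (t' n) ≤ 1 := TiltAux.val_le_one_of_zero hp t ht'0lt.le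
  have hchoose : ∀ M : ℝ≥0, ∃ k : ℕ, Valued.v (t' 0) ^ k * M < 1 := by
    intro M
    have h0 : Tendsto (fun k : ℕ => Valued.v (t' 0) ^ k * M) atTop (nhds (0 * M)) :=
      (NNReal.tendsto_pow_atTop_nhds_zero_of_lt_one ht'0lt).mul_const M
    rw [zero_mul] at h0
    exact (h0.eventually (gt_mem_nhds one_pos)).exists
  let tk : ℕ → TiltCarrier K p := fun k => ⟨fun n => t' n ^ k, fun n => by
    rw [← pow_mul, mul_comm, pow_mul, ht'mem]⟩
  -- Step 5 : addition is well-defined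
  have hexists : ∀ a b : TiltCarrier K p, ∀ n, ∃ L,
      Tendsto (fun m => (a.val (n + m) + b.val (n + m)) ^ p ^ m) atTop (nhds L) := by
    intro a b n
    obtain ⟨k, hk⟩ := hchoose (max (Valued.v (a.val 0)) (Valued.v (b.val 0)))
    have hka : Valued.v (t' 0 ^ k * a.val 0) ≤ 1 := by
      rw [Valuation.map_mul, Valuation.map_pow]
      exact le_of_lt (lt_of_le_of_lt (mul_le_mul_right (le_max_left _ _) _) hk)
    have hkb : Valued.v (t' 0 ^ k * b.val 0) ≤ 1 := by
      rw [Valuation.map_mul, Valuation.map_pow]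
      exact le_of_lt (lt_of_le_of_lt (mul_le_mul_right (le_max_right _ _) _) hk)
    let a' : TiltCarrier K p := ⟨fun j => t' j ^ k * a.val j, fun j => by
      rw [mul_pow, ← pow_mul, mul_comm k p, pow_mul, ht'mem, a.2]⟩
    let b' : TiltCarrier K p := ⟨fun j => t' j ^ k * b.val j, fun j => by
      rw [mul_pow, ← pow_mul, mul_comm k p, pow_mul, ht'mem, b.2]⟩
    have ha'int : ∀ j, Valued.v (a'.val j) ≤ 1 := TiltAux.val_le_one_of_zero hp a' hka
    have hb'int : ∀ j, Valued.v (b'.val j) ≤ 1 := TiltAux.val_le_one_of_zero hp b' hkb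
    have hcau' : CauchySeq (fun m => (a'.val (n + m) + b'.val (n + m)) ^ p ^ m) := by
      refine TiltAux.cauchy_pow_seq hp hvp (fun m => a'.val (n + m) + b'.val (n + m))
        (fun m => ?_) (fun m => ?_)
      · exact le_trans (Valued.v.map_add _ _) (max_le (ha'int _) (hb'int _))
      · show Valued.v ((a'.val (n + m + 1) + b'.val (n + m + 1)) ^ p
            - (a'.val (n + m) + b'.val (n + m))) ≤ Valued.v ((p : ℕ) : K)
        have heq : a'.val (n + m) + b'.val (n + m)
            = a'.val (n + m + 1) ^ p + b'.val (n + m + 1) ^ p := by rw [a'.2, b'.2]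
        rw [heq]
        exact TiltAux.freshman hp (ha'int _) (hb'int _)
    obtain ⟨L, hL⟩ := cauchySeq_tendsto_of_complete hcau'
    refine ⟨(t' n ^ k)⁻¹ * L, ?_⟩
    have hterm : ∀ m, (a.val (n + m) + b.val (n + m)) ^ p ^ m
        = (t' n ^ k)⁻¹ * ((a'.val (n + m) + b'.val (n + m)) ^ p ^ m) := by
      intro m
      have h1 : a'.val (n + m) + b'.val (n + m)
          = t' (n + m) ^ k * (a.val (n + m) + b.val (n + m)) := by
        show t' (n + m) ^ k * a.val (n + m) + t' (n + m) ^ k * b.val (n + m) = _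
        ring
      rw [h1, mul_pow]
      have h2 : (t' (n + m) ^ k) ^ p ^ m = t' n ^ k := by
        rw [← pow_mul, mul_comm k (p ^ m), pow_mul]
        have h3 := TiltAux.shift_pow t n m
        rw [h3]
      rw [h2, inv_mul_cancel_left₀ (pow_ne_zero k (ht'ne n))]
    have h4 := hL.const_mul ((t' n ^ k)⁻¹)
    exact Tendsto.congr (fun m => (hterm m).symm) h4
  have htendA : ∀ (a b : TiltCarrier K p) (n : ℕ),
      Tendsto (fun m => (a.val (n + m) + b.val (n + m)) ^ p ^ m) atTop
        (nhds (limUnder atTop (fun m => (a.val (n + m) + b.val (n + m)) ^ p ^ m))) := by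
    intro a b n
    obtain ⟨L, hL⟩ := hexists a b n
    rwa [hL.limUnder_eq]
  let addT : TiltCarrier K p → TiltCarrier K p → TiltCarrier K p := fun a b =>
    ⟨fun n => limUnder atTop (fun m => (a.val (n + m) + b.val (n + m)) ^ p ^ m), by
      refine TiltAux.mem_of_tendsto_shift
        (fun n m => (a.val (n + m) + b.val (n + m)) ^ p ^ m) _ (htendA a b) ?_
      intro n m
      have hidx : n + 1 + m = n + (m + 1) := by omega
      rw [← pow_mul, ← pow_succ, hidx]⟩
  have haddEq : ∀ (a b w : TiltCarrier K p),
      (∀ n, Tendsto (fun m => (a.val (n + m) + b.val (n + m)) ^ p ^ m) atTop (nhds (w.val n))) →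
      addT a b = w := by
    intro a b w hw
    apply Subtype.ext; funext n
    exact tendsto_nhds_unique (htendA a b n) (hw n)
  -- Step 6 : instances
  letI instZero : Zero (TiltCarrier K p) := ⟨⟨fun _ => 0, fun _ => zero_pow hp.ne_zero⟩⟩
  letI instOne : One (TiltCarrier K p) := ⟨⟨fun _ => 1, fun _ => one_pow p⟩⟩
  letI instMul : Mul (TiltCarrier K p) :=
    ⟨fun a b => ⟨fun n => a.val n * b.val n, fun n => by rw [mul_pow, a.2, b.2]⟩⟩
  letI instAdd : Add (TiltCarrier K p) := ⟨addT⟩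
  letI instNeg : Neg (TiltCarrier K p) := ⟨fun a => ⟨fun n => (-1 : K) ^ p * a.val n, fun n => by
    rw [mul_pow, ← pow_mul, a.2]
    congr 1
    rcases hp.eq_two_or_odd' with h2 | hodd
    · subst h2; norm_num
    · have h1 : (-1 : K) ^ p = -1 := hodd.neg_one_pow
      rw [pow_mul, h1]
      exact h1⟩⟩
  have haddcomm : ∀ a b : TiltCarrier K p, a + b = b + a := by
    intro a b
    show addT a b = addT b a
    refine haddEq a b (addT b a) (fun n => ?_)
    refine Tendsto.congr (fun m => ?_) (htendA b a n)
    rw [add_comm (b.val (n + m))]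
  have hzeroadd : ∀ a : TiltCarrier K p, 0 + a = a := by
    intro a
    show addT 0 a = a
    refine haddEq _ _ a (fun n => ?_)
    have hEq : (fun m => (((0 : TiltCarrier K p)).val (n + m) + a.val (n + m)) ^ p ^ m)
        = fun _ => a.val n := by
      funext m
      show ((0 : K) + a.val (n + m)) ^ p ^ m = a.val n
      rw [zero_add]
      exact TiltAux.shift_pow a n m
    rw [hEq]
    exact tendsto_const_nhds
  have haddzero : ∀ a : TiltCarrier K p, a + 0 = a := by
    intro a; rw [haddcomm a 0]; exact hzeroadd a
  have hnegadd : ∀ a : TiltCarrier K p, -a + a = 0 := by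
    intro a
    show addT (-a) a = 0
    refine haddEq _ _ 0 (fun n => ?_)
    have hseq : ∀ m, ((-a).val (n + m) + a.val (n + m)) ^ p ^ m
        = ((-1 : K) ^ p + 1) ^ p ^ m * a.val n := by
      intro m
      show ((-1 : K) ^ p * a.val (n + m) + a.val (n + m)) ^ p ^ m = _
      have h1 : (-1 : K) ^ p * a.val (n + m) + a.val (n + m)
          = ((-1 : K) ^ p + 1) * a.val (n + m) := by ring
      rw [h1, mul_pow, TiltAux.shift_pow a n m]
    show Tendsto _ atTop (nhds (0 : K))
    rcases hp.eq_two_or_odd' with h2 | hodd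
    · subst h2
      have hcoef : ((-1 : K) ^ 2 + 1) = ((2 : ℕ) : K) := by norm_num
      refine TiltAux.tendsto_zero_of_val
        (u := fun m => Valued.v (((2 : ℕ) : K)) ^ m * Valued.v (a.val n)) (fun m => ?_) ?_
      · rw [hseq m, Valuation.map_mul, Valuation.map_pow, hcoef]
        refine mul_le_mul_left ?_ _
        refine pow_le_pow_of_le_one zero_le (TiltAux.v_nat_le 2) ?_
        exact le_of_lt (Nat.lt_two_pow_self)
      · have h3 := (NNReal.tendsto_pow_atTop_nhds_zero_of_lt_one hvp).mul_const
          (Valued.v (a.val n))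
        rwa [zero_mul] at h3
    · have hcoef : ((-1 : K) ^ p + 1) = 0 := by rw [hodd.neg_one_pow]; ring
      have hEq : ∀ m, ((-a).val (n + m) + a.val (n + m)) ^ p ^ m = 0 := by
        intro m
        rw [hseq m, hcoef, zero_pow (pow_ne_zero m hp.ne_zero), zero_mul]
      refine Tendsto.congr (fun m => (hEq m).symm) tendsto_const_nhds
  have hmuladd : ∀ c a b : TiltCarrier K p, c * (a + b) = c * a + c * b := by
    intro c a b
    have hEq : addT (c * a) (c * b) = c * addT a b := by
      refine haddEq _ _ _ (fun n => ?_)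
      have h1 : Tendsto (fun m => c.val n * ((a.val (n + m) + b.val (n + m)) ^ p ^ m)) atTop
          (nhds (c.val n * (addT a b).val n)) := (htendA a b n).const_mul _
      refine Tendsto.congr (fun m => ?_) h1
      show c.val n * _ = ((c.val (n + m) * a.val (n + m)) + (c.val (n + m) * b.val (n + m))) ^ p ^ m
      rw [← mul_add, mul_pow, TiltAux.shift_pow c n m]
    exact hEq.symm
  have hintadd : ∀ a b : TiltCarrier K p, (∀ j, Valued.v (a.val j) ≤ 1) →
      (∀ j, Valued.v (b.val j) ≤ 1) →
      (∀ j, Valued.v ((a + b).val j) ≤ 1) ∧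
      (∀ j, Valued.v ((a + b).val j - (a.val j + b.val j)) ≤ Valued.v ((p : ℕ) : K)) := by
    intro a b ha hb
    have hcompat : ∀ j m, Valued.v ((a.val (j + m + 1) + b.val (j + m + 1)) ^ p
        - (a.val (j + m) + b.val (j + m))) ≤ Valued.v ((p : ℕ) : K) := by
      intro j m
      have heq : a.val (j + m) + b.val (j + m)
          = a.val (j + m + 1) ^ p + b.val (j + m + 1) ^ p := by rw [a.2, b.2]
      rw [heq]
      exact TiltAux.freshman hp (ha _) (hb _)
    constructor
    · intro j
      have h1 : ∀ m, Valued.v ((a.val (j + m) + b.val (j + m)) ^ p ^ m - 0) ≤ 1 := by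
        intro m
        rw [sub_zero, Valuation.map_pow]
        exact pow_le_one' (le_trans (Valued.v.map_add _ _) (max_le (ha _) (hb _))) _
      have h2 := TiltAux.val_limit_le (htendA a b j) 0 1 h1
      rwa [sub_zero] at h2
    · intro j
      refine TiltAux.val_limit_le (htendA a b j) _ _ (fun m => ?_)
      exact TiltAux.val_pow_seq_sub_zero hp (fun m => a.val (j + m) + b.val (j + m))
        (fun m => le_trans (Valued.v.map_add _ _) (max_le (ha _) (hb _)))
        (fun m => hcompat j m) m
  have hassocint : ∀ a b c : TiltCarrier K p, (∀ j, Valued.v (a.val j) ≤ 1) →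
      (∀ j, Valued.v (b.val j) ≤ 1) → (∀ j, Valued.v (c.val j) ≤ 1) →
      (a + b) + c = a + (b + c) := by
    intro a b c ha hb hc
    obtain ⟨hab1, hab2⟩ := hintadd a b ha hb
    obtain ⟨hbc1, hbc2⟩ := hintadd b c hb hc
    show addT (a + b) c = addT a (b + c)
    refine haddEq _ _ _ (fun n => ?_)
    have hR := htendA a (b + c) n
    have hdiff : ∀ m, Valued.v (((a + b).val (n + m) + c.val (n + m)) ^ p ^ m
        - (a.val (n + m) + (b + c).val (n + m)) ^ p ^ m)
        ≤ Valued.v ((p : ℕ) : K) ^ m * Valued.v ((p : ℕ) : K) := by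
      intro m
      have hX : Valued.v ((a + b).val (n + m) + c.val (n + m)) ≤ 1 :=
        le_trans (Valued.v.map_add _ _) (max_le (hab1 _) (hc _))
      have hY : Valued.v (a.val (n + m) + (b + c).val (n + m)) ≤ 1 :=
        le_trans (Valued.v.map_add _ _) (max_le (ha _) (hbc1 _))
      have hXY : Valued.v (((a + b).val (n + m) + c.val (n + m))
          - (a.val (n + m) + (b + c).val (n + m))) ≤ Valued.v ((p : ℕ) : K) := by
        have heq : ((a + b).val (n + m) + c.val (n + m))
            - (a.val (n + m) + (b + c).val (n + m))
            = ((a + b).val (n + m) - (a.val (n + m) + b.val (n + m)))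
              + -((b + c).val (n + m) - (b.val (n + m) + c.val (n + m))) := by ring
        rw [heq]
        refine le_trans (Valued.v.map_add _ _) (max_le (hab2 _) ?_)
        rw [Valuation.map_neg]
        exact hbc2 _
      exact le_trans (TiltAux.val_pow_pow_sub_le hp hX hY hXY m) (mul_le_mul_right hXY _)
    have hzero : Tendsto (fun m => ((a + b).val (n + m) + c.val (n + m)) ^ p ^ m
        - (a.val (n + m) + (b + c).val (n + m)) ^ p ^ m) atTop (nhds (0 : K)) := by
      refine TiltAux.tendsto_zero_of_val hdiff ?_
      have h3 := (NNReal.tendsto_pow_atTop_nhds_zero_of_lt_one hvp).mul_const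
        (Valued.v ((p : ℕ) : K))
      rwa [zero_mul] at h3
    have h2 := hzero.add hR
    rw [zero_add] at h2
    exact Tendsto.congr (fun m => by ring) h2
  have htkinj : ∀ (k : ℕ) (a b : TiltCarrier K p), tk k * a = tk k * b → a = b := by
    intro k a b h
    apply Subtype.ext; funext n
    have h1 := congrArg (fun z : TiltCarrier K p => z.val n) h
    exact mul_left_cancel₀ (pow_ne_zero k (ht'ne n)) h1
  have hscaleint : ∀ (a : TiltCarrier K p) (k : ℕ), Valued.v (t' 0 ^ k * a.val 0) ≤ 1 →
      ∀ j, Valued.v ((tk k * a).val j) ≤ 1 := by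
    intro a k h j
    exact TiltAux.val_le_one_of_zero hp (tk k * a) h j
  have hassoc : ∀ a b c : TiltCarrier K p, a + b + c = a + (b + c) := by
    intro a b c
    obtain ⟨k, hk⟩ := hchoose (max (max (Valued.v (a.val 0)) (Valued.v (b.val 0)))
      (Valued.v (c.val 0)))
    have hka : Valued.v (t' 0 ^ k * a.val 0) ≤ 1 := by
      rw [Valuation.map_mul, Valuation.map_pow]
      exact le_of_lt (lt_of_le_of_lt (mul_le_mul_right
        (le_trans (le_max_left _ _) (le_max_left _ _)) _) hk)
    have hkb : Valued.v (t' 0 ^ k * b.val 0) ≤ 1 := by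
      rw [Valuation.map_mul, Valuation.map_pow]
      exact le_of_lt (lt_of_le_of_lt (mul_le_mul_right
        (le_trans (le_max_right _ _) (le_max_left _ _)) _) hk)
    have hkc : Valued.v (t' 0 ^ k * c.val 0) ≤ 1 := by
      rw [Valuation.map_mul, Valuation.map_pow]
      exact le_of_lt (lt_of_le_of_lt (mul_le_mul_right (le_max_right _ _) _) hk)
    apply htkinj k
    have e1 : tk k * (a + b + c) = (tk k * a + tk k * b) + tk k * c := by
      rw [hmuladd, hmuladd]
    have e2 : tk k * (a + (b + c)) = tk k * a + (tk k * b + tk k * c) := by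
      rw [hmuladd, hmuladd]
    rw [e1, e2]
    exact hassocint _ _ _ (hscaleint a k hka) (hscaleint b k hkb) (hscaleint c k hkc)
  have hmulcomm : ∀ a b : TiltCarrier K p, a * b = b * a :=
    fun a b => Subtype.ext (funext fun n => mul_comm _ _)
  letI instCommRing : CommRing (TiltCarrier K p) :=
    { add := (· + ·)
      add_assoc := hassoc
      zero := 0
      zero_add := hzeroadd
      add_zero := haddzero
      nsmul := nsmulRec
      zsmul := zsmulRec
      neg := Neg.neg
      neg_add_cancel := hnegadd
      add_comm := haddcomm
      mul := (· * ·)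
      mul_assoc := fun a b c => Subtype.ext (funext fun n => mul_assoc _ _ _)
      one := 1
      one_mul := fun a => Subtype.ext (funext fun n => one_mul _)
      mul_one := fun a => Subtype.ext (funext fun n => mul_one _)
      left_distrib := hmuladd
      right_distrib := fun a b c => by
        rw [hmulcomm (a + b) c, hmuladd c a b, hmulcomm c a, hmulcomm c b]
      zero_mul := fun a => Subtype.ext (funext fun n => zero_mul _)
      mul_zero := fun a => Subtype.ext (funext fun n => mul_zero _)
      mul_comm := hmulcomm }
  -- Step 7 : characteristic p
  have hint : ∀ j : ℕ, (∀ n, Valued.v (((j : TiltCarrier K p)).val n) ≤ 1) ∧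
      (∀ n, Valued.v (((j : TiltCarrier K p)).val n - ((j : ℕ) : K))
        ≤ Valued.v ((p : ℕ) : K)) := by
    intro j
    induction j with
    | zero =>
      constructor <;> intro n
      · show Valued.v ((0 : K)) ≤ 1
        simp
      · show Valued.v ((0 : K) - ((0 : ℕ) : K)) ≤ _
        simp
    | succ j ih =>
      have hone : ∀ m, Valued.v ((1 : TiltCarrier K p).val m) ≤ 1 := by
        intro m; show Valued.v ((1 : K)) ≤ 1; simp
      have hcast : ((j + 1 : ℕ) : TiltCarrier K p) = (j : TiltCarrier K p) + 1 := by
        push_cast; ring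
      constructor <;> intro n
      · rw [hcast]
        exact (hintadd _ 1 ih.1 hone).1 n
      · rw [hcast]
        have h1 := (hintadd (j : TiltCarrier K p) 1 ih.1 hone).2 n
        have hone' : (1 : TiltCarrier K p).val n = 1 := rfl
        rw [hone'] at h1
        have hjk : ((j + 1 : ℕ) : K) = ((j : ℕ) : K) + 1 := by push_cast; ring
        have heq : ((j : TiltCarrier K p) + 1).val n - (((j : ℕ) : K) + 1)
            = (((j : TiltCarrier K p) + 1).val n - ((j : TiltCarrier K p).val n + 1))
              + ((j : TiltCarrier K p).val n - ((j : ℕ) : K)) := by ring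
        rw [hjk, heq]
        exact le_trans (Valued.v.map_add _ _) (max_le h1 (ih.2 n))
  have hple : ∀ n, Valued.v (((p : ℕ) : TiltCarrier K p).val n) ≤ Valued.v ((p : ℕ) : K) := by
    intro n
    have h1 := (hint p).2 n
    have hEq : ((p : ℕ) : TiltCarrier K p).val n
        = (((p : ℕ) : TiltCarrier K p).val n - ((p : ℕ) : K)) + ((p : ℕ) : K) := by ring
    rw [hEq]
    exact le_trans (Valued.v.map_add _ _) (max_le h1 le_rfl)
  have hshp : ∀ n, ((p : ℕ) : TiltCarrier K p).val n ^ p ^ n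
      = ((p : ℕ) : TiltCarrier K p).val 0 := by
    intro n
    have h2 := TiltAux.shift_pow ((p : ℕ) : TiltCarrier K p) 0 n
    simpa using h2
  have hp0 : ((p : ℕ) : TiltCarrier K p) = 0 := by
    have hzero : ((p : ℕ) : TiltCarrier K p).val 0 = 0 := by
      by_cases hv0 : Valued.v ((p : ℕ) : K) = 0
      · have h1 := hple 0
        rw [hv0, le_zero_iff] at h1
        exact (Valuation.zero_iff _).mp h1
      · have hle : ∀ n : ℕ, Valued.v (((p : ℕ) : TiltCarrier K p).val 0)
            ≤ Valued.v ((p : ℕ) : K) ^ n := by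
          intro n
          calc Valued.v (((p : ℕ) : TiltCarrier K p).val 0)
              = Valued.v (((p : ℕ) : TiltCarrier K p).val n) ^ p ^ n := by
                rw [← hshp n, Valuation.map_pow]
            _ ≤ Valued.v ((p : ℕ) : K) ^ p ^ n := by gcongr; exact hple n
            _ ≤ Valued.v ((p : ℕ) : K) ^ n := pow_le_pow_of_le_one zero_le
                (TiltAux.v_nat_le p) (le_of_lt (Nat.lt_pow_self hp.one_lt))
        have h5 : Valued.v (((p : ℕ) : TiltCarrier K p).val 0) = 0 := by
          by_contra hne
          have hpos : 0 < Valued.v (((p : ℕ) : TiltCarrier K p).val 0) :=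
            pos_iff_ne_zero.mpr hne
          obtain ⟨n, hn⟩ := ((NNReal.tendsto_pow_atTop_nhds_zero_of_lt_one hvp).eventually
            (gt_mem_nhds hpos)).exists
          exact absurd (hle n) (not_le.mpr hn)
        exact (Valuation.zero_iff _).mp h5
    apply Subtype.ext; funext n
    have h6 := hshp n
    rw [hzero] at h6
    exact (pow_eq_zero_iff (pow_ne_zero n hp.ne_zero)).mp h6
  haveI hnontriv : Nontrivial (TiltCarrier K p) := ⟨⟨0, 1, fun h => by
    have h1 := congrArg (fun z : TiltCarrier K p => z.val 0) h
    exact zero_ne_one (h1 : (0 : K) = 1)⟩⟩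
  haveI hcharP : CharP (TiltCarrier K p) p := by
    have hrc := CharP.ringChar_of_prime_eq_zero hp hp0
    haveI := ringChar.charP (TiltCarrier K p)
    exact CharP.congr _ hrc
  -- Step 8 : field structure
  have hnz : ∀ (a : TiltCarrier K p) (j : ℕ), a.val j ≠ 0 → ∀ n, a.val n ≠ 0 := by
    intro a j hj n
    rcases le_total n j with h | h
    · intro h0
      apply hj
      have h1 := TiltAux.shift_pow a n (j - n)
      rw [show n + (j - n) = j by omega] at h1
      rw [h0] at h1
      exact (pow_eq_zero_iff (pow_ne_zero _ hp.ne_zero)).mp h1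
    · intro h0
      apply hj
      have h1 := TiltAux.shift_pow a j (n - j)
      rw [show j + (n - j) = n by omega] at h1
      rw [← h1, h0, zero_pow (pow_ne_zero _ hp.ne_zero)]
  have hfieldIs : IsField (TiltCarrier K p) := by
    refine ⟨exists_pair_ne _, hmulcomm, ?_⟩
    intro a ha
    have hj : ∃ j, a.val j ≠ 0 := by
      by_contra hall
      push_neg at hall
      exact ha (Subtype.ext (funext fun n => hall n))
    obtain ⟨j, hj⟩ := hj
    have hall := hnz a j hj
    refine ⟨⟨fun n => (a.val n)⁻¹, fun n => ?_⟩, ?_⟩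
    · rw [inv_pow, a.2]
    · apply Subtype.ext; funext n
      show a.val n * (a.val n)⁻¹ = 1
      exact mul_inv_cancel₀ (hall n)
  letI instField : Field (TiltCarrier K p) := hfieldIs.toField
  have hpow : ∀ (x : TiltCarrier K p) (k : ℕ) (n : ℕ), (x ^ k).val n = x.val n ^ k := by
    intro x k
    induction k with
    | zero => intro n; rw [pow_zero, pow_zero]; rfl
    | succ k ih =>
      intro n
      rw [pow_succ, pow_succ]
      show (x ^ k).val n * x.val n = _
      rw [ih]
  have hfrobT : Function.Bijective (fun x : TiltCarrier K p => x ^ p) := by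
    constructor
    · intro x y h
      have hcoord : ∀ n, x.val n ^ p = y.val n ^ p := by
        intro n
        have h1 := congrArg (fun z : TiltCarrier K p => z.val n) h
        simpa [hpow] using h1
      apply Subtype.ext; funext n
      have h1 := hcoord (n + 1)
      rw [x.2, y.2] at h1
      exact h1
    · intro b
      refine ⟨⟨fun n => b.val (n + 1), fun n => b.2 (n + 1)⟩, ?_⟩
      apply Subtype.ext; funext n
      refine (hpow _ p n).trans ?_
      exact b.2 n
  exact ⟨instField, fun a b => rfl, fun a b n => htendA a b n, hcharP, hfrobT⟩
end

section
/- Let K be a perfectoid field with tilt K^♭ and sharp map ♯: K^♭ → K, (x_n) ↦ x_0. Then the map v^♭(x) := v(x^♯) defines a valuation on K^♭, and the value group of v^♭ equals the value group of v. -/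
set_option synthInstance.maxHeartbeats 1000000
set_option maxHeartbeats 1000000

open Filter

/-- The assertion that `v^♭(x) := v(x^♯)` (where `♯` is the projection onto the zeroth
coordinate) is a valuation on the tilt whose value group coincides with that of `v`. -/
def SharpValuationSpec (K : Type*) [Field K] [Valued K NNReal] (p : ℕ)
    (F : Field (TiltCarrier K p)) : Prop :=
  letI := F
  ∃ w : Valuation (TiltCarrier K p) NNReal,
    (∀ x : TiltCarrier K p, w x = Valued.v (x.val 0)) ∧
    (Set.range fun x : (TiltCarrier K p)ˣ => w (x : TiltCarrier K p)) =
      (Set.range fun x : Kˣ => Valued.v (x : K))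

section Aux
variable {K : Type*} [Field K] [Valued K NNReal]

variable {K : Type*} [Field K] [Valued K NNReal]

lemma aux_nat_le_one (n : ℕ) : Valued.v ((n : K)) ≤ 1 := by
  induction n with
  | zero => simp
  | succ k ih =>
    push_cast
    exact le_trans (Valued.v.map_add _ _) (max_le ih (le_of_eq (map_one _)))

lemma aux_pow_p_sub {p : ℕ} (hp : p.Prime) (u w : K)
    (hw : Valued.v w ≤ 1) {δ : NNReal} (hδ1 : δ ≤ 1)
    (h : Valued.v (u - w) ≤ δ) :
    Valued.v (u ^ p - w ^ p) ≤ max (Valued.v ((p : K)) * δ) (δ ^ p) := by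
  have key := add_pow_prime_eq hp (u - w) w
  rw [sub_add_cancel] at key
  have huw : u ^ p - w ^ p = (u - w) ^ p +
      (p : K) * ∑ k ∈ Finset.Ioo 0 p, (u - w) ^ k * w ^ (p - k) * ((p.choose k / p : ℕ) : K) := by
    have hs : ∑ k ∈ Finset.Ioo 0 p, (u - w) ^ k * w ^ (p - k) * ((p.choose k / p : ℕ) : K) =
        (u - w) * w * ∑ k ∈ Finset.Ioo 0 p, (u - w) ^ (k - 1) * w ^ (p - k - 1) *
          ((p.choose k / p : ℕ) : K) := by
      rw [Finset.mul_sum]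
      refine Finset.sum_congr rfl fun k hk => ?_
      rw [Finset.mem_Ioo] at hk
      obtain ⟨a, rfl⟩ : ∃ a, k = a + 1 := ⟨k - 1, by omega⟩
      obtain ⟨b, hb⟩ : ∃ b, p - (a + 1) = b + 1 := ⟨p - (a + 1) - 1, by omega⟩
      simp only [hb, Nat.add_sub_cancel]
      ring
    rw [key, hs]; ring
  rw [huw]
  refine le_trans (Valued.v.map_add _ _) (max_le ?_ ?_)
  · refine le_max_of_le_right ?_
    rw [map_pow]
    exact pow_le_pow_left' h p
  · refine le_max_of_le_left ?_
    rw [map_mul]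
    refine mul_le_mul_right ?_ _
    refine Valuation.map_sum_le _ fun k hk => ?_
    rw [Finset.mem_Ioo] at hk
    rw [map_mul, map_mul, map_pow, map_pow]
    calc Valued.v (u - w) ^ k * Valued.v w ^ (p - k) * Valued.v (((p.choose k / p : ℕ) : K))
        ≤ δ ^ k * 1 * 1 := by
          gcongr
          · exact pow_le_one' hw _
          · exact aux_nat_le_one _
      _ = δ ^ k := by ring
      _ ≤ δ ^ 1 := pow_le_pow_of_le_one (zero_le) hδ1 hk.1
      _ = δ := pow_one δ

lemma aux_pow_pm_sub {p : ℕ} (hp : p.Prime) (hρ : Valued.v ((p : K)) ≤ 1) (u w : K)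
    (hw : Valued.v w ≤ 1)
    (h : Valued.v (u - w) ≤ Valued.v ((p : K))) (m : ℕ) :
    Valued.v (u ^ p ^ m - w ^ p ^ m) ≤ Valued.v ((p : K)) ^ (m + 1) := by
  induction m with
  | zero => simpa using h
  | succ m ih =>
    have e1 : u ^ p ^ (m + 1) = (u ^ p ^ m) ^ p := by rw [← pow_mul, pow_succ]
    have e2 : w ^ p ^ (m + 1) = (w ^ p ^ m) ^ p := by rw [← pow_mul, pow_succ]
    rw [e1, e2]
    have hwm : Valued.v (w ^ p ^ m) ≤ 1 := by rw [map_pow]; exact pow_le_one' hw _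
    have hδ1 : Valued.v ((p : K)) ^ (m + 1) ≤ 1 := pow_le_one' hρ _
    refine le_trans (aux_pow_p_sub hp _ _ hwm hδ1 ih) (max_le ?_ ?_)
    · exact le_of_eq (pow_succ' _ _).symm
    · calc (Valued.v ((p : K)) ^ (m + 1)) ^ p = Valued.v ((p : K)) ^ ((m + 1) * p) := by
            rw [← pow_mul]
        _ ≤ Valued.v ((p : K)) ^ (m + 1 + 1) := by
            refine pow_le_pow_of_le_one (zero_le) hρ ?_
            have := hp.two_le
            nlinarith

lemma aux_exists_tilt [CompleteSpace K] {p : ℕ} (hp : p.Prime)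
    (hρ1 : Valued.v ((p : K)) < 1)
    (hfrob : ∀ x : (Valued.v.valuationSubring : ValuationSubring K) ⧸
        (Ideal.span {((p : ℕ) : (Valued.v.valuationSubring : ValuationSubring K))}),
      ∃ y, y ^ p = x)
    (a₀ : K) (ha : Valued.v a₀ ≤ 1) (hgt : Valued.v ((p : K)) < Valued.v a₀) :
    ∃ x : TiltCarrier K p, Valued.v (x.val 0) = Valued.v a₀ := by
  classical
  set ρ := Valued.v ((p : K)) with hρdef
  -- approximate p-th roots
  have step : ∀ b : (Valued.v.valuationSubring : ValuationSubring K),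
      ∃ c : (Valued.v.valuationSubring : ValuationSubring K),
      Valued.v ((c : K) ^ p - (b : K)) ≤ ρ := by
    intro b
    obtain ⟨y, hy⟩ := hfrob (Ideal.Quotient.mk _ b)
    obtain ⟨c, rfl⟩ := Ideal.Quotient.mk_surjective y
    rw [← map_pow] at hy
    have hmem : c ^ p - b ∈ Ideal.span
        {((p : ℕ) : (Valued.v.valuationSubring : ValuationSubring K))} :=
      Ideal.Quotient.eq.mp hy
    rw [Ideal.mem_span_singleton] at hmem
    obtain ⟨t, ht⟩ := hmem
    refine ⟨c, ?_⟩
    have hcoe : (c : K) ^ p - (b : K) = (((p : ℕ) : (Valued.v.valuationSubring :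
        ValuationSubring K)) * t : (Valued.v.valuationSubring : ValuationSubring K)) := by
      rw [← ht]; push_cast; ring
    rw [hcoe]
    push_cast
    rw [map_mul]
    calc ρ * Valued.v ((t : K)) ≤ ρ * 1 := mul_le_mul_right t.2 _
      _ = ρ := mul_one ρ
  let g : _ → _ := fun b => Classical.choose (step b)
  have hg : ∀ b, Valued.v ((g b : K) ^ p - (b : K)) ≤ ρ := fun b => Classical.choose_spec (step b)
  let f : ℕ → (Valued.v.valuationSubring : ValuationSubring K) := fun n => g^[n] ⟨a₀, ha⟩
  have hf0 : (f 0 : K) = a₀ := rfl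
  have hfs : ∀ n, f (n + 1) = g (f n) := fun n => Function.iterate_succ_apply' g n _
  have hfb : ∀ n, Valued.v ((f n : K)) ≤ 1 := fun n => (f n).2
  have hstep : ∀ n, Valued.v ((f (n + 1) : K) ^ p - (f n : K)) ≤ ρ := fun n => by
    rw [hfs]; exact hg (f n)
  -- the double sequence
  set B : ℕ → ℕ → K := fun n m => (f (n + m) : K) ^ p ^ m with hBdef
  have hBstep : ∀ n m, Valued.v (B n (m + 1) - B n m) ≤ ρ ^ (m + 1) := by
    intro n m
    have h1 : B n (m + 1) = ((f (n + m + 1) : K) ^ p) ^ p ^ m := by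
      show (f (n + (m + 1)) : K) ^ p ^ (m + 1) = _
      rw [← pow_mul, ← pow_succ']
      rfl
    rw [h1]
    exact aux_pow_pm_sub hp hρ1.le _ _ (hfb _) (hstep (n + m)) m
  have hchain : ∀ n m m', m ≤ m' → Valued.v (B n m' - B n m) ≤ ρ ^ (m + 1) := by
    intro n m m' h
    induction m', h using Nat.le_induction with
    | base => simp
    | succ m' hm ih =>
      have : B n (m' + 1) - B n m = (B n (m' + 1) - B n m') + (B n m' - B n m) := by ring
      rw [this]
      refine le_trans (Valued.v.map_add _ _) (max_le ?_ ih)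
      exact le_trans (hBstep n m') (pow_le_pow_of_le_one (zero_le) hρ1.le (by omega))
  have hcauchy : ∀ n, CauchySeq (B n) := by
    intro n
    rw [(Valued.hasBasis_uniformity K NNReal).cauchySeq_iff]
    rintro γ -
    have htend : Tendsto (fun m : ℕ => ρ ^ (m + 1)) atTop (nhds 0) :=
      (NNReal.tendsto_pow_atTop_nhds_zero_of_lt_one hρ1).comp (tendsto_add_atTop_nat 1)
    have hγpos := (Valued.v.restrict_lt_iff_lt_embedding (x := (0 : K)) (g := (γ : _))).mp
      (by rw [map_zero]; exact Units.zero_lt γ)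
    rw [map_zero] at hγpos
    obtain ⟨N, hN⟩ := (htend.eventually (eventually_lt_nhds hγpos)).exists
    refine ⟨N, fun m hm m' hm' => ?_⟩
    show Valued.v.restrict (B n m' - B n m) < (γ : _)
    rw [Valuation.restrict_lt_iff_lt_embedding]
    rcases le_total m m' with h | h
    · exact lt_of_le_of_lt ((hchain n m m' h).trans
        (pow_le_pow_of_le_one (zero_le) hρ1.le (by omega))) hN
    · rw [Valued.v.map_sub_swap]
      exact lt_of_le_of_lt ((hchain n m' m h).trans
        (pow_le_pow_of_le_one (zero_le) hρ1.le (by omega))) hN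
  have hlim : ∀ n, ∃ l, Tendsto (B n) atTop (nhds l) :=
    fun n => cauchySeq_tendsto_of_complete (hcauchy n)
  choose L hL using hlim
  have hcompat : ∀ n, L (n + 1) ^ p = L n := by
    intro n
    have t1 : Tendsto (fun m => B (n + 1) m ^ p) atTop (nhds (L (n + 1) ^ p)) :=
      (hL (n + 1)).pow p
    have t2 : ∀ m, B (n + 1) m ^ p = B n (m + 1) := by
      intro m
      show ((f (n + 1 + m) : K) ^ p ^ m) ^ p = (f (n + (m + 1)) : K) ^ p ^ (m + 1)
      have hidx : n + 1 + m = n + (m + 1) := by omega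
      rw [← pow_mul, ← pow_succ, hidx]
    simp only [t2] at t1
    have t3 : Tendsto (fun m => B n (m + 1)) atTop (nhds (L n)) :=
      (hL n).comp (tendsto_add_atTop_nat 1)
    exact tendsto_nhds_unique t1 t3
  refine ⟨⟨fun n => L n, hcompat⟩, ?_⟩
  show Valued.v (L 0) = Valued.v a₀
  have hB00 : B 0 0 = a₀ := by
    show (f 0 : K) ^ p ^ 0 = a₀
    simp [hf0]
  have hball : ∀ m, Valued.v (B 0 m - a₀) ≤ ρ := by
    intro m
    have h := hchain 0 0 m (Nat.zero_le m)
    rw [hB00, pow_one] at h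
    exact h
  have ha0 : Valued.v a₀ ≠ 0 := fun h => by
    rw [h] at hgt; exact absurd hgt (by simp)
  have hnear : ∀ᶠ m in atTop, Valued.v (B 0 m - L 0) < Valued.v a₀ := by
    refine (hL 0).eventually (?_ : ∀ᶠ y in nhds (L 0), Valued.v (y - L 0) < Valued.v a₀)
    exact Valued.mem_nhds.mpr ⟨Units.mk0 (Valued.v.restrict a₀) (by simpa using ha0),
      fun y hy => (Valuation.restrict_lt_iff _).mp hy⟩
  obtain ⟨m, hm⟩ := hnear.exists
  have hlt : Valued.v (L 0 - a₀) < Valued.v a₀ := by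
    have hsplit : L 0 - a₀ = (L 0 - B 0 m) + (B 0 m - a₀) := by ring
    rw [hsplit]
    refine lt_of_le_of_lt (Valued.v.map_add _ _) (max_lt ?_ ?_)
    · rw [Valued.v.map_sub_swap]; exact hm
    · exact lt_of_le_of_lt (hball m) hgt
  have hrw : L 0 = (L 0 - a₀) + a₀ := by ring
  rw [hrw, Valuation.map_add_eq_of_lt_right]
  exact hlt

end Aux


lemma aux_window (ρ e γ : NNReal) (h1 : ρ < e) (h2 : e < 1) (hγ : γ ≠ 0) :
    ∃ k l : ℕ, ρ < γ * e ^ l / e ^ k ∧ γ * e ^ l / e ^ k ≤ 1 := by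
  classical
  have he0 : 0 < e := lt_of_le_of_lt (zero_le : 0 ≤ ρ) h1
  have hpow : Tendsto (fun n : ℕ => e ^ n) atTop (nhds 0) :=
    NNReal.tendsto_pow_atTop_nhds_zero_of_lt_one h2
  rcases le_or_gt γ 1 with hγ1 | hγ1
  · -- choose minimal k with ρ < γ / e ^ k
    have hex : ∃ k : ℕ, ρ < γ / e ^ k := by
      rcases eq_or_lt_of_le (zero_le : 0 ≤ ρ) with hρ0 | hρ0
      · exact ⟨0, by simpa [← hρ0] using pos_iff_ne_zero.mpr hγ⟩
      · have hc : (0 : NNReal) < γ / ρ := div_pos (pos_iff_ne_zero.mpr hγ) hρ0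
        obtain ⟨k, hk⟩ := (hpow.eventually (eventually_lt_nhds hc)).exists
        refine ⟨k, ?_⟩
        rw [lt_div_iff₀ (pow_pos he0 _)]
        rw [lt_div_iff₀ hρ0] at hk
        rw [mul_comm]
        exact hk
    obtain ⟨k, hk, hkmin⟩ : ∃ k : ℕ, (ρ < γ / e ^ k) ∧ ∀ j, j < k → ¬(ρ < γ / e ^ j) :=
      ⟨Nat.find hex, Nat.find_spec hex, fun j hj => Nat.find_min hex hj⟩
    refine ⟨k, 0, by simpa using hk, ?_⟩
    simp only [pow_zero, mul_one]
    rcases k with _ | j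
    · simpa using hγ1
    · have hj : ¬ ρ < γ / e ^ j := hkmin j (by omega)
      push_neg at hj
      have hdd : γ / e ^ (j + 1) = (γ / e ^ j) / e := by rw [div_div, ← pow_succ]
      rw [hdd]
      have : (γ / e ^ j) / e ≤ ρ / e := by gcongr
      refine le_of_lt (lt_of_le_of_lt this ?_)
      rw [div_lt_one he0]; exact h1
  · -- γ > 1 : choose minimal l with γ * e ^ l ≤ 1
    have hex : ∃ l : ℕ, γ * e ^ l ≤ 1 := by
      have hc : (0 : NNReal) < 1 / γ := by positivity
      obtain ⟨l, hl⟩ := (hpow.eventually (eventually_lt_nhds hc)).exists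
      refine ⟨l, ?_⟩
      rw [lt_div_iff₀ (pos_iff_ne_zero.mpr hγ)] at hl
      calc γ * e ^ l = e ^ l * γ := mul_comm _ _
        _ ≤ 1 := hl.le
    obtain ⟨l, hl, hlmin⟩ : ∃ l : ℕ, (γ * e ^ l ≤ 1) ∧ ∀ j, j < l → ¬(γ * e ^ j ≤ 1) :=
      ⟨Nat.find hex, Nat.find_spec hex, fun j hj => Nat.find_min hex hj⟩
    refine ⟨0, l, ?_, by simpa using hl⟩
    simp only [pow_zero, div_one]
    rcases l with _ | j
    · simp only [pow_zero, mul_one]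
      exact absurd hl (by simpa using hγ1.not_ge)
    · have hj : ¬ γ * e ^ j ≤ 1 := hlmin j (by omega)
      push_neg at hj
      calc ρ < e := h1
        _ = 1 * e := (one_mul e).symm
        _ ≤ γ * e ^ j * e := mul_le_mul_left hj.le e
        _ = γ * e ^ (j + 1) := by rw [mul_assoc, ← pow_succ]

/-- Let `K` be a perfectoid field of residue characteristic `p`, with tilt `K^♭` and sharp
map `♯ : K^♭ → K`, `(x_n) ↦ x_0`. Then `v^♭(x) := v(x^♯)` defines a valuation on `K^♭`,
and the value group of `v^♭` equals the value group of `v`. -/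
theorem sharp_gives_valuation_on_tilt
    (p : ℕ) (hp : p.Prime) (K : Type*) [Field K] [Valued K NNReal] [CompleteSpace K]
    (hdense : Dense (Set.range fun x : Kˣ => Valued.v (x : K)))
    (hchar : CharP (IsLocalRing.ResidueField (Valued.v.valuationSubring : ValuationSubring K)) p)
    (hfrob : ∀ x : (Valued.v.valuationSubring : ValuationSubring K) ⧸
        (Ideal.span {((p : ℕ) : (Valued.v.valuationSubring : ValuationSubring K))}),
      ∃ y, y ^ p = x)
    (F : Field (TiltCarrier K p)) (hF : TiltFieldSpec K p F) :
    SharpValuationSpec K p F := by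
  classical
  obtain ⟨hmul, hadd, hcharF, hfrobF⟩ := hF
  letI := F
  -- basic coordinate facts
  have hcoordk : ∀ (x : TiltCarrier K p) (n m : ℕ), (x.val (n + m)) ^ p ^ m = x.val n := by
    intro x n m
    induction m with
    | zero => simp
    | succ m ih =>
      calc x.val (n + (m + 1)) ^ p ^ (m + 1)
          = (x.val (n + m + 1) ^ p) ^ p ^ m := by rw [← pow_mul, ← pow_succ']; rfl
        _ = x.val (n + m) ^ p ^ m := by rw [x.2 (n + m)]
        _ = x.val n := ih
  have hext0 : ∀ x : TiltCarrier K p, x.val 0 = 0 → ∀ n, x.val n = 0 := by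
    intro x h0 n
    have := hcoordk x 0 n
    rw [Nat.zero_add, h0] at this
    exact pow_eq_zero_iff (pow_ne_zero n hp.ne_zero) |>.mp this
  have hvalmul : ∀ x y : TiltCarrier K p, (x * y).val 0 = x.val 0 * y.val 0 :=
    fun x y => congrFun (hmul x y) 0
  -- the zeroth coordinate of 1 is 1
  have hone0 : (1 : TiltCarrier K p).val 0 = 1 := by
    have h10 : (1 : TiltCarrier K p).val 0 ≠ 0 := by
      intro h0
      have hz : ∀ x : TiltCarrier K p, x.val 0 = 0 := by
        intro x
        have := hvalmul x 1
        rw [mul_one, h0, mul_zero] at this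
        exact this
      have : (1 : TiltCarrier K p) = 0 := by
        apply Subtype.ext
        funext n
        rw [hext0 1 (hz 1) n, hext0 0 (hz 0) n]
      exact one_ne_zero this
    have hid := hvalmul 1 1
    rw [mul_one] at hid
    have : (1 : TiltCarrier K p).val 0 * 1 = (1 : TiltCarrier K p).val 0 *
        (1 : TiltCarrier K p).val 0 := by rw [mul_one, ← hid]
    exact (mul_left_cancel₀ h10 this).symm
  -- `v p < 1`
  have hρ1 : Valued.v ((p : K)) < 1 := by
    haveI := hchar
    have h5 : Valued.v ((p : K)) ≤ 1 := aux_nat_le_one p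
    rcases lt_or_eq_of_le h5 with h | h
    · exact h
    · exfalso
      have hpne : (p : K) ≠ 0 := by
        intro h0
        rw [h0, map_zero] at h
        exact zero_ne_one h
      have h1 : ((p : ℕ) : IsLocalRing.ResidueField
          (Valued.v.valuationSubring : ValuationSubring K)) = 0 := by
        haveI := hchar
        exact (CharP.cast_eq_zero_iff _ p p).mpr dvd_rfl
      have h2 : IsLocalRing.residue (Valued.v.valuationSubring : ValuationSubring K)
          ((p : ℕ) : (Valued.v.valuationSubring : ValuationSubring K)) = 0 := by
        rw [map_natCast]; exact h1
      have h3 : ((p : ℕ) : (Valued.v.valuationSubring : ValuationSubring K)) ∈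
          IsLocalRing.maximalIdeal _ := (IsLocalRing.residue_eq_zero_iff _).mp h2
      have hinv : Valued.v ((p : K)⁻¹) ≤ 1 := by
        rw [map_inv₀, h, inv_one]
      have hunit : IsUnit ((p : ℕ) : (Valued.v.valuationSubring : ValuationSubring K)) := by
        refine IsUnit.of_mul_eq_one ⟨(p : K)⁻¹, hinv⟩ ?_
        apply Subtype.ext
        push_cast
        exact mul_inv_cancel₀ hpne
      exact IsLocalRing.notMem_maximalIdeal.mpr hunit h3
  -- a unit with value strictly between `v p` and `1`
  obtain ⟨γ0, hγ0mem, hγ0⟩ := hdense.exists_mem_open isOpen_Ioo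
    (Set.nonempty_Ioo.mpr hρ1)
  obtain ⟨e, he⟩ := hγ0mem
  have hee : Valued.v (e : K) ∈ Set.Ioo (Valued.v ((p : K))) 1 := by
    simpa only [← he] using hγ0
  obtain ⟨he1, he2⟩ := hee
  -- a tilt element with value `v e`
  obtain ⟨xe, hxe⟩ := aux_exists_tilt hp hρ1 hfrob (e : K) he2.le he1
  -- the zeroth coordinate of 0 is 0
  have h00 : (0 : TiltCarrier K p).val 0 = 0 := by
    by_contra h0
    have hz := hvalmul xe 0
    rw [mul_zero] at hz
    have : xe.val 0 * (0 : TiltCarrier K p).val 0 = 1 * (0 : TiltCarrier K p).val 0 := by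
      rw [one_mul, ← hz]
    have hx1 : xe.val 0 = 1 := mul_right_cancel₀ h0 this
    rw [hx1, map_one] at hxe
    exact absurd hxe.symm (ne_of_lt he2)
    -- ultrametric inequality for the zeroth coordinate
  have hadd0 : ∀ x y : TiltCarrier K p,
      Valued.v ((x + y).val 0) ≤ max (Valued.v (x.val 0)) (Valued.v (y.val 0)) := by
    intro x y
    by_cases hs : Valued.v ((x + y).val 0) = 0
    · rw [hs]; exact zero_le
    · have ht := hadd x y 0
      have hnear : ∀ᶠ m in atTop,
          Valued.v ((x.val (0 + m) + y.val (0 + m)) ^ p ^ m - (x + y).val 0)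
            < Valued.v ((x + y).val 0) := by
        refine ht.eventually (?_ : ∀ᶠ z in nhds ((x + y).val 0),
          Valued.v (z - (x + y).val 0) < Valued.v ((x + y).val 0))
        exact Valued.mem_nhds.mpr ⟨Units.mk0 (Valued.v.restrict ((x + y).val 0)) (by simpa using hs),
          fun z hz => (Valuation.restrict_lt_iff _).mp hz⟩
      obtain ⟨m, hm⟩ := hnear.exists
      have hsplit : (x.val (0 + m) + y.val (0 + m)) ^ p ^ m
          = ((x.val (0 + m) + y.val (0 + m)) ^ p ^ m - (x + y).val 0) + (x + y).val 0 := by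
        ring
      have heq : Valued.v ((x.val (0 + m) + y.val (0 + m)) ^ p ^ m)
          = Valued.v ((x + y).val 0) := by
        conv_lhs => rw [hsplit]
        exact Valuation.map_add_eq_of_lt_right _ hm
      rw [← heq, map_pow]
      have hmono : Monotone (fun c : NNReal => c ^ p ^ m) :=
        fun u v h => pow_le_pow_left' h _
      calc (Valued.v (x.val (0 + m) + y.val (0 + m))) ^ p ^ m
          ≤ (max (Valued.v (x.val (0 + m))) (Valued.v (y.val (0 + m)))) ^ p ^ m :=
            pow_le_pow_left' (Valued.v.map_add _ _) _
        _ = max ((Valued.v (x.val (0 + m))) ^ p ^ m) ((Valued.v (y.val (0 + m))) ^ p ^ m) :=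
            hmono.map_max
        _ = max (Valued.v (x.val 0)) (Valued.v (y.val 0)) := by
            rw [← map_pow, ← map_pow, hcoordk x 0 m, hcoordk y 0 m]
  -- the valuation on the tilt
  let w : Valuation (TiltCarrier K p) NNReal :=
  { toFun := fun x => Valued.v (x.val 0)
    map_zero' := by
      show Valued.v ((0 : TiltCarrier K p).val 0) = 0
      rw [h00, map_zero]
    map_one' := by
      show Valued.v ((1 : TiltCarrier K p).val 0) = 1
      rw [hone0, map_one]
    map_mul' := fun x y => by
      show Valued.v ((x * y).val 0) = Valued.v (x.val 0) * Valued.v (y.val 0)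
      rw [hvalmul]
      exact map_mul _ _ _
    map_add_le_max' := hadd0 }
  have hwinv : ∀ u : (TiltCarrier K p)ˣ, w ↑u⁻¹ = (w ↑u)⁻¹ := by
    intro u
    have h1 : w ↑u * w ↑u⁻¹ = 1 := by rw [← map_mul, Units.mul_inv, map_one]
    exact (inv_eq_of_mul_eq_one_right h1).symm
  refine ⟨w, fun x => rfl, ?_⟩
  ext γ
  simp only [Set.mem_range]
  constructor
  · rintro ⟨u, rfl⟩
    have hu1 : (u : TiltCarrier K p) * ((u⁻¹ : (TiltCarrier K p)ˣ) : TiltCarrier K p) = 1 :=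
      u.mul_inv
    have hmm := hvalmul ↑u ↑u⁻¹
    rw [hu1, hone0] at hmm
    have hUnit : IsUnit ((u : TiltCarrier K p).val 0) := IsUnit.of_mul_eq_one _ hmm.symm
    exact ⟨hUnit.unit, by rw [IsUnit.unit_spec]; rfl⟩
  · rintro ⟨c, rfl⟩
    have hvc : Valued.v (c : K) ≠ 0 := (Valuation.ne_zero_iff _).mpr (Units.ne_zero c)
    have hve : Valued.v (e : K) ≠ 0 := (Valuation.ne_zero_iff _).mpr (Units.ne_zero e)
    obtain ⟨k, l, hw1, hw2⟩ :=
      aux_window (Valued.v ((p : K))) (Valued.v (e : K)) (Valued.v (c : K)) he1 he2 hvc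
    set c' : Kˣ := c * e ^ l * (e⁻¹) ^ k with hc'def
    have hvinv : Valued.v ((e⁻¹ : Kˣ) : K) = (Valued.v (e : K))⁻¹ := by
      rw [Units.val_inv_eq_inv_val]
      exact map_inv₀ _ _
    have hvc' : Valued.v (c' : K)
        = Valued.v (c : K) * Valued.v (e : K) ^ l / Valued.v (e : K) ^ k := by
      rw [hc'def]
      rw [Units.val_mul, Units.val_mul, Units.val_pow_eq_pow_val, Units.val_pow_eq_pow_val]
      rw [map_mul, map_mul, map_pow, map_pow, hvinv, div_eq_mul_inv, inv_pow]
    obtain ⟨x', hx'⟩ := aux_exists_tilt hp hρ1 hfrob (c' : K)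
      (by rw [hvc']; exact hw2) (by rw [hvc']; exact hw1)
    have hvc'0 : Valued.v (c' : K) ≠ 0 := (Valuation.ne_zero_iff _).mpr (Units.ne_zero c')
    have hx'ne : x' ≠ 0 := by
      intro h0
      rw [h0, h00] at hx'
      rw [map_zero] at hx'
      exact hvc'0 hx'.symm
    have hxene : xe ≠ 0 := by
      intro h0
      rw [h0, h00] at hxe
      rw [map_zero] at hxe
      exact hve hxe.symm
    let ux' : (TiltCarrier K p)ˣ := (isUnit_iff_ne_zero.mpr hx'ne).unit
    let uxe : (TiltCarrier K p)ˣ := (isUnit_iff_ne_zero.mpr hxene).unit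
    have hux' : w ↑ux' = Valued.v (c' : K) := by
      show w ↑(isUnit_iff_ne_zero.mpr hx'ne).unit = _
      rw [IsUnit.unit_spec]
      exact hx'
    have huxe : w ↑uxe = Valued.v (e : K) := by
      show w ↑(isUnit_iff_ne_zero.mpr hxene).unit = _
      rw [IsUnit.unit_spec]
      exact hxe
    refine ⟨ux' * uxe ^ k * uxe⁻¹ ^ l, ?_⟩
    show w ↑(ux' * uxe ^ k * uxe⁻¹ ^ l) = Valued.v (c : K)
    rw [Units.val_mul, Units.val_mul, map_mul, map_mul,
      Units.val_pow_eq_pow_val, Units.val_pow_eq_pow_val, map_pow, map_pow, hwinv,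
      hux', huxe, hvc']
    field_simp
    rw [one_div, inv_pow, mul_inv_cancel₀ (pow_ne_zero _ hve)]
end
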